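/- arXiv:0810.2856 — 6 statements merged into one kernel-verified Lean document; each statement's English description precedes it below -/
import Mathlib

section
/- Let d = 2 and let 𝒜 be a nonempty bounded set of complex 2×2 matrices with 𝒜^2 ≠ {0}. Then for every n ≥ 1: C_2^{-σ_2(n)/n} · (‖𝒜‖^2 / ‖𝒜^2‖)^{-ν_2(n)/n} · ‖𝒜^n‖^{1/n} ≤ ρ(𝒜) ≤ ‖𝒜^n‖^{1/n}, where C_2 = 2^{3} = 8 (i.e. d^{3d/2} with d = 2), σ_2(n) = (1/2)(ln n/ln 2 + 1)(ln n/ln 2 + 2), and ν_2(n) = ln n/ln 2 + 1. -/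
open scoped Pointwise

/-- `ν` is a norm on `ℂ^d`. -/
structure IsNorm (d : ℕ) (ν : (Fin d → ℂ) → ℝ) : Prop where
  nonneg : ∀ v, 0 ≤ ν v
  eq_zero_iff : ∀ v, ν v = 0 ↔ v = 0
  homog : ∀ (c : ℂ) (v), ν (c • v) = ‖c‖ * ν v
  triangle : ∀ v w, ν (v + w) ≤ ν v + ν w

/-- Operator norm on `d × d` complex matrices induced by the norm `ν` on `ℂ^d`. -/
noncomputable def opNorm {d : ℕ} (ν : (Fin d → ℂ) → ℝ)
    (A : Matrix (Fin d) (Fin d) ℂ) : ℝ :=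
  sInf {c : ℝ | 0 ≤ c ∧ ∀ v, ν (A.mulVec v) ≤ c * ν v}

/-- Norm of a set of matrices: the supremum of the norms of its elements. -/
noncomputable def setNorm {d : ℕ} (ν : (Fin d → ℂ) → ℝ)
    (𝒜 : Set (Matrix (Fin d) (Fin d) ℂ)) : ℝ :=
  sSup (opNorm ν '' 𝒜)

/-- Joint spectral radius of a set of matrices: `ρ(𝒜) = inf_{n ≥ 1} ‖𝒜^n‖^{1/n}`. -/
noncomputable def jsr {d : ℕ} (ν : (Fin d → ℂ) → ℝ)
    (𝒜 : Set (Matrix (Fin d) (Fin d) ℂ)) : ℝ :=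
  ⨅ n : {n : ℕ // 1 ≤ n}, setNorm ν (𝒜 ^ (n : ℕ)) ^ (((n : ℕ) : ℝ)⁻¹)
/-- `σ_2(n) = (1/2)(ln n/ln 2 + 1)(ln n/ln 2 + 2)` -/
noncomputable def sigmaBound2 (n : ℕ) : ℝ :=
  (1 / 2) * (Real.log n / Real.log 2 + 1) * (Real.log n / Real.log 2 + 2)

/-- `ν_2(n) = ln n/ln 2 + 1` -/
noncomputable def nuBound2 (n : ℕ) : ℝ :=
  Real.log n / Real.log 2 + 1

namespace JSRAux

variable {ν : (Fin 2 → ℂ) → ℝ}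

abbrev V := Fin 2 → ℂ
abbrev M2 := Matrix (Fin 2) (Fin 2) ℂ

lemma nu_zero (hν : IsNorm 2 ν) : ν 0 = 0 := (hν.eq_zero_iff 0).mpr rfl

lemma nu_pos (hν : IsNorm 2 ν) {v : V} (hv : v ≠ 0) : 0 < ν v :=
  lt_of_le_of_ne (hν.nonneg v) (fun h => hv ((hν.eq_zero_iff v).mp h.symm))

lemma nu_sub_le (hν : IsNorm 2 ν) (v w : V) : ν v - ν w ≤ ν (v - w) := by
  have := hν.triangle (v - w) w
  simp at this
  linarith

lemma vec_decomp (v : V) : v = v 0 • (fun i => if i = 0 then (1:ℂ) else 0) +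
    v 1 • (fun i => if i = 1 then (1:ℂ) else 0) := by
  funext i
  fin_cases i <;> simp

/-- ν is controlled by the sup norm. -/
lemma nu_le_pinorm (hν : IsNorm 2 ν) (v : V) :
    ν v ≤ (ν (fun i => if i = 0 then (1:ℂ) else 0) + ν (fun i => if i = 1 then (1:ℂ) else 0)) * ‖v‖ := by
  set e0 : V := fun i => if i = 0 then (1:ℂ) else 0
  set e1 : V := fun i => if i = 1 then (1:ℂ) else 0
  have h := hν.triangle (v 0 • e0) (v 1 • e1)
  rw [← vec_decomp v] at h
  have h0 : ν (v 0 • e0) = ‖v 0‖ * ν e0 := hν.homog _ _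
  have h1 : ν (v 1 • e1) = ‖v 1‖ * ν e1 := hν.homog _ _
  have hb0 : ‖v 0‖ ≤ ‖v‖ := by
    simpa using norm_le_pi_norm v 0
  have hb1 : ‖v 1‖ ≤ ‖v‖ := by
    simpa using norm_le_pi_norm v 1
  have he0 : 0 ≤ ν e0 := hν.nonneg _
  have he1 : 0 ≤ ν e1 := hν.nonneg _
  nlinarith [hν.nonneg v]

/-- Lower bound: there is m > 0 with m * ‖v‖ ≤ ν v. -/
lemma exists_lower (hν : IsNorm 2 ν) : ∃ m : ℝ, 0 < m ∧ ∀ v : V, m * ‖v‖ ≤ ν v := by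
  set L : ℝ := (ν (fun i => if i = 0 then (1:ℂ) else 0) + ν (fun i => if i = 1 then (1:ℂ) else 0))
  have hcont : Continuous ν := by
    rw [Metric.continuous_iff]
    intro v ε hε
    by_cases hL : L = 0
    · refine ⟨1, one_pos, fun w _ => ?_⟩
      have h1 : ν w ≤ L * ‖w‖ := nu_le_pinorm hν w
      have h2 : ν v ≤ L * ‖v‖ := nu_le_pinorm hν v
      rw [hL] at h1 h2
      simp at h1 h2
      have := hν.nonneg w; have := hν.nonneg v
      have : ν w = 0 := le_antisymm h1 ‹0 ≤ ν w›
      have : ν v = 0 := le_antisymm h2 ‹0 ≤ ν v›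
      rw [Real.dist_eq]
      have : ν w - ν v = 0 := by linarith
      rw [show ν w - ν v = 0 from this, abs_zero]
      exact hε
    · have hLpos : 0 < L := by
        rcases lt_or_eq_of_le (by unfold L; have := hν.nonneg (fun i => if i = 0 then (1:ℂ) else 0); have := hν.nonneg (fun i => if i = 1 then (1:ℂ) else 0); linarith : (0:ℝ) ≤ L) with h | h
        · exact h
        · exact absurd h.symm hL
      refine ⟨ε / L, by positivity, fun w hw => ?_⟩
      have k1 : ν w - ν v ≤ ν (w - v) := nu_sub_le hν w v
      have k2 : ν v - ν w ≤ ν (v - w) := nu_sub_le hν v w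
      have k3 : ν (w - v) ≤ L * ‖w - v‖ := nu_le_pinorm hν _
      have k4 : ν (v - w) ≤ L * ‖v - w‖ := nu_le_pinorm hν _
      have hd : ‖w - v‖ < ε / L := by rwa [dist_eq_norm] at hw
      have hd' : ‖v - w‖ < ε / L := by rwa [norm_sub_rev]
      rw [Real.dist_eq, abs_lt]
      constructor
      · have := mul_lt_mul_of_pos_left hd' hLpos
        rw [mul_div_cancel₀ _ hL] at this
        nlinarith
      · have := mul_lt_mul_of_pos_left hd hLpos
        rw [mul_div_cancel₀ _ hL] at this
        nlinarith
  have hsph : IsCompact (Metric.sphere (0:V) 1) := isCompact_sphere 0 1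
  have hnsp : (Metric.sphere (0:V) 1).Nonempty := by
    refine ⟨((fun i => if i = 0 then (1:ℂ) else 0) : V), ?_⟩
    simp [Metric.mem_sphere, dist_eq_norm]
    apply le_antisymm
    · apply pi_norm_le_iff_of_nonneg (by norm_num) |>.mpr
      intro i; fin_cases i <;> simp
    · have := norm_le_pi_norm ((fun i => if i = 0 then (1:ℂ) else 0) : V) 0
      simpa using this
  obtain ⟨v₀, hv₀s, hmin'⟩ := hsph.exists_isMinOn hnsp hcont.continuousOn
  have hmin : ∀ w ∈ Metric.sphere (0:V) 1, ν v₀ ≤ ν w := fun w hw => hmin' hw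
  have hv₀ : v₀ ≠ 0 := by
    intro h
    rw [Metric.mem_sphere, dist_eq_norm, h] at hv₀s
    simp at hv₀s
  refine ⟨ν v₀, nu_pos hν hv₀, fun v => ?_⟩
  by_cases hv : v = 0
  · simp [hv, nu_zero hν]
  · have hnv : ‖v‖ ≠ 0 := norm_ne_zero_iff.mpr hv
    have hnvpos : (0:ℝ) < ‖v‖ := norm_pos_iff.mpr hv
    set w : V := (‖v‖⁻¹ : ℝ) • v
    have hws : w ∈ Metric.sphere (0:V) 1 := by
      simp [w, Metric.mem_sphere, dist_eq_norm, norm_smul, abs_of_pos, inv_mul_cancel₀ hnv,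
        abs_of_nonneg (le_of_lt (inv_pos.mpr hnvpos))]
    have := hmin w hws
    have hw : ν w = ‖v‖⁻¹ * ν v := by
      have : w = ((‖v‖⁻¹ : ℝ) : ℂ) • v := by
        funext i; simp [w, Complex.real_smul]
      rw [this, hν.homog]
      simp [abs_of_nonneg (le_of_lt (inv_pos.mpr hnvpos))]
    rw [hw] at this
    calc ν v₀ * ‖v‖ ≤ (‖v‖⁻¹ * ν v) * ‖v‖ := by nlinarith
    _ = ν v := by field_simp


/-! ### opNorm basics -/

lemma pinorm_le_nu (hν : IsNorm 2 ν) : ∃ m : ℝ, 0 < m ∧ ∀ v : V, ‖v‖ ≤ m * ν v := by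
  obtain ⟨m, hm, h⟩ := exists_lower hν
  refine ⟨m⁻¹, by positivity, fun v => ?_⟩
  have h2 : ‖v‖ = m⁻¹ * (m * ‖v‖) := by
    rw [← mul_assoc, inv_mul_cancel₀ (ne_of_gt hm), one_mul]
  rw [h2]
  exact mul_le_mul_of_nonneg_left (h v) (by positivity)

lemma opSet_nonempty (hν : IsNorm 2 ν) (A : M2) :
    ∃ c : ℝ, 0 ≤ c ∧ ∀ v, ν (A.mulVec v) ≤ c * ν v := by
  obtain ⟨m, hm, hlow⟩ := pinorm_le_nu hν
  set L : ℝ := (ν (fun i => if i = 0 then (1:ℂ) else 0) + ν (fun i => if i = 1 then (1:ℂ) else 0)) with hLdef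
  have hL : 0 ≤ L := by
    have h0 := hν.nonneg ((fun i => if i = 0 then (1:ℂ) else 0) : V)
    have h1 := hν.nonneg ((fun i => if i = 1 then (1:ℂ) else 0) : V)
    rw [hLdef]; linarith
  set CA : ℝ := ‖A 0 0‖ + ‖A 0 1‖ + ‖A 1 0‖ + ‖A 1 1‖ with hCAdef
  have hCA : 0 ≤ CA := by rw [hCAdef]; positivity
  have hmv : ∀ v : V, ‖A.mulVec v‖ ≤ CA * ‖v‖ := by
    intro v
    apply pi_norm_le_iff_of_nonneg (by positivity) |>.mpr
    intro i
    have hv : A.mulVec v i = A i 0 * v 0 + A i 1 * v 1 := by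
      simp [Matrix.mulVec, dotProduct, Fin.sum_univ_two]
    have b0 : ‖v 0‖ ≤ ‖v‖ := by simpa using norm_le_pi_norm v 0
    have b1 : ‖v 1‖ ≤ ‖v‖ := by simpa using norm_le_pi_norm v 1
    have htri : ‖A i 0 * v 0 + A i 1 * v 1‖ ≤
        ‖A i 0‖ * ‖v 0‖ + ‖A i 1‖ * ‖v 1‖ := by
      calc _ ≤ ‖A i 0 * v 0‖ + ‖A i 1 * v 1‖ := norm_add_le _ _
      _ = _ := by simp [norm_mul]
    have hsum : ‖A i 0‖ + ‖A i 1‖ ≤ CA := by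
      have n00 : 0 ≤ ‖A 0 0‖ := norm_nonneg _
      have n01 : 0 ≤ ‖A 0 1‖ := norm_nonneg _
      have n10 : 0 ≤ ‖A 1 0‖ := norm_nonneg _
      have n11 : 0 ≤ ‖A 1 1‖ := norm_nonneg _
      fin_cases i <;> (rw [hCAdef]) <;> simp <;> linarith
    have habs0 : 0 ≤ ‖A i 0‖ := norm_nonneg _
    have habs1 : 0 ≤ ‖A i 1‖ := norm_nonneg _
    calc ‖A.mulVec v i‖ = ‖A i 0 * v 0 + A i 1 * v 1‖ := by rw [hv]
    _ ≤ ‖A i 0‖ * ‖v 0‖ + ‖A i 1‖ * ‖v 1‖ := htri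
    _ ≤ ‖A i 0‖ * ‖v‖ + ‖A i 1‖ * ‖v‖ := by
        have := norm_nonneg v
        nlinarith
    _ ≤ CA * ‖v‖ := by
        have := norm_nonneg v
        nlinarith
  refine ⟨L * CA * m, by positivity, fun v => ?_⟩
  calc ν (A.mulVec v) ≤ L * ‖A.mulVec v‖ := by
        have := nu_le_pinorm hν (A.mulVec v)
        rw [hLdef]; linarith [this]
  _ ≤ L * (CA * ‖v‖) := by
      apply mul_le_mul_of_nonneg_left (hmv v) hL
  _ ≤ L * (CA * (m * ν v)) := by
      apply mul_le_mul_of_nonneg_left _ hL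
      apply mul_le_mul_of_nonneg_left (hlow v) hCA
  _ = L * CA * m * ν v := by ring

lemma opNorm_nonneg (A : M2) : 0 ≤ opNorm ν A :=
  Real.sInf_nonneg (fun _ h => h.1)

lemma opNorm_le (hν : IsNorm 2 ν) {A : M2} {c : ℝ} (hc : 0 ≤ c)
    (h : ∀ v, ν (A.mulVec v) ≤ c * ν v) : opNorm ν A ≤ c :=
  csInf_le ⟨0, fun _ hy => hy.1⟩ ⟨hc, h⟩

lemma le_opNorm (hν : IsNorm 2 ν) (A : M2) (v : V) :
    ν (A.mulVec v) ≤ opNorm ν A * ν v := by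
  by_cases hv : v = 0
  · simp [hv, Matrix.mulVec_zero, nu_zero hν, opNorm_nonneg]
  · by_contra hcon
    push_neg at hcon
    have hνv : 0 < ν v := nu_pos hν hv
    have hlt : opNorm ν A < ν (A.mulVec v) / ν v := by
      rw [lt_div_iff₀ hνv]; linarith
    obtain ⟨S1, hS1⟩ := opSet_nonempty hν A
    have hne : {c : ℝ | 0 ≤ c ∧ ∀ w, ν (A.mulVec w) ≤ c * ν w}.Nonempty := ⟨S1, hS1⟩
    obtain ⟨c, hcmem, hclt⟩ := (csInf_lt_iff ⟨0, fun _ hy => hy.1⟩ hne).mp hlt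
    have := hcmem.2 v
    rw [← lt_div_iff₀ hνv] at hcon
    have : ν (A.mulVec v) ≤ c * ν v := hcmem.2 v
    rw [lt_div_iff₀ hνv] at hclt
    linarith

lemma opNorm_mul_le (hν : IsNorm 2 ν) (A B : M2) :
    opNorm ν (A * B) ≤ opNorm ν A * opNorm ν B := by
  apply opNorm_le hν (mul_nonneg (opNorm_nonneg A) (opNorm_nonneg B))
  intro v
  rw [← Matrix.mulVec_mulVec]
  calc ν (A.mulVec (B.mulVec v)) ≤ opNorm ν A * ν (B.mulVec v) := le_opNorm hν A _
  _ ≤ opNorm ν A * (opNorm ν B * ν v) :=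
      mul_le_mul_of_nonneg_left (le_opNorm hν B v) (opNorm_nonneg A)
  _ = opNorm ν A * opNorm ν B * ν v := by ring

lemma opNorm_one_le (hν : IsNorm 2 ν) : opNorm ν (1 : M2) ≤ 1 := by
  apply opNorm_le hν zero_le_one
  intro v
  rw [Matrix.one_mulVec, one_mul]

lemma opNorm_add_le (hν : IsNorm 2 ν) (A B : M2) :
    opNorm ν (A + B) ≤ opNorm ν A + opNorm ν B := by
  apply opNorm_le hν (add_nonneg (opNorm_nonneg A) (opNorm_nonneg B))
  intro v
  rw [Matrix.add_mulVec]
  calc ν (A.mulVec v + B.mulVec v) ≤ ν (A.mulVec v) + ν (B.mulVec v) := hν.triangle _ _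
  _ ≤ opNorm ν A * ν v + opNorm ν B * ν v := add_le_add (le_opNorm hν A v) (le_opNorm hν B v)
  _ = (opNorm ν A + opNorm ν B) * ν v := by ring

lemma opNorm_smul (hν : IsNorm 2 ν) (c : ℂ) (A : M2) :
    opNorm ν (c • A) = ‖c‖ * opNorm ν A := by
  have hle : ∀ (d : ℂ) (B : M2), opNorm ν (d • B) ≤ ‖d‖ * opNorm ν B := by
    intro d B
    apply opNorm_le hν (mul_nonneg (norm_nonneg _) (opNorm_nonneg _))
    intro v
    rw [Matrix.smul_mulVec]
    rw [hν.homog]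
    calc ‖d‖ * ν (B.mulVec v) ≤ ‖d‖ * (opNorm ν B * ν v) :=
      mul_le_mul_of_nonneg_left (le_opNorm hν B v) (norm_nonneg _)
    _ = ‖d‖ * opNorm ν B * ν v := by ring
  by_cases hc : c = 0
  · subst hc
    simp only [zero_smul, norm_zero, zero_mul]
    apply le_antisymm
    · apply opNorm_le hν le_rfl
      intro v
      rw [Matrix.zero_mulVec, nu_zero hν, zero_mul]
    · exact opNorm_nonneg _
  · apply le_antisymm (hle c A)
    have h2 := hle c⁻¹ (c • A)
    rw [smul_smul, inv_mul_cancel₀ hc, one_smul, norm_inv] at h2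
    have hca : 0 < ‖c‖ := by
      exact norm_pos_iff.mpr hc
    rw [← le_div_iff₀' hca] at *
    calc opNorm ν A ≤ (‖c‖)⁻¹ * opNorm ν (c • A) := h2
    _ = opNorm ν (c • A) / ‖c‖ := by ring

lemma opNorm_smul_le (hν : IsNorm 2 ν) (c : ℂ) (A : M2) :
    opNorm ν (c • A) ≤ ‖c‖ * opNorm ν A := le_of_eq (opNorm_smul hν c A)

lemma opNorm_smul_one_le (hν : IsNorm 2 ν) (c : ℂ) :
    opNorm ν (c • (1 : M2)) ≤ ‖c‖ := by
  calc opNorm ν (c • (1:M2)) = ‖c‖ * opNorm ν (1:M2) := opNorm_smul hν c 1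
  _ ≤ ‖c‖ * 1 := mul_le_mul_of_nonneg_left (opNorm_one_le hν) (norm_nonneg _)
  _ = ‖c‖ := mul_one _

/-! ### dual norm and rank one matrices -/

noncomputable def dualN (ν : (Fin 2 → ℂ) → ℝ) (φ : V) : ℝ :=
  sSup ((fun w => ‖dotProduct φ w‖) '' {w : V | ν w ≤ 1})

lemma dual_bddAbove (hν : IsNorm 2 ν) (φ : V) :
    BddAbove ((fun w => ‖dotProduct φ w‖) '' {w : V | ν w ≤ 1}) := by
  obtain ⟨m, hm, h⟩ := pinorm_le_nu hν
  refine ⟨(‖φ 0‖ + ‖φ 1‖) * m, ?_⟩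
  rintro x ⟨w, hw, rfl⟩
  simp only [Set.mem_setOf_eq] at hw
  have hdot : dotProduct φ w = φ 0 * w 0 + φ 1 * w 1 := by
    simp [dotProduct, Fin.sum_univ_two]
  have b0 : ‖w 0‖ ≤ ‖w‖ := by simpa using norm_le_pi_norm w 0
  have b1 : ‖w 1‖ ≤ ‖w‖ := by simpa using norm_le_pi_norm w 1
  have hwm : ‖w‖ ≤ m := le_trans (h w) (by nlinarith)
  have htri : ‖φ 0 * w 0 + φ 1 * w 1‖ ≤
      ‖φ 0‖ * ‖w 0‖ + ‖φ 1‖ * ‖w 1‖ := by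
    calc _ ≤ ‖φ 0 * w 0‖ + ‖φ 1 * w 1‖ := norm_add_le _ _
    _ = _ := by simp [norm_mul]
  show ‖dotProduct φ w‖ ≤ _
  rw [hdot]
  have n0 : 0 ≤ ‖φ 0‖ := norm_nonneg _
  have n1 : 0 ≤ ‖φ 1‖ := norm_nonneg _
  have nw : 0 ≤ ‖w‖ := norm_nonneg _
  nlinarith [norm_nonneg (w 0), norm_nonneg (w 1)]

lemma dual_nonneg (hν : IsNorm 2 ν) (φ : V) : 0 ≤ dualN ν φ := by
  apply Real.sSup_nonneg
  rintro x ⟨w, _, rfl⟩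
  exact norm_nonneg _

lemma dual_pair (hν : IsNorm 2 ν) (φ w : V) :
    ‖dotProduct φ w‖ ≤ dualN ν φ * ν w := by
  by_cases hw : w = 0
  · simp [hw, nu_zero hν]
  · have hνw : 0 < ν w := nu_pos hν hw
    set w' : V := ((ν w : ℂ))⁻¹ • w with hw'def
    have hνw' : ν w' = 1 := by
      rw [hw'def, hν.homog]
      rw [norm_inv]
      simp [Complex.norm_real, abs_of_pos hνw]
      rw [inv_mul_cancel₀ (ne_of_gt hνw)]
    have hmem : ‖dotProduct φ w'‖ ∈
        ((fun x => ‖dotProduct φ x‖) '' {x : V | ν x ≤ 1}) :=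
      ⟨w', le_of_eq hνw', rfl⟩
    have hle : ‖dotProduct φ w'‖ ≤ dualN ν φ :=
      le_csSup (dual_bddAbove hν φ) hmem
    have hdot : dotProduct φ w = (ν w : ℂ) * dotProduct φ w' := by
      rw [hw'def, dotProduct_smul]
      rw [smul_eq_mul, ← mul_assoc, mul_inv_cancel₀ (by exact_mod_cast ne_of_gt hνw), one_mul]
    rw [hdot, norm_mul]
    simp only [Complex.norm_real, Real.norm_eq_abs, abs_of_pos hνw]
    calc ν w * ‖dotProduct φ w'‖ ≤ ν w * dualN ν φ :=
      mul_le_mul_of_nonneg_left hle (le_of_lt hνw)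
    _ = dualN ν φ * ν w := mul_comm _ _

lemma mulVec_vecMulVec (u φ w : V) :
    (Matrix.vecMulVec u φ).mulVec w = (dotProduct φ w) • u := by
  funext i
  simp [Matrix.mulVec, Matrix.vecMulVec_apply, dotProduct, Fin.sum_univ_two]
  ring

lemma opNorm_vecMulVec (hν : IsNorm 2 ν) (u φ : V) :
    opNorm ν (Matrix.vecMulVec u φ) = ν u * dualN ν φ := by
  apply le_antisymm
  · apply opNorm_le hν (mul_nonneg (hν.nonneg u) (dual_nonneg hν φ))
    intro v
    rw [mulVec_vecMulVec, hν.homog]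
    calc ‖dotProduct φ v‖ * ν u ≤ (dualN ν φ * ν v) * ν u :=
      mul_le_mul_of_nonneg_right (dual_pair hν φ v) (hν.nonneg u)
    _ = ν u * dualN ν φ * ν v := by ring
  · by_cases hu : u = 0
    · simp [hu, nu_zero hν, opNorm_nonneg]
    · have hνu : 0 < ν u := nu_pos hν hu
      rw [← le_div_iff₀' hνu]
      apply csSup_le
      · exact ⟨0, ⟨0, by simp [nu_zero hν], by simp⟩⟩
      · rintro x ⟨w, hw, rfl⟩
        simp only [Set.mem_setOf_eq] at hw
        rw [le_div_iff₀' hνu]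
        have h1 : ν ((Matrix.vecMulVec u φ).mulVec w) ≤ opNorm ν (Matrix.vecMulVec u φ) * ν w :=
          le_opNorm hν _ w
        rw [mulVec_vecMulVec, hν.homog] at h1
        have h2 : opNorm ν (Matrix.vecMulVec u φ) * ν w ≤ opNorm ν (Matrix.vecMulVec u φ) * 1 :=
          mul_le_mul_of_nonneg_left hw (opNorm_nonneg _)
        calc ν u * ‖dotProduct φ w‖
            = ‖dotProduct φ w‖ * ν u := mul_comm _ _
        _ ≤ opNorm ν (Matrix.vecMulVec u φ) * 1 := le_trans h1 h2
        _ = opNorm ν (Matrix.vecMulVec u φ) := mul_one _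

lemma vecMulVec_mul_vecMulVec (u φ v ψ : V) :
    (Matrix.vecMulVec u φ) * (Matrix.vecMulVec v ψ) =
      (dotProduct φ v) • Matrix.vecMulVec u ψ := by
  ext i j
  simp [Matrix.mul_apply, Matrix.vecMulVec_apply, dotProduct, Fin.sum_univ_two]
  ring

lemma trace_vecMulVec (u φ : V) :
    (Matrix.vecMulVec u φ).trace = dotProduct φ u := by
  simp [Matrix.trace_fin_two, Matrix.vecMulVec_apply, dotProduct, Fin.sum_univ_two]
  ring

/-- rank-one decomposition of a singular 2×2 matrix -/
lemma rank_one_decomp {M : M2} (h : M.det = 0) :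
    ∃ u φ : V, M = Matrix.vecMulVec u φ := by
  rw [Matrix.det_fin_two] at h
  by_cases h00 : M 0 0 ≠ 0
  · refine ⟨![M 0 0, M 1 0], ![1, M 0 1 / M 0 0], ?_⟩
    ext i j
    fin_cases i <;> fin_cases j <;> simp [Matrix.vecMulVec_apply] <;> field_simp <;>
      first
      | linear_combination (2:ℂ) * h
      | linear_combination -h
      | linear_combination h
  push_neg at h00
  by_cases h01 : M 0 1 ≠ 0
  · refine ⟨![M 0 1, M 1 1], ![0, 1], ?_⟩
    have h10 : M 1 0 = 0 := by
      have hz : M 0 1 * M 1 0 = 0 := by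
        rw [h00] at h
        linear_combination -h
      rcases mul_eq_zero.mp hz with h' | h'
      · exact absurd h' h01
      · exact h'
    ext i j
    fin_cases i <;> fin_cases j <;> simp [Matrix.vecMulVec_apply, h00, h10]
  push_neg at h01
  by_cases h10 : M 1 0 ≠ 0
  · refine ⟨![0, M 1 0], ![1, M 1 1 / M 1 0], ?_⟩
    ext i j
    fin_cases i <;> fin_cases j <;> simp [Matrix.vecMulVec_apply, h00, h01] <;> field_simp
  push_neg at h10
  refine ⟨![0, M 1 1], ![0, 1], ?_⟩
  ext i j
  fin_cases i <;> fin_cases j <;> simp [Matrix.vecMulVec_apply, h00, h01, h10]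

/-- a singular matrix has a nontrivial kernel vector -/
lemma exists_kernel_vec {N : M2} (h : N.det = 0) :
    ∃ v : V, v ≠ 0 ∧ N.mulVec v = 0 := by
  obtain ⟨u, φ, rfl⟩ := rank_one_decomp h
  by_cases hφ : φ = 0
  · refine ⟨![1, 0], ?_, ?_⟩
    · intro hc
      have := congrFun hc 0
      simp at this
    · rw [mulVec_vecMulVec, hφ]
      simp
  · refine ⟨![φ 1, -(φ 0)], ?_, ?_⟩
    · intro hc
      apply hφ
      have h1 := congrFun hc 0
      have h2 := congrFun hc 1
      simp at h1 h2
      funext i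
      fin_cases i <;> simp [h1, h2]
    · rw [mulVec_vecMulVec]
      have : dotProduct φ ![φ 1, -(φ 0)] = 0 := by
        simp [dotProduct, Fin.sum_univ_two]
        ring
      rw [this, zero_smul]

/-- characteristic value -/
lemma det_sub_smul_one (M : M2) (α : ℂ) :
    (M - α • (1 : M2)).det = M.det - M.trace * α + α ^ 2 := by
  simp [Matrix.det_fin_two, Matrix.trace_fin_two, Matrix.sub_apply, Matrix.smul_apply,
    Matrix.one_apply]
  ring

/-- existence of eigenvalues with Vieta -/
lemma exists_eigenvalues (M : M2) :
    ∃ α β : ℂ, α + β = M.trace ∧ α * β = M.det ∧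
      (M - α • (1 : M2)).det = 0 ∧ (M - β • (1 : M2)).det = 0 := by
  obtain ⟨s, hs⟩ : ∃ s : ℂ, s * s = M.trace ^ 2 - 4 * M.det := by
    by_cases h : M.trace ^ 2 - 4 * M.det = 0
    · exact ⟨0, by rw [h, mul_zero]⟩
    · refine ⟨Complex.exp (Complex.log (M.trace ^ 2 - 4 * M.det) / 2), ?_⟩
      rw [← Complex.exp_add]
      rw [show Complex.log (M.trace ^ 2 - 4 * M.det) / 2 +
          Complex.log (M.trace ^ 2 - 4 * M.det) / 2 = Complex.log (M.trace ^ 2 - 4 * M.det) by ring]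
      exact Complex.exp_log h
  refine ⟨(M.trace + s) / 2, (M.trace - s) / 2, by ring, by linear_combination -hs/4, ?_, ?_⟩
  · rw [det_sub_smul_one]
    linear_combination hs / 4
  · rw [det_sub_smul_one]
    linear_combination hs / 4

/-! ### setNorm basics -/

lemma setNorm_nonneg (𝒜 : Set M2) : 0 ≤ setNorm ν 𝒜 := by
  apply Real.sSup_nonneg
  rintro x ⟨A, _, rfl⟩
  exact opNorm_nonneg A

section SetFacts

variable {𝒜 : Set (Matrix (Fin 2) (Fin 2) ℂ)}

lemma pow_nonempty (h_ne : 𝒜.Nonempty) (j : ℕ) : (𝒜 ^ j).Nonempty := by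
  induction j with
  | zero => exact ⟨1, by rw [pow_zero]; exact Set.mem_one.mpr rfl⟩
  | succ k ih =>
    obtain ⟨P, hP⟩ := ih
    obtain ⟨A, hA⟩ := h_ne
    exact ⟨P * A, by rw [pow_succ]; exact Set.mul_mem_mul hP hA⟩

lemma pow_bound (hν : IsNorm 2 ν) (h_bdd : ∃ M : ℝ, ∀ A ∈ 𝒜, opNorm ν A ≤ M) (j : ℕ) :
    ∃ C : ℝ, ∀ P ∈ 𝒜 ^ j, opNorm ν P ≤ C := by
  obtain ⟨M, hM⟩ := h_bdd
  refine ⟨(max M 1) ^ j, ?_⟩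
  induction j with
  | zero =>
    intro P hP
    rw [pow_zero] at hP ⊢
    rw [Set.mem_one.mp hP]
    exact le_trans (opNorm_one_le hν) le_rfl
  | succ k ih =>
    intro P hP
    rw [pow_succ] at hP
    obtain ⟨Q, hQ, A, hA, rfl⟩ := hP
    have h1 : opNorm ν Q ≤ (max M 1) ^ k := ih Q hQ
    have h2 : opNorm ν A ≤ max M 1 := le_trans (hM A hA) (le_max_left _ _)
    rw [pow_succ]
    calc opNorm ν (Q * A) ≤ opNorm ν Q * opNorm ν A := opNorm_mul_le hν Q A
    _ ≤ (max M 1) ^ k * max M 1 := by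
        have hmax : (0:ℝ) ≤ max M 1 := le_trans zero_le_one (le_max_right _ _)
        have hnA := opNorm_nonneg (ν := ν) A
        have hnQ := opNorm_nonneg (ν := ν) Q
        nlinarith [pow_nonneg hmax k]

lemma pow_bddAbove (hν : IsNorm 2 ν) (h_bdd : ∃ M : ℝ, ∀ A ∈ 𝒜, opNorm ν A ≤ M) (j : ℕ) :
    BddAbove (opNorm ν '' (𝒜 ^ j)) := by
  obtain ⟨C, hC⟩ := pow_bound hν h_bdd j
  exact ⟨C, by rintro x ⟨P, hP, rfl⟩; exact hC P hP⟩

lemma le_setNorm_of_mem (hν : IsNorm 2 ν) (h_bdd : ∃ M : ℝ, ∀ A ∈ 𝒜, opNorm ν A ≤ M)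
    {j : ℕ} {P : M2} (hP : P ∈ 𝒜 ^ j) : opNorm ν P ≤ setNorm ν (𝒜 ^ j) :=
  le_csSup (pow_bddAbove hν h_bdd j) ⟨P, hP, rfl⟩

lemma setNorm_pow_add (hν : IsNorm 2 ν) (h_ne : 𝒜.Nonempty)
    (h_bdd : ∃ M : ℝ, ∀ A ∈ 𝒜, opNorm ν A ≤ M) (a b : ℕ) :
    setNorm ν (𝒜 ^ (a + b)) ≤ setNorm ν (𝒜 ^ a) * setNorm ν (𝒜 ^ b) := by
  apply csSup_le
  · exact Set.Nonempty.image _ (pow_nonempty h_ne (a+b))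
  · rintro x ⟨P, hP, rfl⟩
    rw [pow_add] at hP
    obtain ⟨Q, hQ, R, hR, rfl⟩ := hP
    calc opNorm ν (Q * R) ≤ opNorm ν Q * opNorm ν R := opNorm_mul_le hν Q R
    _ ≤ setNorm ν (𝒜 ^ a) * setNorm ν (𝒜 ^ b) := by
        have h1 := le_setNorm_of_mem hν h_bdd hQ
        have h2 := le_setNorm_of_mem hν h_bdd hR
        have hnQ := opNorm_nonneg (ν := ν) Q
        have hnR := opNorm_nonneg (ν := ν) R
        nlinarith [setNorm_nonneg (ν := ν) (𝒜 ^ a)]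

lemma setNorm_pow_mul (hν : IsNorm 2 ν) (h_ne : 𝒜.Nonempty)
    (h_bdd : ∃ M : ℝ, ∀ A ∈ 𝒜, opNorm ν A ≤ M) (m k : ℕ) :
    setNorm ν (𝒜 ^ (m * k)) ≤ setNorm ν (𝒜 ^ k) ^ m := by
  induction m with
  | zero =>
    simp only [Nat.zero_mul, pow_zero]
    apply csSup_le
    · exact Set.Nonempty.image _ (pow_nonempty h_ne 0)
    · rintro x ⟨P, hP, rfl⟩
      rw [Set.mem_one.mp hP]
      exact opNorm_one_le hν
  | succ j ih =>
    have : (j + 1) * k = j * k + k := by ring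
    rw [this]
    calc setNorm ν (𝒜 ^ (j * k + k)) ≤ setNorm ν (𝒜 ^ (j * k)) * setNorm ν (𝒜 ^ k) :=
      setNorm_pow_add hν h_ne h_bdd _ _
    _ ≤ setNorm ν (𝒜 ^ k) ^ j * setNorm ν (𝒜 ^ k) := by
        have := setNorm_nonneg (ν := ν) (𝒜 ^ k)
        have := setNorm_nonneg (ν := ν) (𝒜 ^ (j*k))
        nlinarith
    _ = setNorm ν (𝒜 ^ k) ^ (j + 1) := by ring

lemma jsr_nonneg (𝒜 : Set M2) : 0 ≤ jsr ν 𝒜 := by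
  apply Real.iInf_nonneg
  intro k
  exact Real.rpow_nonneg (setNorm_nonneg _) _

/-- eigenvalue bound by jsr powers -/
lemma eig_bound (hν : IsNorm 2 ν) (h_ne : 𝒜.Nonempty)
    (h_bdd : ∃ M : ℝ, ∀ A ∈ 𝒜, opNorm ν A ≤ M) {m : ℕ} (hm : 1 ≤ m) {A : M2}
    (hA : A ∈ 𝒜 ^ m) {α : ℂ} (hα : (A - α • (1 : M2)).det = 0) :
    ‖α‖ ≤ (jsr ν 𝒜) ^ m := by
  obtain ⟨w, hw0, hw⟩ := exists_kernel_vec hα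
  have hAw : A.mulVec w = α • w := by
    rw [Matrix.sub_mulVec, Matrix.smul_mulVec, Matrix.one_mulVec, sub_eq_zero] at hw
    exact hw
  have hpow : ∀ k : ℕ, (A ^ k).mulVec w = (α ^ k) • w := by
    intro k
    induction k with
    | zero => simp [Matrix.one_mulVec]
    | succ j ih =>
      rw [pow_succ', ← Matrix.mulVec_mulVec, ih, Matrix.mulVec_smul, hAw, smul_smul, ← pow_succ]
  have hbound : ∀ k : ℕ, 1 ≤ k → ‖α‖ ^ k ≤ setNorm ν (𝒜 ^ k) ^ m := by
    intro k hk
    have h1 : (A ^ k) ∈ 𝒜 ^ (m * k) := by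
      rw [pow_mul]
      exact Set.pow_mem_pow hA
    have h2 : ν ((A ^ k).mulVec w) ≤ opNorm ν (A ^ k) * ν w := le_opNorm hν _ _
    rw [hpow k, hν.homog, norm_pow] at h2
    have hνw : 0 < ν w := nu_pos hν hw0
    have h3 : opNorm ν (A ^ k) ≤ setNorm ν (𝒜 ^ (m * k)) := le_setNorm_of_mem hν h_bdd h1
    have h4 : ‖α‖ ^ k ≤ setNorm ν (𝒜 ^ (m * k)) := by
      have := mul_le_mul_of_nonneg_right h3 (le_of_lt hνw)
      have hc : ‖α‖ ^ k * ν w ≤ setNorm ν (𝒜 ^ (m*k)) * ν w := le_trans h2 this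
      exact le_of_mul_le_mul_right hc hνw
    exact le_trans h4 (setNorm_pow_mul hν h_ne h_bdd m k)
  -- now convert to rpow and take infimum
  have hm0 : (m:ℝ) ≠ 0 := Nat.cast_ne_zero.mpr (by omega)
  have habs : (0:ℝ) ≤ ‖α‖ := norm_nonneg _
  have hroot : ‖α‖ ^ ((m:ℝ)⁻¹) ≤ jsr ν 𝒜 := by
    apply le_ciInf
    rintro ⟨k, hk⟩
    have hk0 : (k:ℝ) ≠ 0 := Nat.cast_ne_zero.mpr (by omega)
    have hN : (0:ℝ) ≤ setNorm ν (𝒜 ^ k) := setNorm_nonneg _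
    have h5 : ‖α‖ ^ (k:ℝ) ≤ setNorm ν (𝒜 ^ k) ^ (m:ℝ) := by
      rw [Real.rpow_natCast, Real.rpow_natCast]
      exact hbound k hk
    have h6 : (‖α‖ ^ (k:ℝ)) ^ (((k:ℝ))⁻¹ * ((m:ℝ))⁻¹) ≤
        (setNorm ν (𝒜 ^ k) ^ (m:ℝ)) ^ (((k:ℝ))⁻¹ * ((m:ℝ))⁻¹) := by
      apply Real.rpow_le_rpow (Real.rpow_nonneg habs _) h5 (by positivity)
    rw [← Real.rpow_mul habs, ← Real.rpow_mul hN] at h6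
    have e1 : (k:ℝ) * ((k:ℝ)⁻¹ * ((m:ℝ))⁻¹) = (m:ℝ)⁻¹ := by field_simp
    have e2 : (m:ℝ) * ((k:ℝ)⁻¹ * ((m:ℝ))⁻¹) = (k:ℝ)⁻¹ := by
      field_simp
    rw [e1, e2] at h6
    simpa using h6
  have := pow_le_pow_left₀ (Real.rpow_nonneg habs _) hroot m
  rwa [Real.rpow_inv_natCast_pow habs (by omega)] at this

end SetFacts

lemma opNorm_neg (hν : IsNorm 2 ν) (M : M2) : opNorm ν (-M) = opNorm ν M := by
  have h1 : -M = (-1 : ℂ) • M := by simp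
  rw [h1, opNorm_smul hν]
  simp

/-- trace of product of shifted matrices -/
lemma trace_shift (A B : M2) (α β : ℂ) :
    ((A - α • (1:M2)) * (B - β • (1:M2))).trace =
      (A * B).trace - α * B.trace - β * A.trace + 2 * (α * β) := by
  simp [Matrix.trace_fin_two, Matrix.mul_apply, Fin.sum_univ_two, Matrix.sub_apply,
    Matrix.smul_apply, Matrix.one_apply]
  ring

lemma shift_prod_expand (A B : M2) (α β : ℂ) :
    A * B = (A - α • (1:M2)) * (B - β • (1:M2)) + β • (A - α • (1:M2)) + α • B := by
  ext i j
  fin_cases i <;> fin_cases j <;>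
    simp [Matrix.mul_apply, Fin.sum_univ_two, Matrix.sub_apply, Matrix.add_apply,
      Matrix.smul_apply, Matrix.one_apply] <;> ring

lemma shift_prod_expand' (A B : M2) (α β : ℂ) :
    B * A = (B - β • (1:M2)) * (A - α • (1:M2)) + β • (A - α • (1:M2)) + α • B := by
  ext i j
  fin_cases i <;> fin_cases j <;>
    simp [Matrix.mul_apply, Fin.sum_univ_two, Matrix.sub_apply, Matrix.add_apply,
      Matrix.smul_apply, Matrix.one_apply] <;> ring

lemma symm_identity (A B : M2) :
    A * B + B * A = (A.trace) • B + (B.trace) • A +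
      ((A * B).trace - A.trace * B.trace) • (1:M2) := by
  ext i j
  fin_cases i <;> fin_cases j <;>
    simp [Matrix.mul_apply, Fin.sum_univ_two, Matrix.trace_fin_two, Matrix.add_apply,
      Matrix.smul_apply, Matrix.one_apply] <;> ring

set_option maxHeartbeats 1600000 in
/-- The core two-by-two proposition. -/
lemma core (hν : IsNorm 2 ν) {A B : M2} {R S : ℝ}
    (hR : 0 ≤ R) (hS : 0 ≤ S)
    (hAS : opNorm ν A ≤ S) (hBS : opNorm ν B ≤ S)
    (heigA : ∀ γ : ℂ, (A - γ • (1:M2)).det = 0 → ‖γ‖ ≤ R)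
    (heigB : ∀ γ : ℂ, (B - γ • (1:M2)).det = 0 → ‖γ‖ ≤ R)
    (heigAB : ∀ γ : ℂ, (A * B - γ • (1:M2)).det = 0 → ‖γ‖ ≤ R ^ 2) :
    opNorm ν (A * B) ≤ 8 * R * S := by
  by_cases hcase : S ≤ 8 * R
  · calc opNorm ν (A * B) ≤ opNorm ν A * opNorm ν B := opNorm_mul_le hν A B
    _ ≤ S * S := by nlinarith [opNorm_nonneg (ν := ν) A, opNorm_nonneg (ν := ν) B]
    _ ≤ 8 * R * S := mul_le_mul_of_nonneg_right hcase hS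
  push_neg at hcase
  by_contra hcon
  push_neg at hcon
  set ε := opNorm ν (A * B) with hεdef
  -- eigenvalues
  obtain ⟨α, α₂, hasum, _, hαroot, hα₂root⟩ := exists_eigenvalues A
  obtain ⟨β₁, β₂, hbsum, _, hβ₁root, hβ₂root⟩ := exists_eigenvalues B
  obtain ⟨l₁, l₂, hlsum, _, hl₁root, hl₂root⟩ := exists_eigenvalues (A * B)
  set a := A.trace with hadef
  set b := B.trace with hbdef
  set t := (A * B).trace with htdef
  have hαR : ‖α‖ ≤ R := heigA α hαroot
  have hα₂R : ‖α₂‖ ≤ R := heigA α₂ hα₂root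
  have hβ₁R : ‖β₁‖ ≤ R := heigB β₁ hβ₁root
  have hβ₂R : ‖β₂‖ ≤ R := heigB β₂ hβ₂root
  have haR : ‖a‖ ≤ 2 * R := by
    rw [← hasum]
    calc ‖α + α₂‖ ≤ ‖α‖ + ‖α₂‖ := norm_add_le _ _
    _ ≤ 2 * R := by linarith
  have hbR : ‖b‖ ≤ 2 * R := by
    rw [← hbsum]
    calc ‖β₁ + β₂‖ ≤ ‖β₁‖ + ‖β₂‖ := norm_add_le _ _
    _ ≤ 2 * R := by linarith
  have htR : ‖t‖ ≤ 2 * R ^ 2 := by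
    rw [← hlsum]
    calc ‖l₁ + l₂‖ ≤ ‖l₁‖ + ‖l₂‖ := norm_add_le _ _
    _ ≤ 2 * R ^ 2 := by
        have := heigAB l₁ hl₁root
        have := heigAB l₂ hl₂root
        linarith
  -- choose β among β₁ β₂ minimizing the shifted trace
  have hβchoice : ∃ β : ℂ, (B - β • (1:M2)).det = 0 ∧
      ‖t - α * b - β * a + 2 * (α * β)‖ ≤ 4.5 * R ^ 2 := by
    set τ : ℂ := t - a * b / 2 with hτdef
    set η : ℂ := 2 * (α - a / 2) * (β₁ - b / 2) with hηdef
    have hid1 : t - α * b - β₁ * a + 2 * (α * β₁) = τ + η := by rw [hτdef, hηdef]; ring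
    have hid2 : t - α * b - β₂ * a + 2 * (α * β₂) = τ - η := by
      have hb2 : β₂ = b - β₁ := by rw [← hbsum]; ring
      rw [hτdef, hηdef, hb2]; ring
    have hτabs : ‖τ‖ ≤ 4 * R ^ 2 := by
      rw [hτdef]
      have h1 : ‖t - a * b / 2‖ ≤ ‖t‖ + ‖a * b / 2‖ := by
        simpa [sub_eq_add_neg, norm_neg] using norm_add_le t (-(a * b / 2))
      have h2 : ‖a * b / 2‖ = ‖a‖ * ‖b‖ / 2 := by
        rw [norm_div, norm_mul, Complex.norm_two]
      rw [h2] at h1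
      nlinarith [norm_nonneg a, norm_nonneg b]
    have hηabs : ‖η‖ ≤ 2 * R ^ 2 := by
      have hδA : ‖α - a / 2‖ ≤ R := by
        have hrw : α - a / 2 = (α - α₂) / 2 := by rw [← hasum]; ring
        rw [hrw, norm_div, Complex.norm_two]
        have h1 : ‖α - α₂‖ ≤ ‖α‖ + ‖α₂‖ := by
          simpa [sub_eq_add_neg, norm_neg] using norm_add_le α (-α₂)
        linarith
      have hδB : ‖β₁ - b / 2‖ ≤ R := by
        have hrw : β₁ - b / 2 = (β₁ - β₂) / 2 := by rw [← hbsum]; ring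
        rw [hrw, norm_div, Complex.norm_two]
        have h1 : ‖β₁ - β₂‖ ≤ ‖β₁‖ + ‖β₂‖ := by
          simpa [sub_eq_add_neg, norm_neg] using norm_add_le β₁ (-β₂)
        linarith
      rw [hηdef, norm_mul, norm_mul]
      have h2 : ‖(2:ℂ)‖ = 2 := Complex.norm_two
      rw [h2]
      nlinarith [norm_nonneg (α - a / 2),
        norm_nonneg (β₁ - b / 2)]
    have hfin : ∀ z : ℂ, ‖z‖ ^ 2 ≤ ‖τ‖ ^ 2 + ‖η‖ ^ 2 →
        ‖z‖ ≤ 4.5 * R ^ 2 := by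
      intro z hz
      have h1 : ‖z‖ ^ 2 ≤ (4.5 * R ^ 2) ^ 2 := by
        nlinarith [norm_nonneg τ, norm_nonneg η,
          sq_nonneg R]
      nlinarith [norm_nonneg z, sq_nonneg R,
        sq_nonneg (‖z‖ - 4.5 * R ^ 2), sq_nonneg (‖z‖ + 4.5 * R ^ 2)]
    by_cases hsign : (τ * (starRingEnd ℂ) η).re ≤ 0
    · refine ⟨β₁, hβ₁root, ?_⟩
      rw [hid1]
      apply hfin
      rw [Complex.sq_norm, Complex.sq_norm, Complex.sq_norm, Complex.normSq_add]
      linarith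
    · refine ⟨β₂, hβ₂root, ?_⟩
      rw [hid2]
      apply hfin
      rw [Complex.sq_norm, Complex.sq_norm, Complex.sq_norm, Complex.normSq_sub]
      push_neg at hsign
      linarith
  obtain ⟨β, hβroot, ht'bound⟩ := hβchoice
  set A' := A - α • (1:M2) with hA'def
  set B' := B - β • (1:M2) with hB'def
  have hdetA' : A'.det = 0 := hαroot
  have hdetB' : B'.det = 0 := hβroot
  obtain ⟨u, φ, hU⟩ := rank_one_decomp hdetA'
  obtain ⟨v, ψ, hV⟩ := rank_one_decomp hdetB'
  have hβR : ‖β‖ ≤ R := heigB β hβroot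
  -- norms of A' and B'
  have hA'S : opNorm ν A' ≤ S + R := by
    rw [hA'def, sub_eq_add_neg, ← neg_smul]
    calc opNorm ν (A + (-α) • (1:M2)) ≤ opNorm ν A + opNorm ν ((-α) • (1:M2)) :=
      opNorm_add_le hν _ _
    _ ≤ S + R := by
        have := opNorm_smul_one_le hν (-α)
        simp only [norm_neg] at this
        linarith
  have hB'S : opNorm ν B' ≤ S + R := by
    rw [hB'def, sub_eq_add_neg, ← neg_smul]
    calc opNorm ν (B + (-β) • (1:M2)) ≤ opNorm ν B + opNorm ν ((-β) • (1:M2)) :=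
      opNorm_add_le hν _ _
    _ ≤ S + R := by
        have := opNorm_smul_one_le hν (-β)
        simp only [norm_neg] at this
        linarith
  -- products
  have hprod1 : A' * B' = (dotProduct φ v) • Matrix.vecMulVec u ψ := by
    rw [hU, hV, vecMulVec_mul_vecMulVec]
  have hprod2 : B' * A' = (dotProduct ψ u) • Matrix.vecMulVec v φ := by
    rw [hU, hV, vecMulVec_mul_vecMulVec]
  set x := opNorm ν (A' * B') with hxdef
  set y := opNorm ν (B' * A') with hydef
  have hxval : x = ‖dotProduct φ v‖ * (ν u * dualN ν ψ) := by
    rw [hxdef, hprod1, opNorm_smul hν, opNorm_vecMulVec hν]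
  have hyval : y = ‖dotProduct ψ u‖ * (ν v * dualN ν φ) := by
    rw [hydef, hprod2, opNorm_smul hν, opNorm_vecMulVec hν]
  have hA'val : opNorm ν A' = ν u * dualN ν φ := by rw [hU, opNorm_vecMulVec hν]
  have hB'val : opNorm ν B' = ν v * dualN ν ψ := by rw [hV, opNorm_vecMulVec hν]
  -- trace of A'*B'
  have ht'val : (A' * B').trace = (dotProduct φ v) * (dotProduct ψ u) := by
    rw [hprod1, Matrix.trace_smul, trace_vecMulVec, smul_eq_mul]
  have ht'2 : (A' * B').trace = t - α * b - β * a + 2 * (α * β) := by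
    rw [hA'def, hB'def, trace_shift]
  -- xy = |t'| ⬝ ‖A'‖ ‖B'‖
  have hxy : x * y = ‖(A' * B').trace‖ * (opNorm ν A' * opNorm ν B') := by
    rw [hxval, hyval, hA'val, hB'val, ht'val, norm_mul]
    ring
  have hxybound : x * y ≤ 4.5 * R ^ 2 * (S + R) ^ 2 := by
    rw [hxy, ht'2]
    have h1 : ‖t - α * b - β * a + 2 * (α * β)‖ ≤ 4.5 * R ^ 2 := ht'bound
    have h2 : opNorm ν A' * opNorm ν B' ≤ (S + R) ^ 2 := by
      nlinarith [opNorm_nonneg (ν := ν) A', opNorm_nonneg (ν := ν) B']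
    have h3 : (0:ℝ) ≤ ‖t - α * b - β * a + 2 * (α * β)‖ := norm_nonneg _
    have h4 : (0:ℝ) ≤ opNorm ν A' * opNorm ν B' :=
      mul_nonneg (opNorm_nonneg _) (opNorm_nonneg _)
    nlinarith
  -- lower bound for x
  have hxlow : ε - 2 * R * S - R ^ 2 ≤ x := by
    have hexp : A * B = A' * B' + β • A' + α • B := by
      rw [hA'def, hB'def]; exact shift_prod_expand A B α β
    have : ε ≤ x + R * (S + R) + R * S := by
      calc ε = opNorm ν (A * B) := hεdef
      _ = opNorm ν (A' * B' + β • A' + α • B) := by rw [← hexp]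
      _ ≤ opNorm ν (A' * B' + β • A') + opNorm ν (α • B) := opNorm_add_le hν _ _
      _ ≤ opNorm ν (A' * B') + opNorm ν (β • A') + opNorm ν (α • B) := by
          linarith [opNorm_add_le hν (A' * B') (β • A')]
      _ ≤ x + R * (S + R) + R * S := by
          have e1 : opNorm ν (β • A') ≤ R * (S + R) := by
            rw [opNorm_smul hν]
            have := opNorm_nonneg (ν := ν) A'
            nlinarith [norm_nonneg β]
          have e2 : opNorm ν (α • B) ≤ R * S := by
            rw [opNorm_smul hν]
            have := opNorm_nonneg (ν := ν) B
            nlinarith [norm_nonneg α]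
          linarith
    linarith
  -- lower bound for ‖BA‖ and then y
  have hBAlow : ε - 4 * R * S - 6 * R ^ 2 ≤ opNorm ν (B * A) := by
    have hsym := symm_identity A B
    have hsymnorm : opNorm ν (A * B + B * A) ≤ 4 * R * S + 6 * R ^ 2 := by
      rw [hsym]
      calc opNorm ν (a • B + b • A + (t - a * b) • (1:M2))
          ≤ opNorm ν (a • B + b • A) + opNorm ν ((t - a * b) • (1:M2)) := opNorm_add_le hν _ _
      _ ≤ opNorm ν (a • B) + opNorm ν (b • A) + opNorm ν ((t - a * b) • (1:M2)) := by
          linarith [opNorm_add_le hν (a • B) (b • A)]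
      _ ≤ 2 * R * S + 2 * R * S + (2 * R ^ 2 + 4 * R ^ 2) := by
          have e1 : opNorm ν (a • B) ≤ 2 * R * S := by
            rw [opNorm_smul hν]
            have := opNorm_nonneg (ν := ν) B
            nlinarith [norm_nonneg a]
          have e2 : opNorm ν (b • A) ≤ 2 * R * S := by
            rw [opNorm_smul hν]
            have := opNorm_nonneg (ν := ν) A
            nlinarith [norm_nonneg b]
          have e3 : opNorm ν ((t - a * b) • (1:M2)) ≤ 2 * R ^ 2 + 4 * R ^ 2 := by
            calc opNorm ν ((t - a * b) • (1:M2)) ≤ ‖t - a * b‖ :=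
              opNorm_smul_one_le hν _
            _ ≤ ‖t‖ + ‖a‖ * ‖b‖ := by
                have htr : ‖t - a * b‖ ≤ ‖t‖ + ‖a * b‖ := by
                  simpa [sub_eq_add_neg, norm_neg] using norm_add_le t (-(a * b))
                rw [norm_mul] at htr
                exact htr
            _ ≤ 2 * R ^ 2 + 4 * R ^ 2 := by
                nlinarith [norm_nonneg a, norm_nonneg b]
          linarith
      _ = 4 * R * S + 6 * R ^ 2 := by ring
    have htri : ε ≤ opNorm ν (A * B + B * A) + opNorm ν (B * A) := by
      have : A * B = (A * B + B * A) + (-(B * A)) := by abel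
      calc ε = opNorm ν (A * B) := hεdef
      _ = opNorm ν ((A * B + B * A) + (-(B * A))) := by rw [← this]
      _ ≤ opNorm ν (A * B + B * A) + opNorm ν (-(B * A)) := opNorm_add_le hν _ _
      _ = opNorm ν (A * B + B * A) + opNorm ν (B * A) := by rw [opNorm_neg hν]
    linarith
  have hylow : ε - 6 * R * S - 7 * R ^ 2 ≤ y := by
    have hexp : B * A = B' * A' + β • A' + α • B := by
      rw [hA'def, hB'def]; exact shift_prod_expand' A B α β
    have : opNorm ν (B * A) ≤ y + R * (S + R) + R * S := by
      calc opNorm ν (B * A) = opNorm ν (B' * A' + β • A' + α • B) := by rw [← hexp]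
      _ ≤ opNorm ν (B' * A' + β • A') + opNorm ν (α • B) := opNorm_add_le hν _ _
      _ ≤ opNorm ν (B' * A') + opNorm ν (β • A') + opNorm ν (α • B) := by
          linarith [opNorm_add_le hν (B' * A') (β • A')]
      _ ≤ y + R * (S + R) + R * S := by
          have e1 : opNorm ν (β • A') ≤ R * (S + R) := by
            rw [opNorm_smul hν]
            have := opNorm_nonneg (ν := ν) A'
            nlinarith [norm_nonneg β]
          have e2 : opNorm ν (α • B) ≤ R * S := by
            rw [opNorm_smul hν]
            have := opNorm_nonneg (ν := ν) B
            nlinarith [norm_nonneg α]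
          linarith
    linarith
  -- final contradiction
  have hx0 : 0 ≤ x := opNorm_nonneg _
  have hy0 : 0 ≤ y := opNorm_nonneg _
  have hRR : R * (8 * R) ≤ R * S := mul_le_mul_of_nonneg_left (le_of_lt hcase) hR
  have hd : 0 < ε - 8 * R * S := by linarith
  have hQpos : 0 ≤ ε - 6 * R * S - 7 * R ^ 2 := by nlinarith
  have h1 : (ε - 2 * R * S - R ^ 2) * (ε - 6 * R * S - 7 * R ^ 2) ≤ x * y :=
    mul_le_mul hxlow hylow hQpos hx0
  have key : 4.5 * R ^ 2 * (S + R) ^ 2 < (ε - 2 * R * S - R ^ 2) * (ε - 6 * R * S - 7 * R ^ 2) := by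
    nlinarith [mul_pos hd hd, mul_nonneg (mul_nonneg hR hS) (le_of_lt hd),
      mul_nonneg (mul_nonneg hR hR) (le_of_lt hd),
      mul_nonneg (mul_nonneg (mul_nonneg hR hR) hS) (by linarith : (0:ℝ) ≤ S - 8 * R),
      mul_nonneg (mul_nonneg (mul_nonneg hR hR) hR) (by linarith : (0:ℝ) ≤ S - 8 * R),
      mul_nonneg hR hS, sq_nonneg R, sq_nonneg S, mul_nonneg hR hR]
  linarith [le_trans h1 hxybound]

lemma opNorm_pos (hν : IsNorm 2 ν) {P : M2} (hP : P ≠ 0) : 0 < opNorm ν P := by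
  have hex : ∃ w : V, w ≠ 0 ∧ P.mulVec w ≠ 0 := by
    by_contra hc
    push_neg at hc
    apply hP
    ext i j
    have h0 : ((![1, 0] : V)) ≠ 0 := by
      intro h; have := congrFun h 0; simp at this
    have h1 : ((![0, 1] : V)) ≠ 0 := by
      intro h; have := congrFun h 1; simp at this
    fin_cases j
    · have := congrFun (hc ![1, 0] h0) i
      simpa [Matrix.mulVec, dotProduct, Fin.sum_univ_two] using this
    · have := congrFun (hc ![0, 1] h1) i
      simpa [Matrix.mulVec, dotProduct, Fin.sum_univ_two] using this
  obtain ⟨w, hw0, hPw⟩ := hex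
  have h1 : 0 < ν (P.mulVec w) := nu_pos hν hPw
  have h2 : ν (P.mulVec w) ≤ opNorm ν P * ν w := le_opNorm hν P w
  have h3 : 0 < ν w := nu_pos hν hw0
  nlinarith

/-! ### logarithm bookkeeping -/

lemma log2_nonneg {m : ℕ} (hm : 1 ≤ m) : 0 ≤ Real.log m / Real.log 2 :=
  div_nonneg (Real.log_nonneg (by exact_mod_cast hm)) (Real.log_nonneg one_le_two)

lemma log2_pos : (0:ℝ) < Real.log 2 := Real.log_pos one_lt_two

lemma log2_double {m : ℕ} (hm : 1 ≤ m) :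
    Real.log ((2 * m : ℕ) : ℝ) / Real.log 2 = Real.log m / Real.log 2 + 1 := by
  have hm0 : (m:ℝ) ≠ 0 := Nat.cast_ne_zero.mpr (by omega)
  push_cast
  rw [Real.log_mul two_ne_zero hm0]
  field_simp
  ring

lemma log2_mono {m n : ℕ} (hm : 1 ≤ m) (h : m ≤ n) :
    Real.log m / Real.log 2 ≤ Real.log n / Real.log 2 := by
  have hm1 : (1:ℝ) ≤ (m:ℝ) := by exact_mod_cast hm
  have hmpos : (0:ℝ) < (m:ℝ) := lt_of_lt_of_le one_pos hm1
  have hlog : Real.log m ≤ Real.log n :=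
    Real.log_le_log hmpos (by exact_mod_cast h)
  rw [div_eq_mul_inv, div_eq_mul_inv]
  exact mul_le_mul_of_nonneg_right hlog (le_of_lt (inv_pos.mpr log2_pos))

lemma sigma_one : sigmaBound2 1 = 1 := by
  unfold sigmaBound2
  norm_num

lemma nu_one : nuBound2 1 = 1 := by
  unfold nuBound2
  norm_num

lemma sigma_nonneg {m : ℕ} (hm : 1 ≤ m) : 0 ≤ sigmaBound2 m := by
  unfold sigmaBound2
  have := log2_nonneg hm
  nlinarith

lemma sigma_even {m : ℕ} (hm : 1 ≤ m) : sigmaBound2 m + 2 ≤ sigmaBound2 (2 * m) := by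
  unfold sigmaBound2
  rw [log2_double hm]
  have := log2_nonneg hm
  nlinarith

lemma nu_even {m : ℕ} (hm : 1 ≤ m) : nuBound2 (2 * m) = nuBound2 m + 1 := by
  unfold nuBound2
  rw [log2_double hm]

lemma sigma_mono {m n : ℕ} (hm : 1 ≤ m) (h : m ≤ n) : sigmaBound2 m ≤ sigmaBound2 n := by
  unfold sigmaBound2
  have h1 := log2_nonneg hm
  have h2 := log2_mono hm h
  nlinarith

lemma nu_mono {m n : ℕ} (hm : 1 ≤ m) (h : m ≤ n) : nuBound2 m ≤ nuBound2 n := by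
  unfold nuBound2
  have := log2_mono hm h
  linarith

end JSRAux


open JSRAux in
/-- The main theorem for sets of 2×2 matrices, with `C_2 = 2^{3·2/2} = 8`. -/
theorem spectral_radius_gelfand_bounds_dim_two
    (𝒜 : Set (Matrix (Fin 2) (Fin 2) ℂ)) (h_ne : 𝒜.Nonempty)
    (ν : (Fin 2 → ℂ) → ℝ) (hν : IsNorm 2 ν)
    (h_bdd : ∃ M : ℝ, ∀ A ∈ 𝒜, opNorm ν A ≤ M)
    (h_nz : 𝒜 ^ 2 ≠ ({0} : Set (Matrix (Fin 2) (Fin 2) ℂ)))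
    (n : ℕ) (hn : 1 ≤ n) :
    ((8 : ℝ)) ^ (-(sigmaBound2 n) / (n : ℝ)) *
        (setNorm ν 𝒜 ^ 2 / setNorm ν (𝒜 ^ 2)) ^ (-(nuBound2 n) / (n : ℝ)) *
        setNorm ν (𝒜 ^ n) ^ ((n : ℝ)⁻¹) ≤ jsr ν 𝒜
      ∧ jsr ν 𝒜 ≤ setNorm ν (𝒜 ^ n) ^ ((n : ℝ)⁻¹) := by
  -- upper bound
  have hub : jsr ν 𝒜 ≤ setNorm ν (𝒜 ^ n) ^ ((n:ℝ)⁻¹) := by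
    have hbdd : BddBelow (Set.range fun k : {k : ℕ // 1 ≤ k} =>
        setNorm ν (𝒜 ^ (k:ℕ)) ^ (((k:ℕ):ℝ)⁻¹)) := by
      refine ⟨0, ?_⟩
      rintro xx ⟨k, rfl⟩
      exact Real.rpow_nonneg (setNorm_nonneg _) _
    exact ciInf_le hbdd ⟨n, hn⟩
  refine ⟨?_, hub⟩
  set ρ := jsr ν 𝒜 with hρdef
  have hρ0 : 0 ≤ ρ := jsr_nonneg 𝒜
  -- core applied to powers
  have hcoreP : ∀ m : ℕ, 1 ≤ m →
      setNorm ν (𝒜 ^ (m + m)) ≤ 8 * ρ ^ m * setNorm ν (𝒜 ^ m) := by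
    intro m hm
    apply csSup_le (Set.Nonempty.image _ (pow_nonempty h_ne _))
    rintro xx ⟨P, hP, rfl⟩
    rw [pow_add] at hP
    obtain ⟨Q1, h1, Q2, h2, rfl⟩ := hP
    have hmem12 : Q1 * Q2 ∈ 𝒜 ^ (m + m) := by
      rw [pow_add]; exact Set.mul_mem_mul h1 h2
    have hmm : 1 ≤ m + m := by omega
    apply core hν (pow_nonneg hρ0 m) (setNorm_nonneg _)
      (le_setNorm_of_mem hν h_bdd h1) (le_setNorm_of_mem hν h_bdd h2)
      (fun γ hγ => eig_bound hν h_ne h_bdd hm h1 hγ)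
      (fun γ hγ => eig_bound hν h_ne h_bdd hm h2 hγ)
      (fun γ hγ => by
        have := eig_bound hν h_ne h_bdd hmm hmem12 hγ
        rwa [pow_add, ← pow_two] at this)
  -- positivity facts
  set S := setNorm ν 𝒜 with hSdef
  set N2 := setNorm ν (𝒜 ^ 2) with hN2def
  have hPz : ∃ P ∈ 𝒜 ^ 2, P ≠ (0:Matrix (Fin 2) (Fin 2) ℂ) := by
    by_contra hc
    push_neg at hc
    exact h_nz (Set.eq_singleton_iff_nonempty_unique_mem.mpr
      ⟨pow_nonempty h_ne 2, fun P hP => hc P hP⟩)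
  have hN2pos : 0 < N2 := by
    obtain ⟨P, hP, hPne⟩ := hPz
    calc (0:ℝ) < opNorm ν P := opNorm_pos hν hPne
    _ ≤ N2 := le_setNorm_of_mem hν h_bdd hP
  have hN1 : setNorm ν (𝒜 ^ 1) = S := by rw [pow_one]
  have hN2S : N2 ≤ S * S := by
    have := setNorm_pow_add hν h_ne h_bdd 1 1
    rw [hN1] at this
    exact this
  have hSpos : 0 < S := by
    rcases lt_or_eq_of_le (setNorm_nonneg (ν := ν) 𝒜 : (0:ℝ) ≤ S) with h | h
    · exact h
    · exfalso; nlinarith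
  have hcore1 : N2 ≤ 8 * ρ * S := by
    have := hcoreP 1 le_rfl
    rw [hN1, pow_one] at this
    exact this
  have hρpos : 0 < ρ := by nlinarith
  set K := S ^ 2 / N2 with hKdef
  have hKpos : 0 < K := by positivity
  have hK1 : 1 ≤ K := by
    rw [hKdef, le_div_iff₀ hN2pos, one_mul, pow_two]
    exact hN2S
  have hS8 : S ≤ 8 * K * ρ := by
    rw [hKdef, show 8 * (S^2/N2) * ρ = (8 * S^2 * ρ) / N2 by ring, le_div_iff₀ hN2pos]
    nlinarith
  -- the exponential bound by strong induction
  have hQ : ∀ j : ℕ, 1 ≤ j → setNorm ν (𝒜 ^ j) ≤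
      (8:ℝ) ^ (sigmaBound2 j) * K ^ (nuBound2 j) * ρ ^ j := by
    intro j
    induction j using Nat.strong_induction_on with
    | _ j ih =>
      intro hj1
      by_cases hone : j = 1
      · subst hone
        rw [hN1, sigma_one, nu_one, Real.rpow_one, Real.rpow_one, pow_one]
        calc S ≤ 8 * K * ρ := hS8
        _ = 8 * K * ρ := rfl
      · have hj2 : 2 ≤ j := by omega
        -- even bound helper
        have heven : ∀ m : ℕ, 1 ≤ m → m + m < j + 1 →
            setNorm ν (𝒜 ^ (m + m)) ≤
              ((8:ℝ) ^ (sigmaBound2 m + 1)) * K ^ (nuBound2 m) * ρ ^ (m + m) := by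
          intro m hm hlt
          have hih : setNorm ν (𝒜 ^ m) ≤ (8:ℝ) ^ (sigmaBound2 m) * K ^ (nuBound2 m) * ρ ^ m := by
            have hmlt : m < j := by omega
            exact ih m hmlt hm
          calc setNorm ν (𝒜 ^ (m + m)) ≤ 8 * ρ ^ m * setNorm ν (𝒜 ^ m) := hcoreP m hm
          _ ≤ 8 * ρ ^ m * ((8:ℝ) ^ (sigmaBound2 m) * K ^ (nuBound2 m) * ρ ^ m) := by
              apply mul_le_mul_of_nonneg_left hih
              positivity
          _ = ((8:ℝ) ^ (sigmaBound2 m) * 8) * K ^ (nuBound2 m) * (ρ ^ m * ρ ^ m) := by ring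
          _ = ((8:ℝ) ^ (sigmaBound2 m + 1)) * K ^ (nuBound2 m) * ρ ^ (m + m) := by
              rw [Real.rpow_add (by norm_num : (0:ℝ) < 8), Real.rpow_one, pow_add]
        rcases Nat.even_or_odd j with ⟨m, hm⟩ | ⟨m, hm⟩
        · -- j = m + m
          have hm1 : 1 ≤ m := by omega
          have h1 : setNorm ν (𝒜 ^ j) ≤
              ((8:ℝ) ^ (sigmaBound2 m + 1)) * K ^ (nuBound2 m) * ρ ^ j := by
            rw [hm]; exact heven m hm1 (by omega)
          refine le_trans h1 ?_
          have e1 : sigmaBound2 m + 1 ≤ sigmaBound2 j := by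
            have := sigma_even hm1
            rw [show 2 * m = m + m by ring, ← hm] at this
            linarith
          have e2 : nuBound2 m ≤ nuBound2 j := by
            have := nu_even hm1
            rw [show 2 * m = m + m by ring, ← hm] at this
            linarith [nu_mono hm1 (show m ≤ j by omega)]
          have f1 : (8:ℝ) ^ (sigmaBound2 m + 1) ≤ (8:ℝ) ^ (sigmaBound2 j) :=
            Real.rpow_le_rpow_of_exponent_le (by norm_num) e1
          have f2 : K ^ (nuBound2 m) ≤ K ^ (nuBound2 j) :=
            Real.rpow_le_rpow_of_exponent_le hK1 e2
          have g1 : (0:ℝ) ≤ (8:ℝ) ^ (sigmaBound2 m + 1) := le_of_lt (Real.rpow_pos_of_pos (by norm_num) _)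
          have g2 : (0:ℝ) ≤ K ^ (nuBound2 j) := le_of_lt (Real.rpow_pos_of_pos hKpos _)
          have g3 : (0:ℝ) ≤ ρ ^ j := pow_nonneg hρ0 j
          have g4 : (0:ℝ) ≤ K ^ (nuBound2 m) := le_of_lt (Real.rpow_pos_of_pos hKpos _)
          apply mul_le_mul_of_nonneg_right _ g3
          calc (8:ℝ) ^ (sigmaBound2 m + 1) * K ^ (nuBound2 m)
              ≤ (8:ℝ) ^ (sigmaBound2 j) * K ^ (nuBound2 m) := mul_le_mul_of_nonneg_right f1 g4
          _ ≤ (8:ℝ) ^ (sigmaBound2 j) * K ^ (nuBound2 j) := by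
              apply mul_le_mul_of_nonneg_left f2 (le_of_lt (Real.rpow_pos_of_pos (by norm_num) _))
        · -- j = 2 * m + 1
          have hm1 : 1 ≤ m := by omega
          have hsplit : setNorm ν (𝒜 ^ j) ≤ setNorm ν (𝒜 ^ (m + m)) * setNorm ν (𝒜 ^ 1) := by
            have := setNorm_pow_add hν h_ne h_bdd (m + m) 1
            rw [show m + m + 1 = 2 * m + 1 by ring, ← hm] at this
            exact this
          have h2 : setNorm ν (𝒜 ^ (m + m)) ≤
              ((8:ℝ) ^ (sigmaBound2 m + 1)) * K ^ (nuBound2 m) * ρ ^ (m + m) :=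
            heven m hm1 (by omega)
          have h3 : setNorm ν (𝒜 ^ 1) ≤ 8 * K * ρ := by rw [hN1]; exact hS8
          have h4 : setNorm ν (𝒜 ^ j) ≤
              (((8:ℝ) ^ (sigmaBound2 m + 1)) * K ^ (nuBound2 m) * ρ ^ (m + m)) * (8 * K * ρ) := by
            refine le_trans hsplit ?_
            apply mul_le_mul h2 h3 (setNorm_nonneg _) ?_
            positivity
          have h5 : (((8:ℝ) ^ (sigmaBound2 m + 1)) * K ^ (nuBound2 m) * ρ ^ (m + m)) * (8 * K * ρ)
              = ((8:ℝ) ^ (sigmaBound2 m + 2)) * K ^ (nuBound2 m + 1) * ρ ^ j := by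
            have e8 : (8:ℝ) ^ (sigmaBound2 m + 2) = (8:ℝ) ^ (sigmaBound2 m + 1) * 8 := by
              rw [show sigmaBound2 m + 2 = (sigmaBound2 m + 1) + 1 by ring,
                Real.rpow_add (by norm_num : (0:ℝ) < 8), Real.rpow_one]
            have eK : K ^ (nuBound2 m + 1) = K ^ (nuBound2 m) * K := by
              rw [Real.rpow_add hKpos, Real.rpow_one]
            have eρ : ρ ^ j = ρ ^ (m + m) * ρ := by
              rw [show j = (m + m) + 1 by omega, pow_succ]
            rw [e8, eK, eρ]
            ring
          rw [h5] at h4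
          refine le_trans h4 ?_
          have e1 : sigmaBound2 m + 2 ≤ sigmaBound2 j := by
            have ha := sigma_even hm1
            have hb : sigmaBound2 (2 * m) ≤ sigmaBound2 j :=
              sigma_mono (by omega) (by omega)
            linarith
          have e2 : nuBound2 m + 1 ≤ nuBound2 j := by
            have ha := nu_even hm1
            have hb : nuBound2 (2 * m) ≤ nuBound2 j := nu_mono (by omega) (by omega)
            linarith
          have f1 : (8:ℝ) ^ (sigmaBound2 m + 2) ≤ (8:ℝ) ^ (sigmaBound2 j) :=
            Real.rpow_le_rpow_of_exponent_le (by norm_num) e1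
          have f2 : K ^ (nuBound2 m + 1) ≤ K ^ (nuBound2 j) :=
            Real.rpow_le_rpow_of_exponent_le hK1 e2
          have g3 : (0:ℝ) ≤ ρ ^ j := pow_nonneg hρ0 j
          apply mul_le_mul_of_nonneg_right _ g3
          calc (8:ℝ) ^ (sigmaBound2 m + 2) * K ^ (nuBound2 m + 1)
              ≤ (8:ℝ) ^ (sigmaBound2 j) * K ^ (nuBound2 m + 1) := by
                apply mul_le_mul_of_nonneg_right f1 (le_of_lt (Real.rpow_pos_of_pos hKpos _))
          _ ≤ (8:ℝ) ^ (sigmaBound2 j) * K ^ (nuBound2 j) := by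
                apply mul_le_mul_of_nonneg_left f2 (le_of_lt (Real.rpow_pos_of_pos (by norm_num) _))
  -- final conversion
  have hQn := hQ n hn
  have hn0 : (n:ℝ) ≠ 0 := Nat.cast_ne_zero.mpr (by omega)
  have hNn0 : 0 ≤ setNorm ν (𝒜 ^ n) := setNorm_nonneg _
  have h8pos : (0:ℝ) < 8 := by norm_num
  have h1 : setNorm ν (𝒜 ^ n) ^ ((n:ℝ)⁻¹) ≤
      ((8:ℝ) ^ (sigmaBound2 n) * K ^ (nuBound2 n) * ρ ^ n) ^ ((n:ℝ)⁻¹) :=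
    Real.rpow_le_rpow hNn0 hQn (by positivity)
  have h2 : ((8:ℝ) ^ (sigmaBound2 n) * K ^ (nuBound2 n) * ρ ^ n) ^ ((n:ℝ)⁻¹) =
      (8:ℝ) ^ (sigmaBound2 n / n) * K ^ (nuBound2 n / n) * ρ := by
    rw [Real.mul_rpow (by positivity) (by positivity),
      Real.mul_rpow (by positivity) (by positivity)]
    rw [← Real.rpow_natCast ρ n, ← Real.rpow_mul (le_of_lt hρpos),
      ← Real.rpow_mul (le_of_lt h8pos), ← Real.rpow_mul (le_of_lt hKpos)]
    rw [mul_inv_cancel₀ hn0, Real.rpow_one]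
    rw [div_eq_mul_inv, div_eq_mul_inv]
  have hgoal : (8:ℝ) ^ (-(sigmaBound2 n) / (n:ℝ)) * K ^ (-(nuBound2 n) / (n:ℝ)) *
      setNorm ν (𝒜 ^ n) ^ ((n:ℝ)⁻¹) ≤ ρ := by
    have hc1 : (0:ℝ) ≤ (8:ℝ) ^ (-(sigmaBound2 n) / (n:ℝ)) * K ^ (-(nuBound2 n) / (n:ℝ)) := by
      positivity
    calc (8:ℝ) ^ (-(sigmaBound2 n) / (n:ℝ)) * K ^ (-(nuBound2 n) / (n:ℝ)) *
        setNorm ν (𝒜 ^ n) ^ ((n:ℝ)⁻¹)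
        ≤ (8:ℝ) ^ (-(sigmaBound2 n) / (n:ℝ)) * K ^ (-(nuBound2 n) / (n:ℝ)) *
          ((8:ℝ) ^ (sigmaBound2 n / n) * K ^ (nuBound2 n / n) * ρ) := by
          apply mul_le_mul_of_nonneg_left _ hc1
          rw [← h2]; exact h1
    _ = ((8:ℝ) ^ (-(sigmaBound2 n) / (n:ℝ)) * (8:ℝ) ^ (sigmaBound2 n / n)) *
          (K ^ (-(nuBound2 n) / (n:ℝ)) * K ^ (nuBound2 n / n)) * ρ := by ring
    _ = ρ := by
        rw [← Real.rpow_add h8pos, ← Real.rpow_add hKpos]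
        rw [show -(sigmaBound2 n) / (n:ℝ) + sigmaBound2 n / n = 0 by ring,
          show -(nuBound2 n) / (n:ℝ) + nuBound2 n / n = 0 by ring]
        rw [Real.rpow_zero, Real.rpow_zero]
        ring
  exact hgoal
end

section
/- For every d ≥ 1, every complex d×d matrix A, and every norm ‖·‖ on ℂ^d (with induced operator norm on matrices): ‖A^d‖ ≤ (2^d − 1) · ρ(A) · ‖A‖^{d-1}, where ρ(A) is the spectral radius of A. -/
/-- Spectral radius of a matrix: the maximum of the moduli of its eigenvalues. -/
noncomputable def specRad {d : ℕ} (A : Matrix (Fin d) (Fin d) ℂ) : ℝ :=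
  sSup {r : ℝ | ∃ μ ∈ spectrum ℂ A, r = ‖μ‖}

/-! ### Auxiliary material -/

lemma Bochi.abs_multiset_sum (s : Multiset ℂ) :
    ‖s.sum‖ ≤ (s.map (fun x => ‖x‖)).sum := by
  induction s using Multiset.induction with
  | empty => simp
  | cons a s ih =>
    simp only [Multiset.sum_cons, Multiset.map_cons]
    exact (norm_add_le _ _).trans (by gcongr)

lemma Bochi.abs_multiset_prod_le (s : Multiset ℂ) (ρ : ℝ) (h0 : 0 ≤ ρ)
    (h : ∀ x ∈ s, ‖x‖ ≤ ρ) :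
    ‖s.prod‖ ≤ ρ ^ (Multiset.card s) := by
  induction s using Multiset.induction with
  | empty => simp
  | cons a s ih =>
    simp only [Multiset.prod_cons, Multiset.card_cons, norm_mul]
    rw [pow_succ']
    exact mul_le_mul (h a (Multiset.mem_cons_self a s))
      (ih fun x hx => h x (Multiset.mem_cons_of_mem hx))
      (by positivity) h0

lemma Bochi.abs_esymm_le (s : Multiset ℂ) (ρ : ℝ) (h0 : 0 ≤ ρ)
    (h : ∀ x ∈ s, ‖x‖ ≤ ρ) (j : ℕ) :
    ‖s.esymm j‖ ≤ ((Multiset.card s).choose j : ℝ) * ρ ^ j := by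
  rw [Multiset.esymm]
  refine (Bochi.abs_multiset_sum _).trans ?_
  rw [Multiset.map_map]
  have hle : ∀ r ∈ (Multiset.powersetCard j s).map ((fun x : ℂ => ‖x‖) ∘ Multiset.prod),
      r ≤ ρ ^ j := by
    intro r hr
    obtain ⟨t, ht, rfl⟩ := Multiset.mem_map.mp hr
    obtain ⟨hsub, hcard⟩ := (Multiset.mem_powersetCard.mp ht)
    have := Bochi.abs_multiset_prod_le t ρ h0 fun x hx => h x (Multiset.mem_of_le hsub hx)
    simpa [hcard] using this
  have := Multiset.sum_le_card_nsmul _ _ hle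
  simpa [Multiset.card_powersetCard, nsmul_eq_mul] using this

lemma Bochi.charpoly_eval_eq {d : ℕ} (A : Matrix (Fin d) (Fin d) ℂ) (μ : ℂ) :
    A.charpoly.eval μ = (algebraMap ℂ (Matrix (Fin d) (Fin d) ℂ) μ - A).det := by
  rw [Matrix.charpoly, eval_det, Matrix.matPolyEquiv_charmatrix]
  simp [Matrix.scalar]
  congr 1

lemma Bochi.mem_spectrum_of_isRoot_charpoly {d : ℕ} (A : Matrix (Fin d) (Fin d) ℂ) {μ : ℂ}
    (h : A.charpoly.IsRoot μ) : μ ∈ spectrum ℂ A := by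
  rw [spectrum.mem_iff]
  intro hunit
  have hdet := (Matrix.isUnit_iff_isUnit_det _).mp hunit
  rw [← Bochi.charpoly_eval_eq] at hdet
  rw [Polynomial.IsRoot.def] at h
  rw [h] at hdet
  exact not_isUnit_zero hdet

lemma Bochi.sum_mulVec {d : ℕ} (s : Finset ℕ) (f : ℕ → Matrix (Fin d) (Fin d) ℂ)
    (x : Fin d → ℂ) :
    (∑ k ∈ s, f k).mulVec x = ∑ k ∈ s, (f k).mulVec x := by
  induction s using Finset.induction with
  | empty => simp [Matrix.zero_mulVec]
  | insert _ _ hns ih =>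
    rw [Finset.sum_insert hns, Finset.sum_insert hns, Matrix.add_mulVec, ih]

/-- Type synonym for `ℂ^d`, to carry the norm `ν`. -/
def Bochi.Ed (d : ℕ) : Type := Fin d → ℂ

instance {d : ℕ} : AddCommGroup (Bochi.Ed d) :=
  inferInstanceAs (AddCommGroup (Fin d → ℂ))

noncomputable instance {d : ℕ} : Module ℂ (Bochi.Ed d) :=
  inferInstanceAs (Module ℂ (Fin d → ℂ))

instance {d : ℕ} : FiniteDimensional ℂ (Bochi.Ed d) :=
  inferInstanceAs (FiniteDimensional ℂ (Fin d → ℂ))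

/-- Bochi's inequality for a single matrix with constant `2^d - 1`:
`‖A^d‖ ≤ (2^d - 1) · ρ(A) · ‖A‖^{d-1}`. -/
theorem bochi_inequality_single_matrix
    (d : ℕ) (hd : 1 ≤ d)
    (A : Matrix (Fin d) (Fin d) ℂ)
    (ν : (Fin d → ℂ) → ℝ) (hν : IsNorm d ν) :
    opNorm ν (A ^ d) ≤ ((2 : ℝ) ^ d - 1) * specRad A * opNorm ν A ^ (d - 1) := by
  classical
  haveI : Nonempty (Fin d) := ⟨⟨0, hd⟩⟩
  letI : Norm (Bochi.Ed d) := ⟨fun v => ν v⟩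
  letI : NormedAddCommGroup (Bochi.Ed d) := NormedAddCommGroup.ofCore (𝕜 := ℂ)
    { norm_nonneg := hν.nonneg
      norm_smul := hν.homog
      norm_triangle := hν.triangle
      norm_eq_zero_iff := hν.eq_zero_iff }
  letI : NormedSpace ℂ (Bochi.Ed d) :=
    { norm_smul_le := fun c x => le_of_eq (hν.homog c x) }
  set Φ : Matrix (Fin d) (Fin d) ℂ → (Bochi.Ed d →L[ℂ] Bochi.Ed d) :=
    fun M => LinearMap.toContinuousLinearMap
      (show Bochi.Ed d →ₗ[ℂ] Bochi.Ed d from Matrix.mulVecLin M) with hΦ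
  have happ : ∀ (M : Matrix (Fin d) (Fin d) ℂ) (x : Bochi.Ed d),
      (Φ M) x = M.mulVec x := fun M x => rfl
  have hnorm : ∀ x : Bochi.Ed d, ‖x‖ = ν x := fun _ => rfl
  have hop : ∀ M : Matrix (Fin d) (Fin d) ℂ, opNorm ν M = ‖Φ M‖ := by
    intro M
    rw [ContinuousLinearMap.norm_def]
    rfl
  -- every point of the spectrum is bounded by the operator norm
  have hspec : ∀ μ ∈ spectrum ℂ A, ‖μ‖ ≤ ‖Φ A‖ := by
    intro μ hμ
    rw [← AlgEquiv.spectrum_eq (Matrix.toLinAlgEquiv' (R := ℂ) (n := Fin d)) A] at hμ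
    have hev : Module.End.HasEigenvalue (Matrix.toLinAlgEquiv' A) μ :=
      Module.End.hasEigenvalue_iff_mem_spectrum.mpr hμ
    obtain ⟨v, hv⟩ := hev.exists_hasEigenvector
    have hv0 : v ≠ 0 := hv.right
    have hvap : A.mulVec v = μ • v := by
      have := hv.apply_eq_smul
      simpa [Matrix.toLinAlgEquiv'_apply] using this
    have hle : ν (A.mulVec v) ≤ ‖Φ A‖ * ν v := by
      have := (Φ A).le_opNorm (show Bochi.Ed d from v)
      change ν (A.mulVec v) ≤ ‖Φ A‖ * ν v at this
      exact this
    rw [hvap, hν.homog] at hle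
    have hνv : 0 < ν v := by
      rcases lt_or_eq_of_le (hν.nonneg v) with h | h
      · exact h
      · exact absurd ((hν.eq_zero_iff v).mp h.symm) hv0
    exact le_of_mul_le_mul_right (by linarith [hle]) hνv
  -- the set defining the spectral radius
  set S : Set ℝ := {r : ℝ | ∃ μ ∈ spectrum ℂ A, r = ‖μ‖} with hS
  have hSne : S.Nonempty := by
    haveI : Nontrivial (Bochi.Ed d) := inferInstanceAs (Nontrivial (Fin d → ℂ))
    obtain ⟨μ, hμ⟩ := Module.End.exists_eigenvalue (Matrix.toLinAlgEquiv' (R := ℂ) A)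
    have : μ ∈ spectrum ℂ A := by
      rw [← AlgEquiv.spectrum_eq (Matrix.toLinAlgEquiv' (R := ℂ) (n := Fin d)) A]
      exact Module.End.hasEigenvalue_iff_mem_spectrum.mp hμ
    exact ⟨‖μ‖, μ, this, rfl⟩
  have hSbdd : BddAbove S := by
    refine ⟨‖Φ A‖, ?_⟩
    rintro r ⟨μ, hμ, rfl⟩
    exact hspec μ hμ
  have hρ0 : 0 ≤ specRad A := by
    obtain ⟨r, μ, hμ, rfl⟩ := hSne
    exact le_trans (norm_nonneg μ) (le_csSup hSbdd ⟨μ, hμ, rfl⟩)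
  have hρle : specRad A ≤ ‖Φ A‖ := by
    refine csSup_le hSne ?_
    rintro r ⟨μ, hμ, rfl⟩
    exact hspec μ hμ
  set ρ : ℝ := specRad A with hρ
  set a : ℝ := ‖Φ A‖ with ha
  have ha0 : 0 ≤ a := norm_nonneg _
  -- multiplicativity of Φ and power bound
  have hΦmul : ∀ M N : Matrix (Fin d) (Fin d) ℂ, Φ (M * N) = (Φ M).comp (Φ N) := by
    intro M N
    ext x
    show (M * N).mulVec x = M.mulVec (N.mulVec x)
    exact (Matrix.mulVec_mulVec _ _ _).symm
  have hΦpow : ∀ k : ℕ, ‖Φ (A ^ k)‖ ≤ a ^ k := by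
    intro k
    induction k with
    | zero =>
      have h1 : Φ (1 : Matrix (Fin d) (Fin d) ℂ) = ContinuousLinearMap.id ℂ (Bochi.Ed d) := by
        ext x
        show (1 : Matrix (Fin d) (Fin d) ℂ).mulVec x = x
        exact Matrix.one_mulVec x
      simpa [pow_zero, h1] using ContinuousLinearMap.norm_id_le
    | succ n ih =>
      calc ‖Φ (A ^ (n + 1))‖ = ‖(Φ (A ^ n)).comp (Φ A)‖ := by rw [← hΦmul, ← pow_succ]
        _ ≤ ‖Φ (A ^ n)‖ * ‖Φ A‖ := ContinuousLinearMap.opNorm_comp_le _ _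
        _ ≤ a ^ n * a := by
            apply mul_le_mul_of_nonneg_right ih (norm_nonneg _)
        _ = a ^ (n + 1) := (pow_succ a n).symm
  -- the characteristic polynomial
  set p : Polynomial ℂ := A.charpoly with hp
  have hmonic : p.Monic := A.charpoly_monic
  have hdeg : p.natDegree = d := by
    rw [hp, Matrix.charpoly_natDegree_eq_dim, Fintype.card_fin]
  have hsplits : p.Splits := IsAlgClosed.splits p
  have hcard : Multiset.card p.roots = p.natDegree :=
    Polynomial.splits_iff_card_roots.mp hsplits
  have hroots : ∀ x ∈ p.roots, ‖x‖ ≤ ρ := by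
    intro x hx
    have hx' : p.IsRoot x := Polynomial.isRoot_of_mem_roots hx
    have := Bochi.mem_spectrum_of_isRoot_charpoly A hx'
    exact le_csSup hSbdd ⟨x, this, rfl⟩
  -- coefficient bounds
  have hcoeff : ∀ k, k < d → ‖p.coeff k‖ ≤ (d.choose (d - k) : ℝ) * ρ ^ (d - k) := by
    intro k hk
    have hkle : k ≤ p.natDegree := by omega
    rw [Polynomial.coeff_eq_esymm_roots_of_card hcard hkle]
    rw [hmonic.leadingCoeff, one_mul, norm_mul, norm_pow,
      norm_neg, norm_one, one_pow, one_mul]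
    have := Bochi.abs_esymm_le p.roots ρ hρ0 hroots (p.natDegree - k)
    rw [hcard, hdeg] at this
    rw [hdeg]
    exact this
  -- Cayley–Hamilton
  have hCH : A ^ d = ∑ k ∈ Finset.range d, (-(p.coeff k)) • A ^ k := by
    have hA0 : (Polynomial.aeval A) p = 0 := A.aeval_self_charpoly
    rw [Polynomial.aeval_eq_sum_range, hdeg, Finset.sum_range_succ] at hA0
    have hlead : p.coeff d = 1 := by
      have := hmonic.coeff_natDegree
      rwa [hdeg] at this
    rw [hlead, one_smul] at hA0
    have : A ^ d = -∑ k ∈ Finset.range d, p.coeff k • A ^ k :=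
      eq_neg_of_add_eq_zero_right hA0
    rw [this, ← Finset.sum_neg_distrib]
    congr 1
    ext k
    rw [neg_smul]
  -- transport through Φ
  have hΦsum : Φ (A ^ d) = ∑ k ∈ Finset.range d, (-(p.coeff k)) • Φ (A ^ k) := by
    refine ContinuousLinearMap.ext fun x => ?_
    rw [happ, hCH]
    refine (Bochi.sum_mulVec _ _ x).trans ?_
    rw [ContinuousLinearMap.sum_apply]
    refine Finset.sum_congr rfl fun k _ => ?_
    rw [ContinuousLinearMap.smul_apply, happ]
    exact Matrix.smul_mulVec _ _ _
  -- the final estimate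
  have hterm : ∀ k ∈ Finset.range d,
      ‖(-(p.coeff k)) • Φ (A ^ k)‖ ≤ (d.choose (d - k) : ℝ) * (ρ * a ^ (d - 1)) := by
    intro k hk
    rw [Finset.mem_range] at hk
    have h1 : ‖(-(p.coeff k))‖ = ‖p.coeff k‖ := by
      rw [norm_neg]
    calc ‖(-(p.coeff k)) • Φ (A ^ k)‖
        ≤ ‖(-(p.coeff k))‖ * ‖Φ (A ^ k)‖ := ContinuousLinearMap.opNorm_smul_le _ _
      _ = ‖p.coeff k‖ * ‖Φ (A ^ k)‖ := by rw [h1]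
      _
        ≤ ((d.choose (d - k) : ℝ) * ρ ^ (d - k)) * a ^ k := by
          apply mul_le_mul (hcoeff k hk) (hΦpow k) (norm_nonneg _)
          positivity
      _ = (d.choose (d - k) : ℝ) * (ρ ^ (d - k) * a ^ k) := by ring
      _ ≤ (d.choose (d - k) : ℝ) * (ρ * a ^ (d - 1)) := by
          apply mul_le_mul_of_nonneg_left _ (by positivity)
          have hdk : d - k = (d - 1 - k) + 1 := by omega
          rw [hdk, pow_succ]
          have h2 : ρ ^ (d - 1 - k) ≤ a ^ (d - 1 - k) := pow_le_pow_left₀ hρ0 hρle _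
          calc ρ ^ (d - 1 - k) * ρ * a ^ k ≤ a ^ (d - 1 - k) * ρ * a ^ k := by
                apply mul_le_mul_of_nonneg_right _ (by positivity)
                exact mul_le_mul_of_nonneg_right h2 hρ0
            _ = ρ * (a ^ (d - 1 - k) * a ^ k) := by ring
            _ = ρ * a ^ (d - 1) := by
                rw [← pow_add]
                congr 2
                omega
  have hbinom : (∑ k ∈ Finset.range d, (d.choose (d - k) : ℝ)) = 2 ^ d - 1 := by
    have h1 : (∑ k ∈ Finset.range d, (d.choose (d - k) : ℝ))
        = ∑ k ∈ Finset.range d, (d.choose (k + 1) : ℝ) := by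
      rw [← Finset.sum_range_reflect]
      apply Finset.sum_congr rfl
      intro j hj
      rw [Finset.mem_range] at hj
      have hj' : d - (d - 1 - j) = j + 1 := by omega
      rw [hj']
    have h2 : (∑ k ∈ Finset.range (d + 1), (d.choose k : ℝ)) = 2 ^ d := by
      exact_mod_cast Nat.sum_range_choose d
    rw [h1]
    have h3 := Finset.sum_range_succ' (fun k => (d.choose k : ℝ)) d
    rw [h2] at h3
    simp only [Nat.choose_zero_right, Nat.cast_one] at h3
    linarith
  calc opNorm ν (A ^ d) = ‖Φ (A ^ d)‖ := hop _
    _ = ‖∑ k ∈ Finset.range d, (-(p.coeff k)) • Φ (A ^ k)‖ := by rw [hΦsum]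
    _ ≤ ∑ k ∈ Finset.range d, ‖(-(p.coeff k)) • Φ (A ^ k)‖ := norm_sum_le _ _
    _ ≤ ∑ k ∈ Finset.range d, (d.choose (d - k) : ℝ) * (ρ * a ^ (d - 1)) :=
        Finset.sum_le_sum hterm
    _ = (∑ k ∈ Finset.range d, (d.choose (d - k) : ℝ)) * (ρ * a ^ (d - 1)) := by
        rw [← Finset.sum_mul]
    _ = ((2 : ℝ) ^ d - 1) * specRad A * opNorm ν A ^ (d - 1) := by
        rw [hbinom, hop A, ← ha, ← hρ]
        ring
end

section
/- Let 𝒜 be a nonempty bounded set of complex d×d matrices. Then ρ(𝒜) = 0 if and only if 𝒜^d = {0}, i.e. if and only if every product of d matrices from 𝒜 is the zero matrix (the matrix set 𝒜 is nilpotent). -/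
open scoped Pointwise

/-! ### Auxiliary lemmas -/

section Aux

variable {d : ℕ} {ν : (Fin d → ℂ) → ℝ}

lemma nu_zero (hν : IsNorm d ν) : ν 0 = 0 := (hν.eq_zero_iff 0).2 rfl

lemma nu_pos (hν : IsNorm d ν) {v : Fin d → ℂ} (hv : v ≠ 0) : 0 < ν v := by
  rcases lt_or_eq_of_le (hν.nonneg v) with h | h
  · exact h
  · exact absurd ((hν.eq_zero_iff v).1 h.symm) hv

lemma nu_real_smul (hν : IsNorm d ν) (r : ℝ) (v : Fin d → ℂ) : ν (r • v) = |r| * ν v := by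
  have h : (r : ℂ) • v = r • v := by
    rw [← IsScalarTower.algebraMap_smul ℂ r v]; rfl
  rw [← h, hν.homog, Complex.norm_real, Real.norm_eq_abs]

lemma nu_sum_le (hν : IsNorm d ν) {ι : Type*} (s : Finset ι) (f : ι → Fin d → ℂ) :
    ν (∑ i ∈ s, f i) ≤ ∑ i ∈ s, ν (f i) := by
  classical
  induction s using Finset.induction with
  | empty => simp [nu_zero hν]
  | insert _ _ h ih =>
      rw [Finset.sum_insert h, Finset.sum_insert h]
      exact (hν.triangle _ _).trans (by linarith)

lemma nu_upper (hν : IsNorm d ν) : ∃ b : ℝ, 0 ≤ b ∧ ∀ v, ν v ≤ b * ‖v‖ := by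
  refine ⟨∑ i : Fin d, ν (Pi.single i 1), Finset.sum_nonneg fun i _ => hν.nonneg _, fun v => ?_⟩
  have hv : v = ∑ i : Fin d, v i • (Pi.single i (1:ℂ) : Fin d → ℂ) := by
    funext j
    simp [Finset.sum_apply, Pi.single_apply]
  calc ν v ≤ ∑ i : Fin d, ν (v i • (Pi.single i (1:ℂ) : Fin d → ℂ)) := by
        conv_lhs => rw [hv]
        exact nu_sum_le hν _ _
    _ ≤ ∑ i : Fin d, ν (Pi.single i 1) * ‖v‖ := by
        refine Finset.sum_le_sum fun i _ => ?_
        rw [hν.homog]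
        calc ‖v i‖ * ν (Pi.single i 1) ≤ ‖v‖ * ν (Pi.single i 1) := by
              apply mul_le_mul_of_nonneg_right _ (hν.nonneg _)
              simpa using norm_le_pi_norm v i
          _ = ν (Pi.single i 1) * ‖v‖ := mul_comm _ _
    _ = (∑ i : Fin d, ν (Pi.single i 1)) * ‖v‖ := by rw [Finset.sum_mul]

lemma nu_continuous (hν : IsNorm d ν) : Continuous ν := by
  obtain ⟨b, hb0, hb⟩ := nu_upper hν
  have key : ∀ x y : Fin d → ℂ, ν x - ν y ≤ b * ‖x - y‖ := by
    intro x y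
    have : ν x ≤ ν y + ν (x - y) := by
      have := hν.triangle y (x - y); simpa using this
    linarith [hb (x - y)]
  have : LipschitzWith b.toNNReal ν := by
    apply LipschitzWith.of_dist_le_mul
    intro x y
    rw [Real.dist_eq, Real.coe_toNNReal b hb0, dist_eq_norm]
    rcases abs_cases (ν x - ν y) with ⟨h, _⟩ | ⟨h, _⟩
    · rw [h]; exact key x y
    · rw [h]; have := key y x; rw [norm_sub_rev] at this; linarith
  exact this.continuous

lemma nu_lower (hν : IsNorm d ν) : ∃ a : ℝ, 0 < a ∧ ∀ v, a * ‖v‖ ≤ ν v := by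
  rcases subsingleton_or_nontrivial (Fin d → ℂ) with hs | hn
  · refine ⟨1, one_pos, fun v => ?_⟩
    have : v = 0 := Subsingleton.elim _ _
    simp [this, nu_zero hν]
  · have hcomp : IsCompact (Metric.sphere (0 : Fin d → ℂ) 1) := isCompact_sphere 0 1
    have hne : (Metric.sphere (0 : Fin d → ℂ) 1).Nonempty :=
      NormedSpace.sphere_nonempty.mpr zero_le_one
    obtain ⟨u, hu_mem, hu_min⟩ := hcomp.exists_isMinOn hne (nu_continuous hν).continuousOn
    have hu_norm : ‖u‖ = 1 := by simpa using mem_sphere_iff_norm.mp hu_mem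
    have hu_ne : u ≠ 0 := by intro h; rw [h] at hu_norm; simp at hu_norm
    refine ⟨ν u, nu_pos hν hu_ne, fun v => ?_⟩
    rcases eq_or_ne v 0 with rfl | hv
    · simp [nu_zero hν]
    · have hvn : (0:ℝ) < ‖v‖ := norm_pos_iff.mpr hv
      have hmem : ‖v‖⁻¹ • v ∈ Metric.sphere (0 : Fin d → ℂ) 1 := by
        simp [norm_smul, abs_of_pos (inv_pos.mpr hvn), inv_mul_cancel₀ hvn.ne']
      have hmin := isMinOn_iff.mp hu_min _ hmem
      have hcalc : ν v = ‖v‖ * ν (‖v‖⁻¹ • v) := by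
        rw [nu_real_smul hν, abs_of_pos (inv_pos.mpr hvn)]
        field_simp
      rw [hcalc, mul_comm (ν u) ‖v‖]
      exact mul_le_mul_of_nonneg_left hmin (le_of_lt hvn)

lemma opNorm_nonneg (A : Matrix (Fin d) (Fin d) ℂ) : 0 ≤ opNorm ν A :=
  Real.sInf_nonneg fun _ hx => hx.1

lemma opNorm_set_nonempty (hν : IsNorm d ν) (A : Matrix (Fin d) (Fin d) ℂ) :
    {c : ℝ | 0 ≤ c ∧ ∀ v, ν (A.mulVec v) ≤ c * ν v}.Nonempty := by
  obtain ⟨b, hb0, hb⟩ := nu_upper hν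
  obtain ⟨a, ha0, ha⟩ := nu_lower hν
  set T := LinearMap.toContinuousLinearMap (Matrix.mulVecLin A)
  refine ⟨b * ‖T‖ / a, div_nonneg (mul_nonneg hb0 (norm_nonneg _)) ha0.le, fun v => ?_⟩
  have h1 : ν (A.mulVec v) ≤ b * ‖A.mulVec v‖ := hb _
  have h2 : ‖A.mulVec v‖ ≤ ‖T‖ * ‖v‖ := T.le_opNorm v
  have h3 : ‖v‖ ≤ ν v / a := by
    rw [le_div_iff₀ ha0]; linarith [ha v]
  calc ν (A.mulVec v) ≤ b * (‖T‖ * ‖v‖) := h1.trans (by nlinarith [norm_nonneg (A.mulVec v)])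
    _ ≤ b * (‖T‖ * (ν v / a)) := by
        have : ‖T‖ * ‖v‖ ≤ ‖T‖ * (ν v / a) := mul_le_mul_of_nonneg_left h3 (norm_nonneg _)
        nlinarith
    _ = b * ‖T‖ / a * ν v := by ring

lemma opNorm_le (A : Matrix (Fin d) (Fin d) ℂ) {c : ℝ} (hc : 0 ≤ c)
    (h : ∀ v, ν (A.mulVec v) ≤ c * ν v) : opNorm ν A ≤ c :=
  csInf_le ⟨0, fun _ hx => hx.1⟩ ⟨hc, h⟩

lemma le_opNorm (hν : IsNorm d ν) (A : Matrix (Fin d) (Fin d) ℂ) (v : Fin d → ℂ) :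
    ν (A.mulVec v) ≤ opNorm ν A * ν v := by
  rcases eq_or_ne v 0 with rfl | hv
  · simp [Matrix.mulVec_zero, nu_zero hν]
  · have hvp : 0 < ν v := nu_pos hν hv
    rw [← div_le_iff₀ hvp]
    refine le_csInf (opNorm_set_nonempty hν A) fun c hc => ?_
    rw [div_le_iff₀ hvp]
    exact hc.2 v

lemma opNorm_mul_le (hν : IsNorm d ν) (A B : Matrix (Fin d) (Fin d) ℂ) :
    opNorm ν (A * B) ≤ opNorm ν A * opNorm ν B := by
  apply opNorm_le (A * B) (mul_nonneg (opNorm_nonneg A) (opNorm_nonneg B))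
  intro v
  rw [← Matrix.mulVec_mulVec]
  calc ν (A.mulVec (B.mulVec v)) ≤ opNorm ν A * ν (B.mulVec v) := le_opNorm hν A _
    _ ≤ opNorm ν A * (opNorm ν B * ν v) :=
        mul_le_mul_of_nonneg_left (le_opNorm hν B v) (opNorm_nonneg A)
    _ = opNorm ν A * opNorm ν B * ν v := (mul_assoc _ _ _).symm

lemma opNorm_zero (hν : IsNorm d ν) : opNorm ν (0 : Matrix (Fin d) (Fin d) ℂ) = 0 :=
  le_antisymm (opNorm_le _ le_rfl fun v => by simp [Matrix.zero_mulVec, nu_zero hν])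
    (opNorm_nonneg 0)

lemma opNorm_one : opNorm ν (1 : Matrix (Fin d) (Fin d) ℂ) ≤ 1 :=
  opNorm_le _ zero_le_one fun v => by simp [Matrix.one_mulVec]

lemma pow_nonempty {𝒜 : Set (Matrix (Fin d) (Fin d) ℂ)} (h : 𝒜.Nonempty) (n : ℕ) :
    (𝒜 ^ n).Nonempty := by
  induction n with
  | zero => exact ⟨1, by rw [pow_zero]; exact Set.mem_one.mpr rfl⟩
  | succ n ih =>
      obtain ⟨P, hP⟩ := ih
      obtain ⟨A, hA⟩ := h
      exact ⟨P * A, by rw [pow_succ]; exact Set.mul_mem_mul hP hA⟩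

lemma opNorm_pow_le (hν : IsNorm d ν) {𝒜 : Set (Matrix (Fin d) (Fin d) ℂ)} {M : ℝ}
    (hM : ∀ A ∈ 𝒜, opNorm ν A ≤ M) (hM0 : 0 ≤ M) (n : ℕ) :
    ∀ P ∈ 𝒜 ^ n, opNorm ν P ≤ M ^ n := by
  induction n with
  | zero =>
      intro P hP
      rw [pow_zero] at hP ⊢
      rw [Set.mem_one.mp hP]
      exact opNorm_one
  | succ n ih =>
      intro P hP
      rw [pow_succ] at hP
      obtain ⟨Q, hQ, A, hA, rfl⟩ := Set.mem_mul.mp hP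
      calc opNorm ν (Q * A) ≤ opNorm ν Q * opNorm ν A := opNorm_mul_le hν Q A
        _ ≤ M ^ n * M := mul_le_mul (ih Q hQ) (hM A hA) (opNorm_nonneg A) (pow_nonneg hM0 n)
        _ = M ^ (n + 1) := (pow_succ M n).symm

lemma le_setNorm (hν : IsNorm d ν) {𝒜 : Set (Matrix (Fin d) (Fin d) ℂ)} {M : ℝ}
    (hM : ∀ A ∈ 𝒜, opNorm ν A ≤ M) (hM0 : 0 ≤ M) {n : ℕ} {P : Matrix (Fin d) (Fin d) ℂ}
    (hP : P ∈ 𝒜 ^ n) : opNorm ν P ≤ setNorm ν (𝒜 ^ n) :=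
  le_csSup ⟨M ^ n, fun _ ⟨Q, hQ, hx⟩ => hx ▸ opNorm_pow_le hν hM hM0 n Q hQ⟩
    (Set.mem_image_of_mem _ hP)

lemma setNorm_nonneg (𝒜 : Set (Matrix (Fin d) (Fin d) ℂ)) : 0 ≤ setNorm ν 𝒜 :=
  Real.sSup_nonneg fun _ ⟨Q, _, hx⟩ => hx ▸ opNorm_nonneg Q

lemma jsr_nonneg (𝒜 : Set (Matrix (Fin d) (Fin d) ℂ)) : 0 ≤ jsr ν 𝒜 :=
  Real.iInf_nonneg fun _ => Real.rpow_nonneg (setNorm_nonneg _) _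

lemma jsr_le_term (𝒜 : Set (Matrix (Fin d) (Fin d) ℂ)) (n : ℕ) (hn : 1 ≤ n) :
    jsr ν 𝒜 ≤ setNorm ν (𝒜 ^ n) ^ ((n : ℝ)⁻¹) := by
  unfold jsr
  refine ciInf_le (f := fun m : {k : ℕ // 1 ≤ k} =>
    setNorm ν (𝒜 ^ (m:ℕ)) ^ (((m:ℕ):ℝ)⁻¹)) ⟨(0:ℝ), ?_⟩ ⟨n, hn⟩
  rintro x ⟨m, rfl⟩
  exact Real.rpow_nonneg (setNorm_nonneg _) _

lemma jsr_eq_zero_of (𝒜 : Set (Matrix (Fin d) (Fin d) ℂ)) {n : ℕ} (hn : 1 ≤ n)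
    (h : setNorm ν (𝒜 ^ n) = 0) : jsr ν 𝒜 = 0 := by
  refine le_antisymm ?_ (jsr_nonneg 𝒜)
  have := jsr_le_term (ν := ν) 𝒜 n hn
  rw [h, Real.zero_rpow (by positivity)] at this
  exact this

/-! ### The kernel filtration -/

/-- Common kernel of all products of length `n`. -/
noncomputable def Kker (𝒜 : Set (Matrix (Fin d) (Fin d) ℂ)) (n : ℕ) :
    Submodule ℂ (Fin d → ℂ) :=
  ⨅ (P : Matrix (Fin d) (Fin d) ℂ) (_ : P ∈ 𝒜 ^ n), LinearMap.ker (Matrix.mulVecLin P)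

variable (𝒜 : Set (Matrix (Fin d) (Fin d) ℂ))

lemma mem_Kker {n : ℕ} {v : Fin d → ℂ} :
    v ∈ Kker 𝒜 n ↔ ∀ P ∈ 𝒜 ^ n, P.mulVec v = 0 := by
  simp [Kker, Submodule.mem_iInf, LinearMap.mem_ker, Matrix.mulVecLin_apply]

lemma mem_Kker_succ {n : ℕ} {v : Fin d → ℂ} :
    v ∈ Kker 𝒜 (n + 1) ↔ ∀ A ∈ 𝒜, A.mulVec v ∈ Kker 𝒜 n := by
  simp only [mem_Kker]
  constructor
  · intro h A hA Q hQ
    rw [Matrix.mulVec_mulVec]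
    exact h _ (by rw [pow_succ]; exact Set.mul_mem_mul hQ hA)
  · intro h P hP
    rw [pow_succ] at hP
    obtain ⟨Q, hQ, A, hA, rfl⟩ := Set.mem_mul.mp hP
    rw [← Matrix.mulVec_mulVec]
    exact h A hA Q hQ

lemma Kker_zero_le (n : ℕ) : Kker 𝒜 0 ≤ Kker 𝒜 n := by
  intro v hv
  rw [mem_Kker] at hv
  have : v = 0 := by
    have := hv 1 (by rw [pow_zero]; exact Set.mem_one.mpr rfl)
    rwa [Matrix.one_mulVec] at this
  rw [this]; exact Submodule.zero_mem _

lemma Kker_mono_succ (n : ℕ) : Kker 𝒜 n ≤ Kker 𝒜 (n + 1) := by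
  induction n with
  | zero => exact Kker_zero_le 𝒜 1
  | succ n ih =>
      intro v hv
      rw [mem_Kker_succ] at hv ⊢
      exact fun A hA => ih (hv A hA)

lemma Kker_congr_succ {n m : ℕ} (h : Kker 𝒜 n = Kker 𝒜 m) :
    Kker 𝒜 (n + 1) = Kker 𝒜 (m + 1) := by
  ext v
  rw [mem_Kker_succ, mem_Kker_succ, h]

lemma Kker_stab {k : ℕ} (h : Kker 𝒜 k = Kker 𝒜 (k + 1)) :
    ∀ m, k ≤ m → Kker 𝒜 m = Kker 𝒜 k := by
  have key : ∀ j, Kker 𝒜 (k + j) = Kker 𝒜 k := by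
    intro j
    induction j with
    | zero => rfl
    | succ j ih =>
        have : Kker 𝒜 (k + j + 1) = Kker 𝒜 (k + 1) := Kker_congr_succ 𝒜 ih
        rw [show k + (j+1) = k + j + 1 from rfl, this, ← h]
  intro m hm
  have : m = k + (m - k) := by omega
  rw [this, key]

/-! ### The key analytic lemma -/

lemma jsr_ne_zero_of_fixed (hν : IsNorm d ν) {𝒜 : Set (Matrix (Fin d) (Fin d) ℂ)}
    (h_ne : 𝒜.Nonempty) {M : ℝ} (hM : ∀ A ∈ 𝒜, opNorm ν A ≤ M)
    {N : Submodule ℂ (Fin d → ℂ)} (hN_top : N ≠ ⊤)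
    (h_fix : ∀ v, (∀ A ∈ 𝒜, A.mulVec v ∈ N) ↔ v ∈ N) :
    jsr ν 𝒜 ≠ 0 := by
  classical
  have hM0 : 0 ≤ M := by
    obtain ⟨A0, hA0⟩ := h_ne
    exact (opNorm_nonneg A0).trans (hM A0 hA0)
  obtain ⟨a, ha0, ha⟩ := nu_lower hν
  obtain ⟨b, hb0, hb⟩ := nu_upper hν
  haveI : IsClosed (N : Set (Fin d → ℂ)) := Submodule.closed_of_finiteDimensional N
  set Q := (Fin d → ℂ) ⧸ N with hQ
  have h_inv : ∀ A ∈ 𝒜, ∀ v ∈ N, A.mulVec v ∈ N := fun A hA v hv => (h_fix v).2 hv A hA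
  haveI : Nonempty ↥𝒜 := h_ne.to_subtype
  set LL : ↥𝒜 → Q →ₗ[ℂ] Q := fun A =>
    Submodule.mapQ N N (Matrix.mulVecLin A.1) (fun v hv => h_inv A.1 A.2 v hv) with hLL
  have hLL_mk : ∀ (A : ↥𝒜) (w : Fin d → ℂ),
      LL A (Submodule.Quotient.mk w) = Submodule.Quotient.mk (A.1.mulVec w) := by
    intro A w
    rfl
  set C := a⁻¹ * (M * b) with hC
  have hC0 : 0 ≤ C := by positivity
  have hLmk : ∀ (A : ↥𝒜) (w : Fin d → ℂ), ‖LL A (Submodule.Quotient.mk w)‖ ≤ C * ‖w‖ := by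
    intro A w
    rw [hLL_mk]
    calc ‖(Submodule.Quotient.mk (A.1.mulVec w) : Q)‖ ≤ ‖A.1.mulVec w‖ :=
          Submodule.Quotient.norm_mk_le N _
      _ ≤ a⁻¹ * ν (A.1.mulVec w) := by
          rw [le_inv_mul_iff₀ ha0]; exact ha _
      _ ≤ a⁻¹ * (opNorm ν A.1 * ν w) := by
          apply mul_le_mul_of_nonneg_left (le_opNorm hν A.1 w) (by positivity)
      _ ≤ a⁻¹ * (M * (b * ‖w‖)) := by
          apply mul_le_mul_of_nonneg_left _ (by positivity)
          apply mul_le_mul (hM A.1 A.2) (hb w) (hν.nonneg w) hM0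
      _ = C * ‖w‖ := by rw [hC]; ring
  have hLx : ∀ (A : ↥𝒜) (x : Q), ‖LL A x‖ ≤ C * ‖x‖ := by
    intro A x
    refine le_of_forall_pos_le_add fun ε hε => ?_
    have hCε : 0 < ε / (C + 1) := by positivity
    obtain ⟨w, hw_mk, hw_norm⟩ := Submodule.Quotient.norm_mk_lt x hCε
    calc ‖LL A x‖ = ‖LL A (Submodule.Quotient.mk w)‖ := by rw [hw_mk]
      _ ≤ C * ‖w‖ := hLmk A w
      _ ≤ C * (‖x‖ + ε / (C + 1)) := mul_le_mul_of_nonneg_left (by linarith) hC0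
      _ ≤ C * ‖x‖ + ε := by
          have h1 : C * (ε / (C + 1)) ≤ ε := by
            rw [div_eq_inv_mul]
            have : C / (C + 1) ≤ 1 := by
              rw [div_le_one (by linarith)]; linarith
            calc C * ((C+1)⁻¹ * ε) = (C / (C+1)) * ε := by ring
              _ ≤ 1 * ε := mul_le_mul_of_nonneg_right this hε.le
              _ = ε := one_mul ε
          nlinarith
  set s : Q → ℝ := fun x => sSup (Set.range fun A : ↥𝒜 => ‖LL A x‖) with hs
  have hrange_bdd : ∀ x : Q, BddAbove (Set.range fun A : ↥𝒜 => ‖LL A x‖) := by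
    intro x
    exact ⟨C * ‖x‖, by rintro y ⟨A, rfl⟩; exact hLx A x⟩
  have hs_le : ∀ (x : Q) (A : ↥𝒜), ‖LL A x‖ ≤ s x := by
    intro x A
    exact le_csSup (hrange_bdd x) ⟨A, rfl⟩
  have hs_nonneg : ∀ x : Q, 0 ≤ s x :=
    fun x => (norm_nonneg _).trans (hs_le x (Classical.arbitrary _))
  have hs_sub : ∀ x y : Q, s x - s y ≤ C * ‖x - y‖ := by
    intro x y
    rw [sub_le_iff_le_add]
    refine csSup_le (Set.range_nonempty _) ?_
    rintro z ⟨A, rfl⟩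
    have h1 : ‖LL A x‖ ≤ ‖LL A y‖ + ‖LL A (x - y)‖ := by
      calc ‖LL A x‖ = ‖LL A y + LL A (x - y)‖ := by rw [← map_add, add_sub_cancel]
        _ ≤ ‖LL A y‖ + ‖LL A (x - y)‖ := norm_add_le _ _
    calc ‖LL A x‖ ≤ ‖LL A y‖ + ‖LL A (x - y)‖ := h1
      _ ≤ C * ‖x - y‖ + s y := by
          have := hs_le y A
          have := hLx A (x - y)
          linarith
  have hs_cont : Continuous s := by
    have : LipschitzWith C.toNNReal s := by
      apply LipschitzWith.of_dist_le_mul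
      intro x y
      rw [Real.dist_eq, Real.coe_toNNReal C hC0, dist_eq_norm]
      rcases abs_cases (s x - s y) with ⟨h, _⟩ | ⟨h, _⟩
      · rw [h]; exact hs_sub x y
      · rw [h]; have := hs_sub y x; rw [norm_sub_rev] at this; linarith
    exact this.continuous
  have hs_zero : ∀ x : Q, s x = 0 → x = 0 := by
    intro x hx
    obtain ⟨v, rfl⟩ := Submodule.Quotient.mk_surjective N x
    rw [show (0 : Q) = Submodule.Quotient.mk 0 from rfl]
    rw [Submodule.Quotient.eq]
    simp only [sub_zero]
    apply (h_fix v).1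
    intro A hA
    have h1 := hs_le (Submodule.Quotient.mk v) ⟨A, hA⟩
    rw [hx] at h1
    have h2 : LL ⟨A, hA⟩ (Submodule.Quotient.mk v) = 0 :=
      norm_le_zero_iff.mp h1
    rw [hLL_mk] at h2
    exact (Submodule.Quotient.mk_eq_zero N).mp h2
  haveI : Nontrivial Q := Submodule.Quotient.nontrivial_iff.mpr hN_top
  have hcomp : IsCompact (Metric.sphere (0 : Q) 1) := isCompact_sphere 0 1
  have hne_sph : (Metric.sphere (0 : Q) 1).Nonempty := NormedSpace.sphere_nonempty.mpr zero_le_one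
  obtain ⟨u, hu_mem, hu_min⟩ := hcomp.exists_isMinOn hne_sph hs_cont.continuousOn
  have hu_norm : ‖u‖ = 1 := by simpa using mem_sphere_iff_norm.mp hu_mem
  have hu_ne : u ≠ 0 := by intro h; rw [h] at hu_norm; simp at hu_norm
  set c := s u with hc
  have hc0 : 0 < c := by
    rcases lt_or_eq_of_le (hs_nonneg u) with h | h
    · exact h
    · exact absurd (hs_zero u h.symm) hu_ne
  have hsel : ∀ x : Q, x ≠ 0 → ∃ A : ↥𝒜, c / 2 * ‖x‖ ≤ ‖LL A x‖ := by
    intro x hx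
    have hxn : (0:ℝ) < ‖x‖ := norm_pos_iff.mpr hx
    set u' : Q := ((‖x‖⁻¹ : ℝ) : ℂ) • x with hu'
    have hns1 := norm_smul (α := ℂ) (β := Q) ((‖x‖⁻¹ : ℝ) : ℂ) x
    have hu'_norm : ‖u'‖ = 1 := by
      rw [hu', hns1, Complex.norm_real, Real.norm_eq_abs,
        abs_of_pos (inv_pos.mpr hxn), inv_mul_cancel₀ hxn.ne']
    have hu'_mem : u' ∈ Metric.sphere (0 : Q) 1 := by
      simp [mem_sphere_iff_norm, hu'_norm]
    have h1 : c ≤ s u' := isMinOn_iff.mp hu_min _ hu'_mem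
    have h2 : c / 2 < s u' := by linarith
    obtain ⟨z, ⟨A, rfl⟩, hz⟩ := exists_lt_of_lt_csSup (Set.range_nonempty _) h2
    have hz' : c / 2 < ‖LL A u'‖ := hz
    refine ⟨A, ?_⟩
    have h3 : LL A u' = ((‖x‖⁻¹ : ℝ) : ℂ) • LL A x := by
      rw [hu', map_smul]
    have hns2 := norm_smul (α := ℂ) (β := Q) ((‖x‖⁻¹ : ℝ) : ℂ) (LL A x)
    have h4 : ‖LL A u'‖ = ‖x‖⁻¹ * ‖LL A x‖ := by
      rw [h3, hns2, Complex.norm_real, Real.norm_eq_abs, abs_of_pos (inv_pos.mpr hxn)]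
    rw [h4] at hz'
    rename' hz' => hz
    calc c / 2 * ‖x‖ ≤ ‖x‖⁻¹ * ‖LL A x‖ * ‖x‖ := mul_le_mul_of_nonneg_right hz.le hxn.le
      _ = ‖LL A x‖ := by field_simp
  obtain ⟨x₀, hx₀⟩ := exists_ne (0 : Q)
  obtain ⟨v₀, hv₀⟩ := Submodule.Quotient.mk_surjective N x₀
  have hx₀n : (0:ℝ) < ‖x₀‖ := norm_pos_iff.mpr hx₀
  have hv₀ne : v₀ ≠ 0 := by
    intro h; apply hx₀; rw [← hv₀, h]; rfl
  have hνv₀ : 0 < ν v₀ := nu_pos hν hv₀ne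
  have claim : ∀ n : ℕ, ∃ P ∈ 𝒜 ^ n,
      (c/2)^n * ‖x₀‖ ≤ ‖(Submodule.Quotient.mk (P.mulVec v₀) : Q)‖ := by
    intro n
    induction n with
    | zero =>
        refine ⟨1, by rw [pow_zero]; exact Set.mem_one.mpr rfl, ?_⟩
        rw [Matrix.one_mulVec, hv₀, pow_zero, one_mul]
    | succ n ih =>
        obtain ⟨P, hP, hPbd⟩ := ih
        set y : Q := Submodule.Quotient.mk (P.mulVec v₀) with hy
        have hy0 : y ≠ 0 := by
          intro h
          rw [h, norm_zero] at hPbd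
          nlinarith [pow_pos (by linarith : (0:ℝ) < c/2) n]
        obtain ⟨A, hA⟩ := hsel y hy0
        refine ⟨A.1 * P, by rw [pow_succ']; exact Set.mul_mem_mul A.2 hP, ?_⟩
        have h5 : LL A y = Submodule.Quotient.mk ((A.1 * P).mulVec v₀) := by
          rw [hy, hLL_mk, Matrix.mulVec_mulVec]
        calc (c/2)^(n+1) * ‖x₀‖ = (c/2) * ((c/2)^n * ‖x₀‖) := by ring
          _ ≤ (c/2) * ‖y‖ := mul_le_mul_of_nonneg_left hPbd (by linarith)
          _ ≤ ‖LL A y‖ := hA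
          _ = ‖(Submodule.Quotient.mk ((A.1 * P).mulVec v₀) : Q)‖ := by rw [h5]
  set r := a * ‖x₀‖ / ν v₀ with hr
  have hr0 : 0 < r := by positivity
  have hterm : ∀ n : ℕ, 1 ≤ n → r * (c/2)^n ≤ setNorm ν (𝒜 ^ n) := by
    intro n _
    obtain ⟨P, hP, hPbd⟩ := claim n
    have h6 : a * ‖(Submodule.Quotient.mk (P.mulVec v₀) : Q)‖ ≤ opNorm ν P * ν v₀ := by
      calc a * ‖(Submodule.Quotient.mk (P.mulVec v₀) : Q)‖ ≤ a * ‖P.mulVec v₀‖ :=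
            mul_le_mul_of_nonneg_left (Submodule.Quotient.norm_mk_le N _) ha0.le
        _ ≤ ν (P.mulVec v₀) := ha _
        _ ≤ opNorm ν P * ν v₀ := le_opNorm hν P v₀
    have h7 : r * (c/2)^n ≤ opNorm ν P := by
      rw [hr, div_mul_eq_mul_div, div_le_iff₀ hνv₀]
      nlinarith [mul_le_mul_of_nonneg_left hPbd ha0.le]
    exact h7.trans (le_setNorm hν hM hM0 hP)
  intro hjsr
  have hcp : 0 < c / 2 := by linarith
  set ε := min r 1 * (c/2) with hε
  have hε0 : 0 < ε := by
    apply mul_pos (lt_min hr0 one_pos) hcp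
  have hjsr_ge : ε ≤ jsr ν 𝒜 := by
    rw [jsr]
    refine le_ciInf fun ⟨n, hn⟩ => ?_
    have hn0 : (0:ℝ) < (n:ℝ) := by exact_mod_cast hn
    have h9 : (r * (c/2)^n) ^ ((n:ℝ)⁻¹) ≤ setNorm ν (𝒜 ^ n) ^ ((n:ℝ)⁻¹) :=
      Real.rpow_le_rpow (by positivity) (hterm n hn) (by positivity)
    refine le_trans ?_ h9
    rw [Real.mul_rpow hr0.le (by positivity), ← Real.rpow_natCast (c/2) n,
      ← Real.rpow_mul hcp.le, mul_inv_cancel₀ hn0.ne', Real.rpow_one]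
    apply mul_le_mul_of_nonneg_right _ hcp.le
    rcases le_total 1 r with h | h
    · calc min r 1 ≤ 1 := min_le_right _ _
        _ = r ^ (0:ℝ) := (Real.rpow_zero r).symm
        _ ≤ r ^ ((n:ℝ)⁻¹) := Real.rpow_le_rpow_of_exponent_le h (by positivity)
    · calc min r 1 ≤ r := min_le_left _ _
        _ = r ^ (1:ℝ) := (Real.rpow_one r).symm
        _ ≤ r ^ ((n:ℝ)⁻¹) := by
            apply Real.rpow_le_rpow_of_exponent_ge hr0 h
            rw [inv_le_one_iff₀]
            right; exact_mod_cast hn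
  rw [hjsr] at hjsr_ge
  linarith

end Aux

/-- `ρ(𝒜) = 0` if and only if `𝒜^d = {0}`, i.e. the matrix set `𝒜` is nilpotent. -/
theorem jsr_eq_zero_iff_nilpotent
    (d : ℕ)
    (𝒜 : Set (Matrix (Fin d) (Fin d) ℂ)) (h_ne : 𝒜.Nonempty)
    (ν : (Fin d → ℂ) → ℝ) (hν : IsNorm d ν)
    (h_bdd : ∃ M : ℝ, ∀ A ∈ 𝒜, opNorm ν A ≤ M) :
    jsr ν 𝒜 = 0 ↔ 𝒜 ^ d = ({0} : Set (Matrix (Fin d) (Fin d) ℂ)) := by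
  constructor
  · intro hjsr
    rcases Nat.eq_zero_or_pos d with hd | hd
    · subst hd
      rw [pow_zero]
      ext P
      simp only [Set.mem_one, Set.mem_singleton_iff]
      constructor
      · intro _; exact Subsingleton.elim _ _
      · intro _; exact Subsingleton.elim _ _
    · obtain ⟨M, hM⟩ := h_bdd
      have hKtop : Kker 𝒜 d = ⊤ := by
        by_contra hKd
        have hstrict : ∃ k, k < d ∧ Kker 𝒜 k = Kker 𝒜 (k+1) := by
          by_contra hall
          push_neg at hall
          have hdim : ∀ k, k ≤ d → k ≤ Module.finrank ℂ (Kker 𝒜 k) := by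
            intro k
            induction k with
            | zero => intro _; exact Nat.zero_le _
            | succ k ih =>
                intro hk
                have hklt : k < d := by omega
                have hlt : Kker 𝒜 k < Kker 𝒜 (k+1) :=
                  lt_of_le_of_ne (Kker_mono_succ 𝒜 k) (hall k hklt)
                have := Submodule.finrank_lt_finrank_of_lt hlt
                have := ih (by omega)
                omega
          have h2 := hdim d le_rfl
          have h3 : Module.finrank ℂ (Kker 𝒜 d) ≤ Module.finrank ℂ (Fin d → ℂ) :=
            Submodule.finrank_le _
          have h4 : Module.finrank ℂ (Fin d → ℂ) = d := by
            simp [Module.finrank_pi]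
          apply hKd
          apply Submodule.eq_top_of_finrank_eq
          omega
        obtain ⟨k, hkd, hkeq⟩ := hstrict
        have hstab := Kker_stab 𝒜 hkeq
        have hKdk : Kker 𝒜 d = Kker 𝒜 k := hstab d (le_of_lt hkd)
        have hN_top : Kker 𝒜 k ≠ ⊤ := fun h => hKd (hKdk.trans h)
        have h_fix : ∀ v, (∀ A ∈ 𝒜, A.mulVec v ∈ Kker 𝒜 k) ↔ v ∈ Kker 𝒜 k := by
          intro v
          constructor
          · intro h
            rw [hkeq]
            exact (mem_Kker_succ 𝒜).mpr h
          · intro h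
            rw [hkeq] at h
            exact (mem_Kker_succ 𝒜).mp h
        exact jsr_ne_zero_of_fixed hν h_ne hM hN_top h_fix hjsr
      refine Set.eq_singleton_iff_nonempty_unique_mem.mpr ⟨pow_nonempty h_ne d, ?_⟩
      intro P hP
      have hPv : ∀ v, P.mulVec v = 0 := by
        intro v
        have hv : v ∈ Kker 𝒜 d := by rw [hKtop]; trivial
        exact (mem_Kker 𝒜).mp hv P hP
      ext i j
      have := congrFun (hPv (Pi.single j 1)) i
      rw [Matrix.mulVec_single] at this
      simpa using this
  · intro h0
    rcases Nat.eq_zero_or_pos d with hd | hd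
    · subst hd
      refine jsr_eq_zero_of 𝒜 le_rfl (n := 1) ?_
      have hop : ∀ A : Matrix (Fin 0) (Fin 0) ℂ, opNorm ν A = 0 := by
        intro A
        refine le_antisymm (opNorm_le _ le_rfl fun v => ?_) (opNorm_nonneg _)
        have h1 : A.mulVec v = 0 := Subsingleton.elim _ _
        rw [h1, nu_zero hν, zero_mul]
      refine le_antisymm (Real.sSup_le ?_ le_rfl) (setNorm_nonneg _)
      rintro x ⟨Q, _, rfl⟩
      exact le_of_eq (hop Q)
    · refine jsr_eq_zero_of 𝒜 hd (n := d) ?_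
      rw [h0]
      unfold setNorm
      rw [Set.image_singleton, csSup_singleton, opNorm_zero hν]
end

section
/- Let d ≥ 3 and let n ≥ 1 be an integer with base-d representation n = Σ_{j=0}^{k} n_j d^j, where 0 ≤ n_j ≤ d−1 and n_k ≥ 1. Then Σ_{j=0}^{k} n_j Σ_{i=0}^{j} (d−1)^i ≤ ((d−1)^3/(d−2)^2) · n^{ln(d−1)/ln d} and Σ_{j=0}^{k} n_j (d−1)^j ≤ ((d−1)^2/(d−2)) · n^{ln(d−1)/ln d}. -/
/-- If `d ≥ 3` and `n = Σ_{j≤k} n_j d^j` is the base-`d` representation of `n ≥ 1`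
(digits `0 ≤ n_j ≤ d-1`, leading digit `n_k ≥ 1`), then
`Σ_j n_j Σ_{i≤j} (d-1)^i ≤ ((d-1)³/(d-2)²)·n^{ln(d-1)/ln d}` and
`Σ_j n_j (d-1)^j ≤ ((d-1)²/(d-2))·n^{ln(d-1)/ln d}`. -/
theorem base_d_digit_sums_bound
    (d : ℕ) (hd : 3 ≤ d)
    (n k : ℕ) (hn : 1 ≤ n) (dig : ℕ → ℕ)
    (h_rep : n = ∑ j ∈ Finset.range (k + 1), dig j * d ^ j)
    (h_dig : ∀ j ≤ k, dig j ≤ d - 1)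
    (h_lead : 1 ≤ dig k) :
    ((∑ j ∈ Finset.range (k + 1), dig j * ∑ i ∈ Finset.range (j + 1), (d - 1) ^ i : ℕ) : ℝ) ≤
        ((d - 1 : ℝ) ^ 3 / (d - 2 : ℝ) ^ 2) * (n : ℝ) ^ (Real.log (d - 1) / Real.log d)
      ∧ ((∑ j ∈ Finset.range (k + 1), dig j * (d - 1) ^ j : ℕ) : ℝ) ≤
        ((d - 1 : ℝ) ^ 2 / (d - 2 : ℝ)) * (n : ℝ) ^ (Real.log (d - 1) / Real.log d) := by
  have hd1 : (1:ℕ) ≤ d := by omega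
  have hdR : (3:ℝ) ≤ (d:ℝ) := by exact_mod_cast hd
  set E : ℝ := (d:ℝ) - 1 with hE
  have hE2 : (2:ℝ) ≤ E := by simp only [hE]; linarith
  have hE1 : (1:ℝ) < E := by linarith
  have hEpos : (0:ℝ) < E := by linarith
  have hE1pos : (0:ℝ) < E - 1 := by linarith
  have hcast : ((d-1:ℕ):ℝ) = E := by
    rw [Nat.cast_sub hd1]; simp [hE]
  set α : ℝ := Real.log E / Real.log d with hα
  have hlogd : 0 < Real.log d := Real.log_pos (by linarith)
  have hα0 : 0 ≤ α := div_nonneg (Real.log_nonneg (by linarith)) hlogd.le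
  -- n ≥ d^k
  have hdk : d ^ k ≤ n := by
    rw [h_rep]
    calc d ^ k ≤ dig k * d ^ k := Nat.le_mul_of_pos_left _ h_lead
    _ ≤ _ := Finset.single_le_sum (f := fun j => dig j * d ^ j)
          (fun i _ => Nat.zero_le _) (Finset.self_mem_range_succ k)
  have hkey : E ^ k ≤ (n:ℝ) ^ α := by
    have h1 : ((d:ℝ) ^ k) ^ α ≤ (n:ℝ) ^ α :=
      Real.rpow_le_rpow (by positivity) (by exact_mod_cast hdk) hα0
    have h2 : ((d:ℝ) ^ k) ^ α = E ^ k := by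
      rw [← Real.rpow_natCast ((d:ℝ)) k, ← Real.rpow_mul (by linarith : (0:ℝ) ≤ d),
        Real.rpow_def_of_pos (by linarith : (0:ℝ) < d)]
      have hαd : α * Real.log d = Real.log E := by
        rw [hα]; field_simp
      rw [show Real.log d * ((k:ℝ) * α) = (k:ℝ) * Real.log E by rw [← hαd]; ring]
      rw [Real.exp_nat_mul, Real.exp_log hEpos]
    rw [← h2]; exact h1
  have hgeom : ∀ m : ℕ, ∑ i ∈ Finset.range m, E ^ i ≤ E ^ m / (E - 1) := by
    intro m
    rw [geom_sum_eq (by linarith : E ≠ 1)]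
    gcongr
    linarith
  have hdig' : ∀ j ∈ Finset.range (k+1), (dig j : ℝ) ≤ E := by
    intro j hj
    rw [← hcast]
    exact_mod_cast h_dig j (Nat.lt_succ_iff.mp (Finset.mem_range.mp hj))
  constructor
  · -- first sum
    have step : ((∑ j ∈ Finset.range (k + 1), dig j * ∑ i ∈ Finset.range (j + 1), (d - 1) ^ i : ℕ) : ℝ)
        ≤ E ^ 3 / (E - 1) ^ 2 * E ^ k := by
      push_cast [hcast]
      calc ∑ j ∈ Finset.range (k+1), (dig j : ℝ) * ∑ i ∈ Finset.range (j+1), E ^ i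
          ≤ ∑ j ∈ Finset.range (k+1), E * (E ^ (j+1) / (E - 1)) := by
            apply Finset.sum_le_sum
            intro j hj
            have h1 := hgeom (j+1)
            have h2 := hdig' j hj
            have h3 : (0:ℝ) ≤ ∑ i ∈ Finset.range (j+1), E ^ i := by positivity
            exact mul_le_mul h2 h1 h3 hEpos.le
        _ = E ^ 2 / (E - 1) * ∑ j ∈ Finset.range (k+1), E ^ j := by
            rw [Finset.mul_sum]
            apply Finset.sum_congr rfl
            intro j hj
            rw [pow_succ]
            field_simp
        _ ≤ E ^ 2 / (E - 1) * (E ^ (k+1) / (E - 1)) := by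
            have := hgeom (k+1)
            gcongr
        _ = E ^ 3 / (E - 1) ^ 2 * E ^ k := by
            rw [pow_succ]
            field_simp
            ring
    refine step.trans ?_
    have hd2E : (d:ℝ) - 2 = E - 1 := by rw [hE]; ring
    rw [hE, hd2E, hE]
    have : (0:ℝ) ≤ ((d:ℝ)-1) ^ 3 / (E - 1) ^ 2 := by positivity
    calc ((d:ℝ)-1) ^ 3 / (E-1) ^ 2 * E ^ k ≤ ((d:ℝ)-1) ^ 3 / (E-1) ^ 2 * (n:ℝ) ^ α := by
          gcongr
      _ = _ := by rw [hE]
  · have step : ((∑ j ∈ Finset.range (k + 1), dig j * (d - 1) ^ j : ℕ) : ℝ)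
        ≤ E ^ 2 / (E - 1) * E ^ k := by
      push_cast [hcast]
      calc ∑ j ∈ Finset.range (k+1), (dig j : ℝ) * E ^ j
          ≤ ∑ j ∈ Finset.range (k+1), E * E ^ j := by
            apply Finset.sum_le_sum
            intro j hj
            exact mul_le_mul_of_nonneg_right (hdig' j hj) (by positivity)
        _ = E * ∑ j ∈ Finset.range (k+1), E ^ j := by rw [Finset.mul_sum]
        _ ≤ E * (E ^ (k+1) / (E - 1)) := by
            have := hgeom (k+1)
            gcongr
        _ = E ^ 2 / (E - 1) * E ^ k := by
            rw [pow_succ]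
            field_simp
    refine step.trans ?_
    have hd2E : (d:ℝ) - 2 = E - 1 := by rw [hE]; ring
    rw [hE, hd2E]
    calc ((d:ℝ)-1) ^ 2 / (E-1) * E ^ k ≤ ((d:ℝ)-1) ^ 2 / (E-1) * (n:ℝ) ^ α := by
          gcongr
      _ = _ := by rw [hE]
end

section
/- Let d ≥ 1, let 𝒜 be a nonempty bounded set of complex d×d matrices, let ‖·‖_e denote the operator norm on matrices induced by the Euclidean norm on ℂ^d, and let S be an invertible complex d×d matrix. Then ‖S 𝒜^d S^{-1}‖_e ≤ d^d · ‖𝒜‖_e · ‖S 𝒜 S^{-1}‖_e^{d-1}, where S 𝒜^n S^{-1} = {S B S^{-1} : B ∈ 𝒜^n} and the norm of a set of matrices is the supremum of the norms of its elements. -/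
open scoped Pointwise

/-- The Euclidean norm on `ℂ^d`. -/
noncomputable def euclNorm (d : ℕ) (v : Fin d → ℂ) : ℝ :=
  Real.sqrt (∑ i, ‖v i‖ ^ 2)

section EuclAuxSection
open Matrix
open scoped ComplexOrder
namespace EuclAux
variable {d : ℕ}

lemma euclNorm_nonneg (v : Fin d → ℂ) : 0 ≤ euclNorm d v := Real.sqrt_nonneg _

lemma abs_le_euclNorm (v : Fin d → ℂ) (i : Fin d) : ‖v i‖ ≤ euclNorm d v := by
  rw [euclNorm]
  rw [show ‖v i‖ = Real.sqrt (‖v i‖ ^ 2) by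
    rw [Real.sqrt_sq (norm_nonneg _)]]
  exact Real.sqrt_le_sqrt (Finset.single_le_sum (f := fun j => ‖v j‖ ^ 2)
    (fun j _ => sq_nonneg _) (Finset.mem_univ i))

/-- Frobenius-type bound: `ν (A v) ≤ frob A * ν v`. -/
lemma mulVec_euclNorm_le (A : Matrix (Fin d) (Fin d) ℂ) (v : Fin d → ℂ) :
    euclNorm d (A.mulVec v) ≤ Real.sqrt (∑ i, ∑ j, ‖A i j‖ ^ 2) * euclNorm d v := by
  rw [euclNorm, euclNorm, ← Real.sqrt_mul (by positivity)]
  apply Real.sqrt_le_sqrt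
  rw [Finset.sum_mul]
  apply Finset.sum_le_sum
  intro i _
  have h1 : ‖A.mulVec v i‖ ≤ ∑ j, ‖A i j‖ * ‖v j‖ := by
    rw [Matrix.mulVec, dotProduct]
    refine le_trans (norm_sum_le _ _) (le_of_eq ?_)
    exact Finset.sum_congr rfl fun j _ => norm_mul _ _
  calc ‖A.mulVec v i‖ ^ 2
      ≤ (∑ j, ‖A i j‖ * ‖v j‖) ^ 2 := by
        apply pow_le_pow_left₀ (norm_nonneg _) h1
    _ ≤ (∑ j, ‖A i j‖ ^ 2) * ∑ j, ‖v j‖ ^ 2 :=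
        Finset.sum_mul_sq_le_sq_mul_sq _ _ _

lemma opNorm_mem (A : Matrix (Fin d) (Fin d) ℂ) :
    opNorm (euclNorm d) A ∈ {c : ℝ | 0 ≤ c ∧ ∀ v, euclNorm d (A.mulVec v) ≤ c * euclNorm d v} := by
  have hcl : IsClosed {c : ℝ | 0 ≤ c ∧ ∀ v, euclNorm d (A.mulVec v) ≤ c * euclNorm d v} := by
    have : {c : ℝ | 0 ≤ c ∧ ∀ v, euclNorm d (A.mulVec v) ≤ c * euclNorm d v}
        = {c : ℝ | 0 ≤ c} ∩ ⋂ v, {c : ℝ | euclNorm d (A.mulVec v) ≤ c * euclNorm d v} := by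
      ext c; simp [Set.mem_iInter]
    rw [this]
    exact (isClosed_le continuous_const continuous_id).inter
      (isClosed_iInter fun v => isClosed_le continuous_const (continuous_id.mul continuous_const))
  apply hcl.csInf_mem
  · exact ⟨_, ⟨Real.sqrt_nonneg _, mulVec_euclNorm_le A⟩⟩
  · exact ⟨0, fun x hx => hx.1⟩

lemma opNorm_nonneg (A : Matrix (Fin d) (Fin d) ℂ) : 0 ≤ opNorm (euclNorm d) A :=
  (opNorm_mem A).1

lemma opNorm_spec (A : Matrix (Fin d) (Fin d) ℂ) (v : Fin d → ℂ) :
    euclNorm d (A.mulVec v) ≤ opNorm (euclNorm d) A * euclNorm d v :=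
  (opNorm_mem A).2 v

lemma opNorm_le {A : Matrix (Fin d) (Fin d) ℂ} {c : ℝ} (h0 : 0 ≤ c)
    (h : ∀ v, euclNorm d (A.mulVec v) ≤ c * euclNorm d v) : opNorm (euclNorm d) A ≤ c :=
  csInf_le ⟨0, fun x hx => hx.1⟩ ⟨h0, h⟩

lemma opNorm_mul_le (A B : Matrix (Fin d) (Fin d) ℂ) :
    opNorm (euclNorm d) (A * B) ≤ opNorm (euclNorm d) A * opNorm (euclNorm d) B := by
  apply opNorm_le (mul_nonneg (opNorm_nonneg A) (opNorm_nonneg B))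
  intro v
  rw [← Matrix.mulVec_mulVec]
  calc euclNorm d (A.mulVec (B.mulVec v)) ≤ opNorm (euclNorm d) A * euclNorm d (B.mulVec v) :=
        opNorm_spec A _
    _ ≤ opNorm (euclNorm d) A * (opNorm (euclNorm d) B * euclNorm d v) := by
        exact mul_le_mul_of_nonneg_left (opNorm_spec B v) (opNorm_nonneg A)
    _ = _ := by ring

lemma opNorm_one : opNorm (euclNorm d) (1 : Matrix (Fin d) (Fin d) ℂ) ≤ 1 := by
  apply opNorm_le zero_le_one
  intro v
  simp [Matrix.one_mulVec]

lemma euclNorm_single (j : Fin d) : euclNorm d (Pi.single j 1) = 1 := by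
  rw [euclNorm]
  have h1 : (∑ i, ‖(Pi.single j 1 : Fin d → ℂ) i‖ ^ 2) = 1 := by
    rw [Finset.sum_eq_single j]
    · simp
    · intro b _ hb; simp [Pi.single_apply, hb]
    · simp
  rw [h1, Real.sqrt_one]

lemma entry_le_opNorm (A : Matrix (Fin d) (Fin d) ℂ) (i j : Fin d) :
    ‖A i j‖ ≤ opNorm (euclNorm d) A := by
  have h := opNorm_spec A (Pi.single j 1)
  rw [euclNorm_single, mul_one] at h
  refine le_trans ?_ h
  have : A.mulVec (Pi.single j 1) i = A i j := by
    rw [Matrix.mulVec_single]; simp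
  rw [← this]
  exact abs_le_euclNorm _ i

lemma opNorm_le_of_entries {A : Matrix (Fin d) (Fin d) ℂ} {K : ℝ} (hK : 0 ≤ K)
    (h : ∀ i j, ‖A i j‖ ≤ K) : opNorm (euclNorm d) A ≤ (d : ℝ) * K := by
  apply opNorm_le (by positivity)
  intro v
  refine le_trans (mulVec_euclNorm_le A v) (mul_le_mul_of_nonneg_right ?_ (euclNorm_nonneg v))
  rw [show (d : ℝ) * K = Real.sqrt (((d:ℝ) * K) ^ 2) by rw [Real.sqrt_sq (by positivity)]]
  apply Real.sqrt_le_sqrt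
  calc (∑ i, ∑ j, ‖A i j‖ ^ 2) ≤ ∑ _i : Fin d, ∑ _j : Fin d, K ^ 2 := by
        refine Finset.sum_le_sum fun i _ => Finset.sum_le_sum fun j _ => ?_
        exact pow_le_pow_left₀ (norm_nonneg _) (h i j) 2
    _ = ((d:ℝ) * K) ^ 2 := by simp [Finset.sum_const]; ring


lemma euclNorm_mulVec_of_unitary {U : Matrix (Fin d) (Fin d) ℂ} (hU : Uᴴ * U = 1)
    (v : Fin d → ℂ) : euclNorm d (U.mulVec v) = euclNorm d v := by
  have key : ∀ w : Fin d → ℂ,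
      ((∑ i, ‖w i‖ ^ 2 : ℝ) : ℂ) = dotProduct (star w) w := by
    intro w
    rw [dotProduct]
    push_cast
    refine Finset.sum_congr rfl fun i _ => ?_
    rw [Pi.star_apply, Complex.star_def, ← Complex.ofReal_pow, ← Complex.normSq_eq_norm_sq,
      Complex.normSq_eq_conj_mul_self]
  have h2 : dotProduct (star (U.mulVec v)) (U.mulVec v) = dotProduct (star v) v := by
    rw [Matrix.star_mulVec, Matrix.dotProduct_mulVec, Matrix.vecMul_vecMul, hU,
      Matrix.vecMul_one]
  have h3 : (∑ i, ‖U.mulVec v i‖ ^ 2) = ∑ i, ‖v i‖ ^ 2 := by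
    have := (key (U.mulVec v)).trans (h2.trans (key v).symm)
    exact_mod_cast this
  rw [euclNorm, euclNorm, h3]

lemma opNorm_unitary_left {U : Matrix (Fin d) (Fin d) ℂ} (hU : Uᴴ * U = 1)
    (A : Matrix (Fin d) (Fin d) ℂ) :
    opNorm (euclNorm d) (U * A) = opNorm (euclNorm d) A := by
  unfold opNorm
  congr 1
  ext c
  have : ∀ v, euclNorm d ((U * A).mulVec v) = euclNorm d (A.mulVec v) := by
    intro v
    rw [← Matrix.mulVec_mulVec, euclNorm_mulVec_of_unitary hU]
  simp only [Set.mem_setOf_eq, this]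

lemma opNorm_unitary_right {U : Matrix (Fin d) (Fin d) ℂ} (hU : Uᴴ * U = 1)
    (A : Matrix (Fin d) (Fin d) ℂ) :
    opNorm (euclNorm d) (A * U) = opNorm (euclNorm d) A := by
  have hU' : U * Uᴴ = 1 := mul_eq_one_comm.mp hU
  have hUH : (Uᴴ)ᴴ * Uᴴ = 1 := by rw [Matrix.conjTranspose_conjTranspose]; exact hU'
  unfold opNorm
  congr 1
  ext c
  simp only [Set.mem_setOf_eq]
  constructor
  · rintro ⟨h0, h⟩
    refine ⟨h0, fun w => ?_⟩
    have := h (Uᴴ.mulVec w)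
    rw [Matrix.mulVec_mulVec, Matrix.mul_assoc, hU', Matrix.mul_one,
      euclNorm_mulVec_of_unitary hUH] at this
    exact this
  · rintro ⟨h0, h⟩
    refine ⟨h0, fun v => ?_⟩
    rw [← Matrix.mulVec_mulVec]
    calc euclNorm d (A.mulVec (U.mulVec v)) ≤ c * euclNorm d (U.mulVec v) := h _
      _ = c * euclNorm d v := by rw [euclNorm_mulVec_of_unitary hU]

lemma opNorm_unitary_conj {U : Matrix (Fin d) (Fin d) ℂ} (hU : Uᴴ * U = 1)
    (A : Matrix (Fin d) (Fin d) ℂ) :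
    opNorm (euclNorm d) (U * A * Uᴴ) = opNorm (euclNorm d) A := by
  have hU' : U * Uᴴ = 1 := mul_eq_one_comm.mp hU
  have hUH : (Uᴴ)ᴴ * Uᴴ = 1 := by rw [Matrix.conjTranspose_conjTranspose]; exact hU'
  rw [opNorm_unitary_right hUH, opNorm_unitary_left hU]


lemma exists_svd {S : Matrix (Fin d) (Fin d) ℂ} (hS : IsUnit S) :
    ∃ (U V : Matrix (Fin d) (Fin d) ℂ) (s : Fin d → ℝ),
      Uᴴ * U = 1 ∧ Vᴴ * V = 1 ∧ (∀ i, 0 < s i) ∧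
      S = U * Matrix.diagonal (fun i => (s i : ℂ)) * Vᴴ ∧
      S⁻¹ = V * Matrix.diagonal (fun i => ((s i)⁻¹ : ℂ)) * Uᴴ := by
  have hinj : Function.Injective (S.mulVec) := Matrix.mulVec_injective_iff_isUnit.mpr hS
  have hH : (Sᴴ * S).PosDef := by
    refine Matrix.posDef_iff_dotProduct_mulVec.mpr
      ⟨Matrix.isHermitian_conjTranspose_mul_self S, fun x hx => ?_⟩
    rw [← Matrix.mulVec_mulVec, Matrix.dotProduct_mulVec, ← Matrix.star_mulVec]
    refine Matrix.dotProduct_star_self_pos_iff.mpr fun h0 => hx (hinj ?_)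
    rw [h0, Matrix.mulVec_zero]
  have hHm : (Sᴴ * S).IsHermitian := hH.isHermitian
  set V : Matrix (Fin d) (Fin d) ℂ := (hHm.eigenvectorUnitary : Matrix (Fin d) (Fin d) ℂ) with hVdef
  set e : Fin d → ℝ := hHm.eigenvalues with hedef
  have hV : Vᴴ * V = 1 := by
    have := (Matrix.mem_unitaryGroup_iff'.mp hHm.eigenvectorUnitary.2)
    rwa [Matrix.star_eq_conjTranspose] at this
  have hVV' : V * Vᴴ = 1 := mul_eq_one_comm.mp hV
  have hspec : Sᴴ * S = V * Matrix.diagonal (RCLike.ofReal ∘ e) * Vᴴ := by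
    have h := hHm.spectral_theorem
    rw [Unitary.conjStarAlgAut_apply, Matrix.star_eq_conjTranspose] at h
    exact h
  have he : ∀ i, 0 < e i := fun i => hH.eigenvalues_pos i
  set s : Fin d → ℝ := fun i => Real.sqrt (e i) with hsdef
  have hs : ∀ i, 0 < s i := fun i => Real.sqrt_pos.mpr (he i)
  set D : Matrix (Fin d) (Fin d) ℂ := Matrix.diagonal (fun i => (s i : ℂ)) with hDdef
  set D' : Matrix (Fin d) (Fin d) ℂ := Matrix.diagonal (fun i => ((s i)⁻¹ : ℂ)) with hD'def
  have hDD' : D * D' = 1 := by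
    rw [hDdef, hD'def, Matrix.diagonal_mul_diagonal]
    ext i j
    rw [Matrix.diagonal_apply, Matrix.one_apply]
    have hx : (s i : ℂ) ≠ 0 := by exact_mod_cast (hs i).ne'
    by_cases hij : i = j
    · rw [if_pos hij, if_pos hij, mul_inv_cancel₀ hx]
    · rw [if_neg hij, if_neg hij]
  have hD'D : D' * D = 1 := mul_eq_one_comm.mp hDD'
  have hD'H : D'ᴴ = D' := by
    rw [hD'def, Matrix.diagonal_conjTranspose]
    ext i j
    rw [Matrix.diagonal_apply, Matrix.diagonal_apply]
    by_cases hij : i = j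
    · rw [if_pos hij, if_pos hij, Pi.star_apply]
      rw [star_inv₀, Complex.star_def, Complex.conj_ofReal]
    · rw [if_neg hij, if_neg hij]
  set U : Matrix (Fin d) (Fin d) ℂ := S * V * D' with hUdef
  have key : Vᴴ * (Sᴴ * S) * V = Matrix.diagonal (RCLike.ofReal ∘ e) := by
    rw [hspec]
    simp only [← Matrix.mul_assoc]
    rw [hV, Matrix.one_mul, Matrix.mul_assoc, hV, Matrix.mul_one]
  have hUunit : Uᴴ * U = 1 := by
    have expand : Uᴴ * U = D' * (Vᴴ * (Sᴴ * S) * V) * D' := by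
      rw [hUdef, Matrix.conjTranspose_mul, Matrix.conjTranspose_mul, hD'H]
      simp only [← Matrix.mul_assoc]
    rw [expand, key, hD'def, Matrix.diagonal_mul_diagonal, Matrix.diagonal_mul_diagonal]
    ext i j
    rw [Matrix.diagonal_apply, Matrix.one_apply]
    by_cases hij : i = j
    · rw [if_pos hij, if_pos hij]
      show ((s i : ℂ))⁻¹ * ((e i : ℝ) : ℂ) * ((s i : ℂ))⁻¹ = 1
      have hx : (s i : ℂ) ≠ 0 := by exact_mod_cast (hs i).ne'
      have hes : ((e i : ℝ) : ℂ) = (s i : ℂ) * (s i : ℂ) := by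
        rw [← Complex.ofReal_mul]
        norm_cast
        rw [hsdef]
        exact (Real.mul_self_sqrt (he i).le).symm
      rw [hes]
      field_simp
    · rw [if_neg hij, if_neg hij]
  have hUU' : U * Uᴴ = 1 := mul_eq_one_comm.mp hUunit
  have hSdec : S = U * D * Vᴴ := by
    rw [hUdef, Matrix.mul_assoc (S * V) D' D, hD'D, Matrix.mul_one, Matrix.mul_assoc, hVV',
      Matrix.mul_one]
  have hSinv : S⁻¹ = V * D' * Uᴴ := by
    apply Matrix.inv_eq_right_inv
    calc S * (V * D' * Uᴴ) = U * Uᴴ := by rw [hUdef]; simp only [← Matrix.mul_assoc]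
      _ = 1 := hUU'
  exact ⟨U, V, s, hUunit, hV, hs, hSdec, hSinv⟩


lemma prod_entry_le (n : ℕ) (c : ℕ → Matrix (Fin d) (Fin d) ℂ) (i j : Fin d) :
    ‖(List.ofFn fun k : Fin n => c k).prod i j‖
      ≤ ∑ q : Fin (n+1) → Fin d,
          (if q 0 = i ∧ q (Fin.last n) = j
           then ∏ k : Fin n, ‖c k (q k.castSucc) (q k.succ)‖ else 0) := by
  induction n generalizing c i j with
  | zero =>
    simp only [List.ofFn_zero, List.prod_nil]
    have h1 : (∑ q : Fin 1 → Fin d, if q 0 = i ∧ q (Fin.last 0) = j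
          then (∏ k : Fin 0, ‖c ↑k (q k.castSucc) (q k.succ)‖) else 0)
        = ∑ x : Fin d, (if x = i ∧ x = j then (1:ℝ) else 0) := by
      refine Fintype.sum_equiv (Equiv.funUnique (Fin 1) (Fin d)) _ _ fun q => ?_
      simp
    rw [h1]
    by_cases hij : i = j
    · subst hij
      simp [Matrix.one_apply]
    · rw [Matrix.one_apply_ne hij]
      have h2 : ∀ x : Fin d, (if x = i ∧ x = j then (1:ℝ) else 0) = 0 := by
        intro x
        rw [if_neg]
        rintro ⟨rfl, rfl⟩
        exact hij rfl
      simp [h2]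
  | succ n ih =>
    rw [List.ofFn_succ, List.prod_cons]
    simp only [Fin.val_succ, Fin.val_zero]
    set R := (List.ofFn fun k : Fin n => c (↑k + 1)).prod with hR
    have h1 : ‖(c 0 * R) i j‖
        ≤ ∑ m, ‖c 0 i m‖ * ‖R m j‖ := by
      rw [Matrix.mul_apply]
      refine le_trans (norm_sum_le _ _)
        (le_of_eq (Finset.sum_congr rfl fun m _ => norm_mul _ _))
    have h2 : ∀ m, ‖R m j‖ ≤ ∑ q' : Fin (n+1) → Fin d,
        (if q' 0 = m ∧ q' (Fin.last n) = j
         then ∏ k : Fin n, ‖c (↑k + 1) (q' k.castSucc) (q' k.succ)‖ else 0) :=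
      fun m => ih (fun t => c (t+1)) m j
    have term_eq : ∀ (x : Fin d) (q' : Fin (n+1) → Fin d),
        (if (Fin.cons x q' : Fin (n+2) → Fin d) 0 = i ∧
            (Fin.cons x q' : Fin (n+2) → Fin d) (Fin.last (n+1)) = j
          then ∏ k : Fin (n+1),
            ‖c ↑k ((Fin.cons x q' : Fin (n+2) → Fin d) k.castSucc)
              ((Fin.cons x q' : Fin (n+2) → Fin d) k.succ)‖ else 0)
        = (if x = i ∧ q' (Fin.last n) = j
          then ‖c 0 x (q' 0)‖ *
            ∏ k : Fin n, ‖c (↑k + 1) (q' k.castSucc) (q' k.succ)‖ else 0) := by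
      intro x q'
      simp only [← Fin.succ_last, Fin.cons_zero, Fin.cons_succ, Fin.prod_univ_succ,
        Fin.castSucc_zero, Fin.val_succ, Fin.val_zero, ← Fin.succ_castSucc]
    have key : (∑ m, ‖c 0 i m‖ *
          ∑ q' : Fin (n+1) → Fin d, (if q' 0 = m ∧ q' (Fin.last n) = j
            then ∏ k : Fin n, ‖c (↑k + 1) (q' k.castSucc) (q' k.succ)‖ else 0))
        = ∑ q : Fin (n+2) → Fin d, (if q 0 = i ∧ q (Fin.last (n+1)) = j
            then ∏ k : Fin (n+1), ‖c ↑k (q k.castSucc) (q k.succ)‖ else 0) := by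
      have lhs_eq : (∑ m, ‖c 0 i m‖ *
            ∑ q' : Fin (n+1) → Fin d, (if q' 0 = m ∧ q' (Fin.last n) = j
              then ∏ k : Fin n, ‖c (↑k + 1) (q' k.castSucc) (q' k.succ)‖ else 0))
          = ∑ q' : Fin (n+1) → Fin d, (if q' (Fin.last n) = j
              then ‖c 0 i (q' 0)‖ *
                ∏ k : Fin n, ‖c (↑k + 1) (q' k.castSucc) (q' k.succ)‖ else 0) := by
        simp only [Finset.mul_sum, mul_ite, mul_zero]
        rw [Finset.sum_comm]
        refine Finset.sum_congr rfl fun q' _ => ?_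
        simp only [ite_and]
        rw [Finset.sum_ite_eq]
        simp
      have rhs_eq : (∑ q : Fin (n+2) → Fin d, (if q 0 = i ∧ q (Fin.last (n+1)) = j
            then ∏ k : Fin (n+1), ‖c ↑k (q k.castSucc) (q k.succ)‖ else 0))
          = ∑ q' : Fin (n+1) → Fin d, (if q' (Fin.last n) = j
              then ‖c 0 i (q' 0)‖ *
                ∏ k : Fin n, ‖c (↑k + 1) (q' k.castSucc) (q' k.succ)‖ else 0) := by
        rw [← (Fintype.sum_equiv (Fin.consEquiv fun _ => Fin d)
          (fun p => if (Fin.cons p.1 p.2 : Fin (n+2) → Fin d) 0 = i ∧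
              (Fin.cons p.1 p.2 : Fin (n+2) → Fin d) (Fin.last (n+1)) = j
            then ∏ k : Fin (n+1),
              ‖c ↑k ((Fin.cons p.1 p.2 : Fin (n+2) → Fin d) k.castSucc)
                ((Fin.cons p.1 p.2 : Fin (n+2) → Fin d) k.succ)‖ else 0)
          _ (fun p => rfl))]
        rw [Fintype.sum_prod_type]
        simp only [term_eq]
        rw [Finset.sum_comm]
        refine Finset.sum_congr rfl fun q' _ => ?_
        simp only [ite_and]
        rw [Finset.sum_ite_eq']
        simp
      exact lhs_eq.trans rhs_eq.symm
    calc ‖(c 0 * R) i j‖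
        ≤ ∑ m, ‖c 0 i m‖ * ‖R m j‖ := h1
      _ ≤ ∑ m, ‖c 0 i m‖ *
            ∑ q' : Fin (n+1) → Fin d, (if q' 0 = m ∧ q' (Fin.last n) = j
              then ∏ k : Fin n, ‖c (↑k + 1) (q' k.castSucc) (q' k.succ)‖ else 0) :=
          Finset.sum_le_sum fun m _ =>
            mul_le_mul_of_nonneg_left (h2 m) (norm_nonneg _)
      _ = _ := key


lemma telescope (f : ℕ → ℝ) (hf : ∀ k, f k ≠ 0) {u v : ℕ} (huv : u ≤ v) :
    ∏ k ∈ Finset.Ico u v, (f k * (f (k+1))⁻¹) = f u * (f v)⁻¹ := by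
  induction v, huv using Nat.le_induction with
  | base => rw [Finset.Ico_self, Finset.prod_empty, mul_inv_cancel₀ (hf u)]
  | succ v huv ihv =>
    rw [Finset.prod_Ico_succ_top huv, ihv]
    have h2 : f u * (f v)⁻¹ * (f v * (f (v+1))⁻¹) = f u * ((f v)⁻¹ * f v) * (f (v+1))⁻¹ := by
      ring
    rw [h2, inv_mul_cancel₀ (hf v), mul_one]

lemma card_paths_le (hd : 1 ≤ d) (i j : Fin d) :
    (Finset.univ.filter fun q : Fin (d+1) → Fin d =>
        q 0 = i ∧ q (Fin.last d) = j).card ≤ d ^ (d - 1) := by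
  have h : (Finset.univ.filter fun q : Fin (d+1) → Fin d =>
        q 0 = i ∧ q (Fin.last d) = j).card
      ≤ (Finset.univ : Finset (Fin (d-1) → Fin d)).card := by
    apply Finset.card_le_card_of_injOn
      (fun (q : Fin (d+1) → Fin d) (k : Fin (d-1)) => q ⟨(k : ℕ) + 1, by omega⟩)
      (fun q _ => Finset.mem_univ _)
    intro q1 hq1 q2 hq2 heq
    simp only [Finset.coe_filter, Set.mem_setOf_eq, Finset.mem_univ, true_and] at hq1 hq2
    funext m
    rcases Nat.lt_or_ge (m : ℕ) 1 with hm | hm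
    · have hm0 : m = 0 := by
        apply Fin.ext; simp only [Fin.val_zero]; omega
      rw [hm0, hq1.1, hq2.1]
    · rcases Nat.lt_or_ge (m : ℕ) d with hmd | hmd
      · have hk : (m : ℕ) - 1 < d - 1 := by omega
        have := congrFun heq ⟨(m : ℕ) - 1, hk⟩
        simp only at this
        have hme : (⟨(m : ℕ) - 1 + 1, by omega⟩ : Fin (d+1)) = m := by
          apply Fin.ext; simp; omega
        rwa [hme] at this
      · have hml : m = Fin.last d := by
          apply Fin.ext
          simp [Fin.last]
          omega
        rw [hml, hq1.2, hq2.2]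
  calc _ ≤ (Finset.univ : Finset (Fin (d-1) → Fin d)).card := h
    _ = d ^ (d-1) := by simp [Finset.card_univ]

lemma pathBound (hd : 1 ≤ d) (s : Fin d → ℝ) (hs : ∀ i, 0 < s i) (Q : ℕ → Fin d)
    (a : ℕ → ℝ) (α β : ℝ) (ha0 : ∀ k, 0 ≤ a k) (haα : ∀ k, k < d → a k ≤ α)
    (hβ : ∀ k, k < d → s (Q k) * (s (Q (k+1)))⁻¹ * a k ≤ β) (hαβ : α ≤ β) (hα : 0 ≤ α) :
    ∏ k ∈ Finset.range d, (s (Q k) * (s (Q (k+1)))⁻¹ * a k) ≤ α * β ^ (d - 1) := by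
  have hβ0 : 0 ≤ β := le_trans hα hαβ
  obtain ⟨u, v, huv, hvd, hQuv⟩ : ∃ u v : ℕ, u < v ∧ v ≤ d ∧ Q u = Q v := by
    obtain ⟨x, y, hxy, hQ⟩ := Fintype.exists_ne_map_eq_of_card_lt
      (fun m : Fin (d+1) => Q (m : ℕ)) (by simp)
    rcases lt_or_gt_of_ne hxy with h | h
    · exact ⟨x, y, Fin.lt_def.mp h, y.is_le, hQ⟩
    · exact ⟨y, x, Fin.lt_def.mp h, x.is_le, hQ.symm⟩
  set g : ℕ → ℝ := fun k => s (Q k) * (s (Q (k+1)))⁻¹ * a k with hg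
  have hg0 : ∀ k, 0 ≤ g k := fun k =>
    mul_nonneg (mul_nonneg (hs _).le (inv_nonneg.mpr (hs _).le)) (ha0 k)
  have hud : u ≤ d := le_trans huv.le hvd
  have split1 : ∏ k ∈ Finset.range d, g k
      = (∏ k ∈ Finset.Ico 0 u, g k) *
        ((∏ k ∈ Finset.Ico u v, g k) * (∏ k ∈ Finset.Ico v d, g k)) := by
    rw [Finset.range_eq_Ico, ← Finset.prod_Ico_consecutive g (Nat.zero_le u) hud,
      ← Finset.prod_Ico_consecutive g huv.le hvd]
  have bound_out : ∀ w z : ℕ, z ≤ d → ∏ k ∈ Finset.Ico w z, g k ≤ β ^ (z - w) := by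
    intro w z hz
    calc ∏ k ∈ Finset.Ico w z, g k ≤ ∏ _k ∈ Finset.Ico w z, β :=
        Finset.prod_le_prod (fun k _ => hg0 k) (fun k hk => hβ k (by
          have := (Finset.mem_Ico.mp hk).2; omega))
      _ = β ^ (z - w) := by rw [Finset.prod_const, Nat.card_Ico]
  have hmid : ∏ k ∈ Finset.Ico u v, g k ≤ α * β ^ (v - u - 1) := by
    have htel : ∏ k ∈ Finset.Ico u v, (s (Q k) * (s (Q (k+1)))⁻¹) = 1 := by
      rw [telescope (fun k => s (Q k)) (fun k => (hs _).ne') huv.le, hQuv,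
        mul_inv_cancel₀ (hs _).ne']
    have hsplit : ∏ k ∈ Finset.Ico u v, g k
        = (∏ k ∈ Finset.Ico u v, (s (Q k) * (s (Q (k+1)))⁻¹)) * ∏ k ∈ Finset.Ico u v, a k := by
      rw [← Finset.prod_mul_distrib]
    rw [hsplit, htel, one_mul]
    calc ∏ k ∈ Finset.Ico u v, a k ≤ ∏ _k ∈ Finset.Ico u v, α :=
        Finset.prod_le_prod (fun k _ => ha0 k) (fun k hk => haα k (by
          have := (Finset.mem_Ico.mp hk).2; omega))
      _ = α ^ (v - u) := by rw [Finset.prod_const, Nat.card_Ico]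
      _ = α * α ^ (v - u - 1) := by
          rw [show v - u = (v - u - 1) + 1 by omega, pow_succ', Nat.add_sub_cancel]
      _ ≤ α * β ^ (v - u - 1) := by
          exact mul_le_mul_of_nonneg_left (pow_le_pow_left₀ hα hαβ _) hα
  calc ∏ k ∈ Finset.range d, g k
      = (∏ k ∈ Finset.Ico 0 u, g k) *
        ((∏ k ∈ Finset.Ico u v, g k) * (∏ k ∈ Finset.Ico v d, g k)) := split1
    _ ≤ β ^ (u - 0) * ((α * β ^ (v - u - 1)) * β ^ (d - v)) := by
        apply mul_le_mul (bound_out 0 u hud) _ _ (by positivity)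
        · apply mul_le_mul hmid (bound_out v d le_rfl)
            (Finset.prod_nonneg fun k _ => hg0 k) (by positivity)
        · exact mul_nonneg (Finset.prod_nonneg fun k _ => hg0 k)
            (Finset.prod_nonneg fun k _ => hg0 k)
    _ = α * β ^ ((u - 0) + ((v - u - 1) + (d - v))) := by rw [pow_add, pow_add]; ring
    _ = α * β ^ (d - 1) := by
        congr 2
        omega


lemma conj_list_prod {P P' : Matrix (Fin d) (Fin d) ℂ} (hP : P' * P = 1) :
    ∀ L : List (Matrix (Fin d) (Fin d) ℂ),
      P * L.prod * P' = (L.map fun X => P * X * P').prod := by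
  intro L
  induction L with
  | nil =>
    rw [List.prod_nil, List.map_nil, List.prod_nil, Matrix.mul_one]
    exact mul_eq_one_comm.mp hP
  | cons X T ihT =>
    rw [List.map_cons, List.prod_cons, List.prod_cons, ← ihT]
    rw [show P * X * P' * (P * T.prod * P') = ((P * X) * (P' * P)) * (T.prod * P') by
      simp only [Matrix.mul_assoc], hP, Matrix.mul_one]
    simp only [Matrix.mul_assoc]

lemma opNorm_list_prod_le {β : ℝ} (hβ : 0 ≤ β) :
    ∀ L : List (Matrix (Fin d) (Fin d) ℂ),
      (∀ X ∈ L, opNorm (euclNorm d) X ≤ β) →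
      opNorm (euclNorm d) L.prod ≤ β ^ L.length := by
  intro L
  induction L with
  | nil => intro _; simpa using opNorm_one
  | cons X T ihT =>
    intro h
    rw [List.prod_cons, List.length_cons, pow_succ']
    calc opNorm (euclNorm d) (X * T.prod)
        ≤ opNorm (euclNorm d) X * opNorm (euclNorm d) T.prod := opNorm_mul_le _ _
      _ ≤ β * β ^ T.length := by
          refine mul_le_mul (h X (List.mem_cons_self))
            (ihT fun Y hY => h Y (List.mem_cons_of_mem _ hY)) (opNorm_nonneg _) hβ


end EuclAux
end EuclAuxSection

open Matrix in
/-- For every bounded nonempty set `𝒜` of `d×d` complex matrices and every invertible `S`: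
`‖S 𝒜^d S⁻¹‖_e ≤ d^d · ‖𝒜‖_e · ‖S 𝒜 S⁻¹‖_e^{d-1}`, the norms being Euclidean operator
norms of sets of matrices. -/
theorem euclidean_conjugated_power_bound
    (d : ℕ) (hd : 1 ≤ d)
    (𝒜 : Set (Matrix (Fin d) (Fin d) ℂ)) (h_ne : 𝒜.Nonempty)
    (h_bdd : ∃ M : ℝ, ∀ A ∈ 𝒜, opNorm (euclNorm d) A ≤ M)
    (S : Matrix (Fin d) (Fin d) ℂ) (hS : IsUnit S) :
    setNorm (euclNorm d) ((fun B => S * B * S⁻¹) '' (𝒜 ^ d)) ≤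
      (d : ℝ) ^ d * setNorm (euclNorm d) 𝒜 *
        setNorm (euclNorm d) ((fun B => S * B * S⁻¹) '' 𝒜) ^ (d - 1) := by
  classical
  obtain ⟨M, hM⟩ := h_bdd
  obtain ⟨A₀, hA₀⟩ := h_ne
  set α := setNorm (euclNorm d) 𝒜 with hαdef
  set β := setNorm (euclNorm d) ((fun B => S * B * S⁻¹) '' 𝒜) with hβdef
  have hbddα : BddAbove (opNorm (euclNorm d) '' 𝒜) := by
    refine ⟨M, ?_⟩
    rintro x ⟨A, hA, rfl⟩
    exact hM A hA
  have hαle : ∀ A ∈ 𝒜, opNorm (euclNorm d) A ≤ α := fun A hA => le_csSup hbddα ⟨A, hA, rfl⟩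
  have hα0 : 0 ≤ α := le_trans (EuclAux.opNorm_nonneg A₀) (hαle A₀ hA₀)
  have hbddβ : BddAbove (opNorm (euclNorm d) '' ((fun B => S * B * S⁻¹) '' 𝒜)) := by
    refine ⟨opNorm (euclNorm d) S * max M 0 * opNorm (euclNorm d) S⁻¹, ?_⟩
    rintro x ⟨Bc, ⟨A, hA, rfl⟩, rfl⟩
    calc opNorm (euclNorm d) (S * A * S⁻¹)
        ≤ opNorm (euclNorm d) (S * A) * opNorm (euclNorm d) S⁻¹ :=
          EuclAux.opNorm_mul_le _ _
      _ ≤ (opNorm (euclNorm d) S * opNorm (euclNorm d) A) * opNorm (euclNorm d) S⁻¹ :=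
          mul_le_mul_of_nonneg_right (EuclAux.opNorm_mul_le _ _) (EuclAux.opNorm_nonneg _)
      _ ≤ (opNorm (euclNorm d) S * max M 0) * opNorm (euclNorm d) S⁻¹ := by
          refine mul_le_mul_of_nonneg_right ?_ (EuclAux.opNorm_nonneg _)
          exact mul_le_mul_of_nonneg_left (le_trans (hM A hA) (le_max_left M 0))
            (EuclAux.opNorm_nonneg _)
  have hβle : ∀ A ∈ 𝒜, opNorm (euclNorm d) (S * A * S⁻¹) ≤ β := fun A hA =>
    le_csSup hbddβ ⟨S * A * S⁻¹, ⟨A, hA, rfl⟩, rfl⟩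
  have hβ0 : 0 ≤ β := le_trans (EuclAux.opNorm_nonneg _) (hβle A₀ hA₀)
  have hd1 : (1:ℝ) ≤ (d:ℝ) ^ d := by
    have h1d : (1:ℝ) ≤ (d:ℝ) := by exact_mod_cast hd
    calc (1:ℝ) = 1 ^ d := (one_pow d).symm
      _ ≤ (d:ℝ) ^ d := pow_le_pow_left₀ zero_le_one h1d d
  have hRHS0 : 0 ≤ (d:ℝ) ^ d * α * β ^ (d-1) := by positivity
  obtain ⟨U, V, s, hU, hV, hs, hSdec, hSinv⟩ := EuclAux.exists_svd hS
  have hVV' : V * Vᴴ = 1 := mul_eq_one_comm.mp hV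
  set D := Matrix.diagonal (fun i => (s i : ℂ)) with hDdef
  set D' := Matrix.diagonal (fun i => ((s i)⁻¹ : ℂ)) with hD'def
  have hDD' : D * D' = 1 := by
    rw [hDdef, hD'def, Matrix.diagonal_mul_diagonal]
    ext i j
    rw [Matrix.diagonal_apply, Matrix.one_apply]
    have hx : (s i : ℂ) ≠ 0 := by exact_mod_cast (hs i).ne'
    by_cases hij : i = j
    · rw [if_pos hij, if_pos hij, mul_inv_cancel₀ hx]
    · rw [if_neg hij, if_neg hij]
  have hD'D : D' * D = 1 := mul_eq_one_comm.mp hDD'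
  have hconj : ∀ Mx : Matrix (Fin d) (Fin d) ℂ,
      S * Mx * S⁻¹ = U * (D * (Vᴴ * Mx * V) * D') * Uᴴ := by
    intro Mx
    rw [hSinv]
    conv_lhs => rw [hSdec]
    simp only [Matrix.mul_assoc]
  have hnorm_conj : ∀ Mx : Matrix (Fin d) (Fin d) ℂ,
      opNorm (euclNorm d) (S * Mx * S⁻¹) = opNorm (euclNorm d) (D * (Vᴴ * Mx * V) * D') := by
    intro Mx
    rw [hconj Mx, EuclAux.opNorm_unitary_conj hU]
  have hconjV : ∀ X : Matrix (Fin d) (Fin d) ℂ,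
      opNorm (euclNorm d) (Vᴴ * X * V) = opNorm (euclNorm d) X := by
    intro X
    have h1 : (Vᴴ)ᴴ * Vᴴ = 1 := by rw [Matrix.conjTranspose_conjTranspose]; exact hVV'
    have h2 := EuclAux.opNorm_unitary_conj h1 X
    rwa [Matrix.conjTranspose_conjTranspose] at h2
  show sSup (opNorm (euclNorm d) '' ((fun B => S * B * S⁻¹) '' (𝒜 ^ d))) ≤
      (d:ℝ) ^ d * α * β ^ (d - 1)
  apply Real.sSup_le _ hRHS0
  rintro x ⟨Bc, ⟨B, hB, rfl⟩, rfl⟩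
  obtain ⟨f, hf⟩ := Set.mem_pow.mp hB
  set F : Fin d → Matrix (Fin d) (Fin d) ℂ := fun k => ((f k : Matrix (Fin d) (Fin d) ℂ)) with hFdef
  have hfF : (List.ofFn fun i => ((f i : Matrix (Fin d) (Fin d) ℂ))).prod = B := hf
  rcases le_total α β with hab | hba
  · -- main case: α ≤ β, use the path expansion
    set A' : Fin d → Matrix (Fin d) (Fin d) ℂ := fun k => Vᴴ * (F k) * V with hA'def
    set c : ℕ → Matrix (Fin d) (Fin d) ℂ :=
      fun k => if h : k < d then D * A' ⟨k, h⟩ * D' else 1 with hcdef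
    have hcfin : ∀ k : Fin d, c ↑k = D * A' k * D' := by
      intro k
      rw [hcdef]
      simp only [k.isLt, dif_pos, Fin.eta]
    have hprodc : (List.ofFn fun k : Fin d => c ↑k).prod = D * (Vᴴ * B * V) * D' := by
      have h1 : (List.ofFn fun k : Fin d => c ↑k)
          = (List.ofFn fun k : Fin d => D * A' k * D') := by
        congr 1
        funext k
        exact hcfin k
      have h2 : Vᴴ * B * V = (List.ofFn fun k : Fin d => A' k).prod := by
        rw [← hf, EuclAux.conj_list_prod hVV', List.map_ofFn]
        rfl
      rw [h1, h2, EuclAux.conj_list_prod hD'D, List.map_ofFn]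
      rfl
    have hK0 : 0 ≤ α * β ^ (d-1) := by positivity
    have hentry : ∀ i j, ‖(D * (Vᴴ * B * V) * D') i j‖
        ≤ (d:ℝ)^(d-1) * (α * β^(d-1)) := by
      intro i j
      rw [← hprodc]
      refine le_trans (EuclAux.prod_entry_le d c i j) ?_
      have hterm : ∀ q : Fin (d+1) → Fin d,
          (if q 0 = i ∧ q (Fin.last d) = j
            then ∏ k : Fin d, ‖c ↑k (q k.castSucc) (q k.succ)‖ else 0)
          ≤ (if q 0 = i ∧ q (Fin.last d) = j then α * β^(d-1) else 0) := by
        intro q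
        by_cases hq : q 0 = i ∧ q (Fin.last d) = j
        · rw [if_pos hq, if_pos hq]
          set Q : ℕ → Fin d := fun m => if hm : m ≤ d then q ⟨m, by omega⟩ else q 0 with hQdef
          set a : ℕ → ℝ := fun k =>
            if hk : k < d then ‖A' ⟨k, hk⟩ (Q k) (Q (k+1))‖ else 0 with hadef
          have hQcs : ∀ k : Fin d, q k.castSucc = Q ↑k := by
            intro k
            have hk : (↑k : ℕ) ≤ d := by omega
            simp only [hQdef, dif_pos hk]
            exact congrArg q (Fin.ext rfl)
          have hQsucc : ∀ k : Fin d, q k.succ = Q (↑k + 1) := by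
            intro k
            have hk : (↑k : ℕ) + 1 ≤ d := by omega
            simp only [hQdef, dif_pos hk]
            exact congrArg q (Fin.ext rfl)
          have hgk : ∀ k : Fin d, ‖c ↑k (q k.castSucc) (q k.succ)‖
              = s (Q ↑k) * (s (Q (↑k + 1)))⁻¹ * a ↑k := by
            intro k
            rw [hcfin k, hQcs k, hQsucc k, Matrix.mul_diagonal, Matrix.diagonal_mul,
              norm_mul, norm_mul, norm_inv, Complex.norm_real, Complex.norm_real, Real.norm_eq_abs,
                Real.norm_eq_abs,
              abs_of_pos (hs _), abs_of_pos (hs _)]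
            have hak : a ↑k = ‖A' k (Q ↑k) (Q (↑k + 1))‖ := by
              simp only [hadef, k.isLt, dif_pos, Fin.eta]
            rw [hak]
            ring
          have ha0 : ∀ k, 0 ≤ a k := by
            intro k
            by_cases hk : k < d
            · simp only [hadef, dif_pos hk]; exact norm_nonneg _
            · simp only [hadef, dif_neg hk]; exact le_refl 0
          have haα : ∀ k, k < d → a k ≤ α := by
            intro k hk
            simp only [hadef, dif_pos hk]
            calc ‖A' ⟨k, hk⟩ (Q k) (Q (k+1))‖
                ≤ opNorm (euclNorm d) (A' ⟨k, hk⟩) := EuclAux.entry_le_opNorm _ _ _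
              _ = opNorm (euclNorm d) (F ⟨k, hk⟩) := hconjV _
              _ ≤ α := hαle _ (f ⟨k, hk⟩).2
          have hQβ : ∀ k, k < d → s (Q k) * (s (Q (k+1)))⁻¹ * a k ≤ β := by
            intro k hk
            have hgk' := hgk ⟨k, hk⟩
            simp only at hgk'
            rw [← hgk', hcfin ⟨k, hk⟩]
            calc ‖(D * A' ⟨k, hk⟩ * D') _ _‖
                ≤ opNorm (euclNorm d) (D * A' ⟨k, hk⟩ * D') := EuclAux.entry_le_opNorm _ _ _
              _ = opNorm (euclNorm d) (S * (F ⟨k, hk⟩) * S⁻¹) := (hnorm_conj _).symm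
              _ ≤ β := hβle _ (f ⟨k, hk⟩).2
          calc ∏ k : Fin d, ‖c ↑k (q k.castSucc) (q k.succ)‖
              = ∏ k ∈ Finset.range d, (s (Q k) * (s (Q (k+1)))⁻¹ * a k) := by
                rw [Finset.prod_congr rfl (fun k _ => hgk k)]
                exact Fin.prod_univ_eq_prod_range (fun k => s (Q k) * (s (Q (k+1)))⁻¹ * a k) d
            _ ≤ α * β ^ (d - 1) := EuclAux.pathBound hd s hs Q a α β ha0 haα hQβ hab hα0
        · rw [if_neg hq, if_neg hq]
      calc (∑ q : Fin (d+1) → Fin d, if q 0 = i ∧ q (Fin.last d) = j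
              then ∏ k : Fin d, ‖c ↑k (q k.castSucc) (q k.succ)‖ else 0)
          ≤ ∑ q : Fin (d+1) → Fin d,
              (if q 0 = i ∧ q (Fin.last d) = j then α * β^(d-1) else 0) :=
            Finset.sum_le_sum fun q _ => hterm q
        _ = ((Finset.univ.filter fun q : Fin (d+1) → Fin d =>
              q 0 = i ∧ q (Fin.last d) = j).card : ℝ) * (α * β^(d-1)) := by
            rw [← Finset.sum_filter, Finset.sum_const, nsmul_eq_mul]
        _ ≤ (d:ℝ)^(d-1) * (α * β^(d-1)) := by
            refine mul_le_mul_of_nonneg_right ?_ hK0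
            have hcard := EuclAux.card_paths_le hd i j
            calc ((Finset.univ.filter fun q : Fin (d+1) → Fin d =>
                  q 0 = i ∧ q (Fin.last d) = j).card : ℝ)
                ≤ ((d ^ (d-1) : ℕ) : ℝ) := by exact_mod_cast hcard
              _ = (d:ℝ)^(d-1) := by push_cast; ring
    have hfin : opNorm (euclNorm d) (D * (Vᴴ * B * V) * D')
        ≤ (d:ℝ) * ((d:ℝ)^(d-1) * (α * β^(d-1))) :=
      EuclAux.opNorm_le_of_entries (by positivity) hentry
    rw [hnorm_conj B]
    refine le_trans hfin (le_of_eq ?_)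
    have hdd : (d:ℝ) * (d:ℝ)^(d-1) = (d:ℝ)^d := by
      rw [← pow_succ']
      congr 1
      omega
    calc (d:ℝ) * ((d:ℝ)^(d-1) * (α * β^(d-1)))
        = ((d:ℝ) * (d:ℝ)^(d-1)) * α * β^(d-1) := by ring
      _ = (d:ℝ)^d * α * β^(d-1) := by rw [hdd]
  · -- easy case: β ≤ α, submultiplicativity
    have hinv : S⁻¹ * S = 1 :=
      Matrix.nonsing_inv_mul S ((Matrix.isUnit_iff_isUnit_det S).mp hS)
    have hprod : S * B * S⁻¹ = (List.ofFn fun k : Fin d => S * (F k) * S⁻¹).prod := by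
      rw [← hf, EuclAux.conj_list_prod hinv, List.map_ofFn]
      rfl
    have hlen : (List.ofFn fun k : Fin d => S * F k * S⁻¹).length
        = d := by simp
    have hle : opNorm (euclNorm d) (S * B * S⁻¹) ≤ β ^ d := by
      rw [hprod]
      have hstep := EuclAux.opNorm_list_prod_le hβ0
        (List.ofFn fun k : Fin d => S * F k * S⁻¹) ?_
      · rwa [hlen] at hstep
      · intro X hX
        obtain ⟨k, hk⟩ := List.mem_ofFn.mp hX
        rw [← hk]
        exact hβle _ (f k).2
    calc opNorm (euclNorm d) (S * B * S⁻¹) ≤ β ^ d := hle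
      _ = β ^ (d - 1) * β := by
          rw [← pow_succ]
          congr 1
          omega
      _ ≤ β ^ (d-1) * α := mul_le_mul_of_nonneg_left hba (pow_nonneg hβ0 _)
      _ = α * β ^ (d-1) := by ring
      _ ≤ (d:ℝ)^d * α * β^(d-1) := by
          rw [show (d:ℝ)^d * α * β^(d-1) = ((d:ℝ)^d) * (α * β^(d-1)) by ring]
          exact le_mul_of_one_le_left (by positivity) hd1
end

section
/- Let d ≥ 1, let 𝒜 be a nonempty bounded set of complex d×d matrices, let ‖A‖_0 = max_{i,j} |a_{ij}| denote the max-entry matrix norm, and let S be an invertible diagonal complex d×d matrix. Then ‖S 𝒜^d S^{-1}‖_0 ≤ d^{d-1} · ‖𝒜‖_0 · ‖S 𝒜 S^{-1}‖_0^{d-1}, where S 𝒜^n S^{-1} = {S B S^{-1} : B ∈ 𝒜^n} and the norm of a set of matrices is the supremum of the norms of its elements. -/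
open scoped Pointwise

/-- The max-entry norm `‖A‖₀ = max_{i,j} |a_{ij}|` of a `d × d` complex matrix. -/
noncomputable def entryNorm {d : ℕ} (A : Matrix (Fin d) (Fin d) ℂ) : ℝ :=
  sSup {r : ℝ | ∃ i j, r = ‖A i j‖}

/-- The max-entry norm of a set of matrices: the supremum of the norms of its elements. -/
noncomputable def entrySetNorm {d : ℕ} (𝒜 : Set (Matrix (Fin d) (Fin d) ℂ)) : ℝ :=
  sSup (entryNorm '' 𝒜)
lemma entryNorm_set_eq {d : ℕ} (A : Matrix (Fin d) (Fin d) ℂ) :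
    {r : ℝ | ∃ i j, r = ‖A i j‖} =
      Set.range (fun p : Fin d × Fin d => ‖A p.1 p.2‖) := by
  ext r; constructor
  · rintro ⟨i, j, rfl⟩; exact ⟨(i, j), rfl⟩
  · rintro ⟨⟨i, j⟩, rfl⟩; exact ⟨i, j, rfl⟩

lemma abs_le_entryNorm {d : ℕ} (A : Matrix (Fin d) (Fin d) ℂ) (i j : Fin d) :
    ‖A i j‖ ≤ entryNorm A := by
  rw [entryNorm, entryNorm_set_eq]
  exact le_csSup ((Set.finite_range _).bddAbove) ⟨(i, j), rfl⟩

lemma entryNorm_le {d : ℕ} (hd : 1 ≤ d) (A : Matrix (Fin d) (Fin d) ℂ) {c : ℝ}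
    (h : ∀ i j, ‖A i j‖ ≤ c) : entryNorm A ≤ c := by
  refine csSup_le ⟨‖A ⟨0, hd⟩ ⟨0, hd⟩‖, ⟨⟨0, hd⟩, ⟨0, hd⟩, rfl⟩⟩ ?_
  rintro r ⟨i, j, rfl⟩; exact h i j

lemma entryNorm_nonneg {d : ℕ} (hd : 1 ≤ d) (A : Matrix (Fin d) (Fin d) ℂ) :
    0 ≤ entryNorm A :=
  le_trans (norm_nonneg _) (abs_le_entryNorm A ⟨0, hd⟩ ⟨0, hd⟩)

lemma prod_entry_expand {d : ℕ} :
    ∀ (n : ℕ) (C : Fin (n + 1) → Matrix (Fin d) (Fin d) ℂ) (i j : Fin d),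
    (List.ofFn C).prod i j =
      ∑ m : Fin n → Fin d, ∏ t : Fin (n + 1),
        C t ((Fin.cons i (Fin.snoc m j) : Fin (n + 2) → Fin d) t.castSucc)
            ((Fin.cons i (Fin.snoc m j) : Fin (n + 2) → Fin d) t.succ) := by
  intro n
  induction n with
  | zero =>
    intro C i j
    simp [List.ofFn_succ, Fin.prod_univ_one, Fin.snoc]
  | succ n ih =>
    intro C i j
    rw [List.ofFn_succ, List.prod_cons, Matrix.mul_apply]
    rw [← (Fin.consEquiv (fun _ : Fin (n + 1) => Fin d)).sum_comp]
    rw [Fintype.sum_prod_type]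
    refine Finset.sum_congr rfl (fun p _ => ?_)
    rw [ih (fun t => C t.succ) p j, Finset.mul_sum]
    refine Finset.sum_congr rfl (fun m _ => ?_)
    have hce : (Fin.consEquiv fun _ : Fin (n+1) => Fin d) (p, m) = Fin.cons p m := rfl
    rw [hce, ← Fin.cons_snoc_eq_snoc_cons]
    symm
    rw [Fin.prod_univ_succ]
    simp only [Fin.castSucc_zero, Fin.cons_zero, Fin.succ_zero_eq_one, Fin.cons_one,
      ← Fin.succ_castSucc, Fin.cons_succ]

lemma exists_good_step {d n : ℕ} (hdn : d < n + 1) (k : Fin (n + 1) → Fin d)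
    (g : Fin d → ℝ) : ∃ t : Fin n, g (k t.castSucc) ≤ g (k t.succ) := by
  by_contra h
  push_neg at h
  have hsa : StrictAnti (g ∘ k) := Fin.strictAnti_iff_succ_lt.2 (fun t => h t)
  have hk : Function.Injective k := fun a b hab => hsa.injective (by simp [Function.comp, hab])
  have := Fintype.card_le_of_injective k hk
  simp only [Fintype.card_fin] at this
  omega

/-- For every bounded nonempty set `𝒜` of `d×d` complex matrices and every invertible
diagonal matrix `S`: `‖S 𝒜^d S⁻¹‖₀ ≤ d^{d-1} · ‖𝒜‖₀ · ‖S 𝒜 S⁻¹‖₀^{d-1}`, where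
`‖·‖₀` is the max-entry norm. -/
theorem entry_norm_conjugated_power_bound
    (d : ℕ) (hd : 1 ≤ d)
    (𝒜 : Set (Matrix (Fin d) (Fin d) ℂ)) (h_ne : 𝒜.Nonempty)
    (h_bdd : ∃ M : ℝ, ∀ A ∈ 𝒜, entryNorm A ≤ M)
    (S : Matrix (Fin d) (Fin d) ℂ) (hS : IsUnit S) (hSdiag : S.IsDiag) :
    entrySetNorm ((fun B => S * B * S⁻¹) '' (𝒜 ^ d)) ≤
      (d : ℝ) ^ (d - 1) * entrySetNorm 𝒜 *
        entrySetNorm ((fun B => S * B * S⁻¹) '' 𝒜) ^ (d - 1) := by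
  obtain ⟨M0, hM0⟩ := h_bdd
  set v : Fin d → ℂ := S.diag with hv_def
  have hSd : Matrix.diagonal v = S := hSdiag.diagonal_diag
  have hdet : IsUnit S.det := (Matrix.isUnit_iff_isUnit_det S).1 hS
  have hv : ∀ i, v i ≠ 0 := by
    intro i
    have : S.det ≠ 0 := hdet.ne_zero
    rw [← hSd, Matrix.det_diagonal] at this
    exact fun h0 => this (Finset.prod_eq_zero (Finset.mem_univ i) h0)
  have hSinv : S⁻¹ = Matrix.diagonal (fun i => (v i)⁻¹) := by
    refine Matrix.inv_eq_right_inv ?_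
    rw [← hSd, Matrix.diagonal_mul_diagonal]
    convert Matrix.diagonal_one
    exact mul_inv_cancel₀ (hv _)
  have conj_apply : ∀ (B : Matrix (Fin d) (Fin d) ℂ) (p q : Fin d),
      (S * B * S⁻¹) p q = v p * B p q * (v q)⁻¹ := by
    intro B p q
    rw [hSinv]
    conv_lhs => rw [← hSd]
    rw [Matrix.mul_diagonal, Matrix.diagonal_mul]
  -- norms
  set N := entrySetNorm 𝒜 with hN_def
  set M := entrySetNorm ((fun B => S * B * S⁻¹) '' 𝒜) with hM_def
  have hbddN : BddAbove (entryNorm '' 𝒜) := by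
    refine ⟨M0, ?_⟩; rintro _ ⟨A, hA, rfl⟩; exact hM0 A hA
  have hNA : ∀ A ∈ 𝒜, entryNorm A ≤ N := fun A hA => le_csSup hbddN ⟨A, hA, rfl⟩
  obtain ⟨A0, hA0⟩ := h_ne
  have hN0 : 0 ≤ N := le_trans (entryNorm_nonneg hd A0) (hNA A0 hA0)
  -- boundedness of conjugated family
  have habs_conj : ∀ (B : Matrix (Fin d) (Fin d) ℂ) (p q : Fin d),
      ‖(S * B * S⁻¹) p q‖
        = ‖v p‖ * ‖B p q‖ * (‖v q‖)⁻¹ := by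
    intro B p q
    rw [conj_apply]
    simp [map_mul, map_inv₀]
  set c1 : ℝ := ∑ p, ‖v p‖ with hc1_def
  set c2 : ℝ := ∑ p, (‖v p‖)⁻¹ with hc2_def
  have hc1 : ∀ p, ‖v p‖ ≤ c1 := fun p =>
    Finset.single_le_sum (fun q _ => norm_nonneg (v q)) (Finset.mem_univ p)
  have hc2 : ∀ p, (‖v p‖)⁻¹ ≤ c2 := fun p =>
    Finset.single_le_sum (fun q _ => inv_nonneg.2 (norm_nonneg (v q)))
      (Finset.mem_univ p)
  have hc1_nn : 0 ≤ c1 := Finset.sum_nonneg fun q _ => norm_nonneg (v q)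
  have hc2_nn : 0 ≤ c2 := Finset.sum_nonneg fun q _ => inv_nonneg.2 (norm_nonneg (v q))
  have hconj_bound : ∀ A ∈ 𝒜, entryNorm (S * A * S⁻¹) ≤ c1 * (max M0 0) * c2 := by
    intro A hA
    refine entryNorm_le hd _ (fun p q => ?_)
    rw [habs_conj]
    have h1 : ‖A p q‖ ≤ max M0 0 :=
      le_trans (abs_le_entryNorm A p q) (le_trans (hM0 A hA) (le_max_left _ _))
    have := mul_le_mul (mul_le_mul (hc1 p) h1 (norm_nonneg _) hc1_nn)
      (hc2 q) (inv_nonneg.2 (norm_nonneg _)) (by positivity)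
    exact this
  have hbddM : BddAbove (entryNorm '' ((fun B => S * B * S⁻¹) '' 𝒜)) := by
    refine ⟨c1 * (max M0 0) * c2, ?_⟩
    rintro _ ⟨_, ⟨A, hA, rfl⟩, rfl⟩
    exact hconj_bound A hA
  have hMA : ∀ A ∈ 𝒜, entryNorm (S * A * S⁻¹) ≤ M := fun A hA =>
    le_csSup hbddM ⟨_, ⟨A, hA, rfl⟩, rfl⟩
  have hM0' : 0 ≤ M := le_trans (entryNorm_nonneg hd _) (hMA A0 hA0)
  -- reduce to a single product
  obtain ⟨n, rfl⟩ : ∃ n, d = n + 1 := ⟨d - 1, (Nat.succ_pred_eq_of_pos hd).symm⟩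
  simp only [Nat.add_sub_cancel]
  refine csSup_le ?_ ?_
  · exact ⟨entryNorm (S * (A0 ^ (n + 1)) * S⁻¹), ⟨_, ⟨A0 ^ (n + 1),
      Set.pow_mem_pow hA0, rfl⟩, rfl⟩⟩
  rintro _ ⟨_, ⟨B, hB, rfl⟩, rfl⟩
  obtain ⟨f, hf⟩ := Set.mem_pow.1 hB
  beta_reduce
  -- conjugated factors
  set C : Fin (n + 1) → Matrix (Fin (n + 1)) (Fin (n + 1)) ℂ :=
    fun t => S * (f t : Matrix (Fin (n + 1)) (Fin (n + 1)) ℂ) * S⁻¹ with hC_def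
  have h1 : S⁻¹ * S = 1 := Matrix.nonsing_inv_mul S hdet
  have h2 : S * S⁻¹ = 1 := Matrix.mul_nonsing_inv S hdet
  have hcan : ∀ X : Matrix (Fin (n + 1)) (Fin (n + 1)) ℂ, S⁻¹ * (S * X) = X := by
    intro X; rw [← mul_assoc, h1, one_mul]
  have hconjL : ∀ L : List (Matrix (Fin (n + 1)) (Fin (n + 1)) ℂ),
      S * L.prod * S⁻¹ = (L.map (fun A => S * A * S⁻¹)).prod := by
    intro L
    induction L with
    | nil => simpa using h2
    | cons a l ihl =>
      rw [List.map_cons, List.prod_cons, List.prod_cons, ← ihl]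
      simp only [mul_assoc, hcan]
  have hSBS : S * B * S⁻¹ = (List.ofFn C).prod := by
    rw [← hf, hconjL, List.map_ofFn]
    rfl
  have hCM : ∀ t, entryNorm (C t) ≤ M := fun t => hMA (f t) (f t).2
  have hfN : ∀ t, entryNorm ((f t : Matrix (Fin (n + 1)) (Fin (n + 1)) ℂ)) ≤ N :=
    fun t => hNA _ (f t).2
  refine entryNorm_le hd _ (fun i j => ?_)
  rw [hSBS, prod_entry_expand n C i j]
  calc ‖∑ m : Fin n → Fin (n + 1), ∏ t : Fin (n + 1),
        C t ((Fin.cons i (Fin.snoc m j) : Fin (n + 2) → Fin (n + 1)) t.castSucc)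
            ((Fin.cons i (Fin.snoc m j) : Fin (n + 2) → Fin (n + 1)) t.succ)‖
      ≤ ∑ m : Fin n → Fin (n + 1), ‖∏ t : Fin (n + 1),
        C t ((Fin.cons i (Fin.snoc m j) : Fin (n + 2) → Fin (n + 1)) t.castSucc)
            ((Fin.cons i (Fin.snoc m j) : Fin (n + 2) → Fin (n + 1)) t.succ)‖ :=
        norm_sum_le _ _
    _ ≤ ∑ _m : Fin n → Fin (n + 1), N * M ^ n := by
        refine Finset.sum_le_sum (fun m _ => ?_)
        set P : Fin (n + 2) → Fin (n + 1) := Fin.cons i (Fin.snoc m j) with hP_def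
        rw [norm_prod]
        obtain ⟨t₀, ht₀⟩ := exists_good_step (by omega) P
          (fun p => ‖v p‖)
        have hfac : ∀ t : Fin (n + 1),
            ‖C t (P t.castSucc) (P t.succ)‖
              ≤ if t = t₀ then N else M := by
          intro t
          by_cases ht : t = t₀
          · subst ht
            simp only [if_pos rfl]
            rw [hC_def, habs_conj]
            have hq : 0 < ‖v (P t.succ)‖ :=
              norm_pos_iff.2 (hv _)
            have hratio : ‖v (P t.castSucc)‖ * (‖v (P t.succ)‖)⁻¹ ≤ 1 := by
              rw [mul_inv_le_iff₀ hq, one_mul]; exact ht₀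
            calc ‖v (P t.castSucc)‖ * ‖(f t : Matrix _ _ ℂ)
                  (P t.castSucc) (P t.succ)‖ * (‖v (P t.succ)‖)⁻¹
                = ‖(f t : Matrix _ _ ℂ) (P t.castSucc) (P t.succ)‖ *
                  (‖v (P t.castSucc)‖ * (‖v (P t.succ)‖)⁻¹) := by ring
              _ ≤ ‖(f t : Matrix _ _ ℂ) (P t.castSucc) (P t.succ)‖ * 1 := by
                  exact mul_le_mul_of_nonneg_left hratio (norm_nonneg _)
              _ = ‖(f t : Matrix _ _ ℂ) (P t.castSucc) (P t.succ)‖ := mul_one _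
              _ ≤ N := le_trans (abs_le_entryNorm _ _ _) (hfN t)
          · simp only [if_neg ht]
            exact le_trans (abs_le_entryNorm _ _ _) (hCM t)
        calc (∏ t : Fin (n + 1), ‖C t (P t.castSucc) (P t.succ)‖)
            ≤ ∏ t : Fin (n + 1), (if t = t₀ then N else M) :=
              Finset.prod_le_prod (fun t _ => norm_nonneg _) (fun t _ => hfac t)
          _ = N * M ^ n := by
              rw [← Finset.mul_prod_erase Finset.univ _ (Finset.mem_univ t₀)]
              simp only [if_pos rfl]
              congr 1
              rw [Finset.prod_congr rfl (fun t ht => if_neg (Finset.ne_of_mem_erase ht)),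
                Finset.prod_const, Finset.card_erase_of_mem (Finset.mem_univ t₀),
                Finset.card_univ, Fintype.card_fin, Nat.add_sub_cancel]
    _ ≤ ((n + 1 : ℕ) : ℝ) ^ n * N * M ^ n := by
        rw [Finset.sum_const, Finset.card_univ]
        simp only [Fintype.card_fun, Fintype.card_fin, nsmul_eq_mul]
        push_cast
        ring_nf
        exact le_refl _
end
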